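/- arXiv:2509.18296 — 10 statements merged into one kernel-verified Lean document; each statement's English description precedes it below -/
import Mathlib

section
/- Let n ≥ 1 and for each j = 1,…,n let G_j ⊆ ℂ be a nonempty, bounded, open set such that there exist an open set Ω_j ⊇ closure(G_j) and an injective holomorphic map φ_j : Ω_j → ℂ with φ_j(G_j) = 𝔻(0,1) (the open unit disc). Set G := G_1 × ⋯ × G_n ⊆ ℂⁿ. Then for every f : ℂⁿ → ℂ that is continuous on closure(G) and holomorphic on G, and every ε > 0, there exist an open set U ⊇ closure(G) and a function F : ℂⁿ → ℂ holomorphic on U such that sup_{z ∈ closure(G)} |f(z) − F(z)| ≤ ε. -/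
open Metric Set Function Filter Topology

lemma aux_diffAt_inv {Ω : Set ℂ} {φ g : ℂ → ℂ} (hΩ : IsOpen Ω)
    (hφ : DifferentiableOn ℂ φ Ω) (hg : ∀ x ∈ Ω, g (φ x) = x)
    {z : ℂ} (hz : z ∈ Ω) (hd : deriv φ z ≠ 0) :
    DifferentiableAt ℂ g (φ z) := by
  have hA : AnalyticAt ℂ φ z := (hφ.analyticOnNhd hΩ) z hz
  have hs : HasStrictDerivAt φ (deriv φ z) z := by
    have := hA.hasStrictFDerivAt.hasStrictDerivAt
    rwa [fderiv_apply_one_eq_deriv] at this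
  have hgf : ∀ᶠ x in 𝓝 z, g (φ x) = x := by
    filter_upwards [hΩ.mem_nhds hz] with x hx using hg x hx
  exact (hs.to_local_left_inverse hd hgf).hasDerivAt.differentiableAt

/-- 1D key lemma: dilation of the Riemann map gives a holomorphic approximation of
the identity on a neighborhood of the closure, mapping into `G`. -/
lemma aux_key (G Ω : Set ℂ) (φ : ℂ → ℂ) (hG : IsOpen G) (hbd : Bornology.IsBounded G)
    (hΩ : IsOpen Ω) (hKΩ : closure G ⊆ Ω) (hinj : Set.InjOn φ Ω)
    (hφ : DifferentiableOn ℂ φ Ω) (himg : φ '' G = Metric.ball (0:ℂ) 1)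
    (δ : ℝ) (hδ : 0 < δ) :
    ∃ (U : Set ℂ) (ψ : ℂ → ℂ), IsOpen U ∧ closure G ⊆ U ∧ DifferentiableOn ℂ ψ U ∧
      Set.MapsTo ψ U G ∧ ∀ z ∈ closure G, dist (ψ z) z < δ := by
  set K := closure G with hKdef
  have hK : IsCompact K := hbd.isCompact_closure
  have hφc : ContinuousOn φ Ω := hφ.continuousOn
  have hφca : ∀ z ∈ K, ContinuousAt φ z := fun z hz =>
    (hφ.differentiableAt (hΩ.mem_nhds (hKΩ hz))).continuousAt
  -- φ maps K into the closed unit ball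
  have hKball : ∀ z ∈ K, ‖φ z‖ ≤ 1 := by
    intro z hz
    have h1 : φ z ∈ closure (φ '' G) :=
      ((hφca z hz).continuousWithinAt).mem_closure_image hz
    rw [himg, closure_ball (0:ℂ) one_ne_zero] at h1
    simpa [mem_closedBall, dist_zero_right] using h1
  set g := Function.invFunOn φ Ω with hgdef
  have hgf : ∀ x ∈ Ω, g (φ x) = x := fun x hx => hinj.leftInvOn_invFunOn hx
  set S := φ '' K with hSdef
  have hS : IsCompact S := hK.image_of_continuousOn (hφc.mono hKΩ)
  have ballS : Metric.ball (0:ℂ) 1 ⊆ S := by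
    rw [← himg]; exact fun _ ⟨x, hx, e⟩ => ⟨x, subset_closure hx, e⟩
  have hgS : ∀ w ∈ S, g w ∈ K ∧ φ (g w) = w := by
    rintro w ⟨x, hx, rfl⟩
    rw [hgf x (hKΩ hx)]; exact ⟨hx, rfl⟩
  have hgb : ∀ w ∈ Metric.ball (0:ℂ) 1, g w ∈ G ∧ φ (g w) = w := by
    intro w hw
    rw [← himg] at hw
    obtain ⟨x, hx, rfl⟩ := hw
    rw [hgf x (hKΩ (subset_closure hx))]; exact ⟨hx, rfl⟩
  -- continuity of g on S via compactness
  have hgcont : ContinuousOn g S := by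
    haveI : CompactSpace ↥K := isCompact_iff_compactSpace.mp hK
    have hrestr : Continuous (fun x : K => φ x.1) :=
      continuousOn_iff_continuous_restrict.mp (hφc.mono hKΩ)
    let e0 : ↥K ≃ ↥S := Equiv.Set.imageOfInjOn φ K (hinj.mono hKΩ)
    have he0 : Continuous e0 := Continuous.subtype_mk hrestr _
    let e : ↥K ≃ₜ ↥S := he0.homeoOfEquivCompactToT2
    have hre : S.restrict g = (Subtype.val ∘ e.symm) := by
      funext w
      have h1 : φ ((e.symm w : ↥K) : ℂ) = (w : ℂ) := congrArg Subtype.val (e.apply_symm_apply w)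
      obtain ⟨hgK, hgφ⟩ := hgS w.1 w.2
      simp only [Function.comp_apply, Set.restrict_apply]
      exact hinj (hKΩ hgK) (hKΩ (e.symm w).2) (hgφ.trans h1.symm)
    rw [continuousOn_iff_continuous_restrict, show S.domRestrict g = S.restrict g from rfl, hre]
    exact continuous_subtype_val.comp e.symm.continuous
  have hgca : ∀ w ∈ Metric.ball (0:ℂ) 1, ContinuousAt g w := fun w hw =>
    hgcont.continuousAt (Filter.mem_of_superset (isOpen_ball.mem_nhds hw) ballS)
  -- differentiability of g on the unit ball
  have hgd : DifferentiableOn ℂ g (Metric.ball (0:ℂ) 1) := by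
    intro w₀ hw₀
    obtain ⟨hz₀G, hφz₀⟩ := hgb w₀ hw₀
    set z₀ := g w₀ with hz₀def
    have hz₀Ω : z₀ ∈ Ω := hKΩ (subset_closure hz₀G)
    suffices h : DifferentiableAt ℂ g w₀ from h.differentiableWithinAt
    by_cases hd : deriv φ z₀ = 0
    · have hAd : AnalyticAt ℂ (deriv φ) z₀ := (hφ.analyticOnNhd hΩ).deriv z₀ hz₀Ω
      rcases hAd.eventually_eq_zero_or_eventually_ne_zero with hzero | hne
      · exfalso
        obtain ⟨ρ, hρ, hball⟩ := Metric.eventually_nhds_iff_ball.mp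
          (hzero.and (hΩ.eventually_mem hz₀Ω))
        have hconv : Convex ℝ (Metric.ball z₀ ρ) := convex_ball _ _
        have hdiff : DifferentiableOn ℂ φ (Metric.ball z₀ ρ) :=
          hφ.mono fun y hy => (hball y hy).2
        have hf0 : ∀ y ∈ Metric.ball z₀ ρ, fderivWithin ℂ φ (Metric.ball z₀ ρ) y = 0 := by
          intro y hy
          rw [fderivWithin_of_isOpen isOpen_ball hy, ← toSpanSingleton_deriv, (hball y hy).1]
          ext
          simp
        have hx2 : z₀ + ((ρ/2 : ℝ) : ℂ) ∈ Metric.ball z₀ ρ := by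
          simp only [Metric.mem_ball, dist_eq_norm, add_sub_cancel_left, Complex.norm_real,
            Real.norm_eq_abs]
          rw [abs_of_pos (by positivity)]
          linarith
        have hcon := hconv.is_const_of_fderivWithin_eq_zero hdiff hf0 hx2 (mem_ball_self hρ)
        have heq := hinj ((hball _ hx2).2) hz₀Ω hcon
        rw [add_eq_left, Complex.ofReal_eq_zero] at heq
        linarith
      · rw [eventually_nhdsWithin_iff] at hne
        obtain ⟨ρ, hρ, hball⟩ := Metric.eventually_nhds_iff_ball.mp hne
        have hca := hgca w₀ hw₀
        have h1 : ∀ᶠ w in 𝓝 w₀, g w ∈ Metric.ball z₀ ρ :=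
          hca.eventually_mem (isOpen_ball.mem_nhds (mem_ball_self hρ))
        have h2 : ∀ᶠ w in 𝓝 w₀, w ∈ Metric.ball (0:ℂ) 1 := isOpen_ball.eventually_mem hw₀
        obtain ⟨τ, hτ, hτball⟩ := Metric.eventually_nhds_iff_ball.mp (h1.and h2)
        have hdiffOn : DifferentiableOn ℂ g (Metric.ball w₀ τ \ {w₀}) := by
          rintro w ⟨hw, hwne⟩
          have hwne' : w ≠ w₀ := by simpa using hwne
          obtain ⟨hgwρ, hwball⟩ := hτball w hw
          obtain ⟨hgwG, hgwφ⟩ := hgb w hwball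
          have hgwz : g w ≠ z₀ := fun h => hwne' (by rw [← hgwφ, h, hφz₀])
          have hd' : deriv φ (g w) ≠ 0 := hball (g w) hgwρ (by simpa using hgwz)
          have := aux_diffAt_inv hΩ hφ hgf (hKΩ (subset_closure hgwG)) hd'
          rw [hgwφ] at this
          exact this.differentiableWithinAt
        have hDon : DifferentiableOn ℂ g (Metric.ball w₀ τ) :=
          (Complex.differentiableOn_compl_singleton_and_continuousAt_iff
            (isOpen_ball.mem_nhds (mem_ball_self hτ))).mp ⟨hdiffOn, hca⟩
        exact hDon.differentiableAt (isOpen_ball.mem_nhds (mem_ball_self hτ))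
    · have := aux_diffAt_inv hΩ hφ hgf hz₀Ω hd
      rwa [hφz₀] at this
  -- uniform continuity of g on S, choice of dilation parameter r
  have hucg := hS.uniformContinuousOn_of_continuous hgcont
  rw [Metric.uniformContinuousOn_iff] at hucg
  obtain ⟨η, hη, hη'⟩ := hucg δ hδ
  set r : ℝ := max (1 - η/2) (1/2) with hrdef
  have hr0 : 0 < r := lt_of_lt_of_le (by norm_num) (le_max_right _ _)
  have hr1 : r < 1 := max_lt (by linarith) (by norm_num)
  have hr1' : 1 - r < η := by
    have : 1 - η/2 ≤ r := le_max_left _ _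
    linarith
  have hrnorm : ‖(r : ℂ)‖ = r := by
    rw [Complex.norm_real, Real.norm_eq_abs, abs_of_pos hr0]
  set ψ : ℂ → ℂ := fun z => g ((r : ℂ) * φ z) with hψdef
  set V : Set ℂ := Ω ∩ φ ⁻¹' (Metric.ball (0:ℂ) (1/r)) with hVdef
  have hVo : IsOpen V := hφc.isOpen_inter_preimage hΩ isOpen_ball
  have hmem : ∀ z ∈ V, (r : ℂ) * φ z ∈ Metric.ball (0:ℂ) 1 := by
    rintro z ⟨hzΩ, hzb⟩
    rw [mem_preimage, mem_ball_zero_iff] at hzb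
    rw [mem_ball_zero_iff]
    rw [norm_mul, hrnorm]
    calc r * ‖φ z‖ < r * (1/r) := by
          apply mul_lt_mul_of_pos_left hzb hr0
      _ = 1 := by field_simp
  have hψd : DifferentiableOn ℂ ψ V := by
    apply DifferentiableOn.comp hgd
    · exact ((hφ.mono inter_subset_left).const_mul _)
    · exact hmem
  have hψG : ∀ z ∈ V, ψ z ∈ G := fun z hz => (hgb _ (hmem z hz)).1
  have hKV : K ⊆ V := by
    intro z hz
    refine ⟨hKΩ hz, ?_⟩
    rw [mem_preimage, mem_ball_zero_iff]
    exact lt_of_le_of_lt (hKball z hz) (one_lt_one_div hr0 hr1)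
  refine ⟨V ∩ ψ ⁻¹' G, ψ, hψd.continuousOn.isOpen_inter_preimage hVo hG,
    fun z hz => ⟨hKV hz, hψG z (hKV hz)⟩, hψd.mono inter_subset_left,
    inter_subset_right, ?_⟩
  intro z hz
  have hzΩ : z ∈ Ω := hKΩ hz
  have h1 : (r : ℂ) * φ z ∈ S := ballS (hmem z (hKV hz))
  have h2 : φ z ∈ S := mem_image_of_mem φ hz
  have h3 : dist ((r : ℂ) * φ z) (φ z) < η := by
    rw [dist_eq_norm]
    have heq1 : (r : ℂ) * φ z - φ z = (((r - 1 : ℝ)) : ℂ) * φ z := by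
      push_cast; ring
    rw [heq1, norm_mul, Complex.norm_real, Real.norm_eq_abs, abs_of_neg (by linarith),
      neg_sub]
    calc (1 - r) * ‖φ z‖ ≤ (1 - r) * 1 :=
          mul_le_mul_of_nonneg_left (hKball z hz) (by linarith)
      _ = 1 - r := mul_one _
      _ < η := hr1'
  have := hη' _ h1 _ h2 h3
  rwa [hgf z hzΩ] at this

/-- Approximation of functions continuous on the closure and holomorphic
on a product `G = G₁ × ⋯ × Gₙ` of bounded simply connected planar domains with
"analytic-type" boundary (each `Gⱼ` is a Riemann-map image of the unit disc via a map
injective and holomorphic on a neighborhood of the closure) by functions holomorphic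
on a neighborhood of the closure. -/
theorem stmt_0 (n : ℕ) (hn : 1 ≤ n) (G : Fin n → Set ℂ)
    (hne : ∀ j, (G j).Nonempty)
    (hbd : ∀ j, Bornology.IsBounded (G j))
    (hop : ∀ j, IsOpen (G j))
    (hriem : ∀ j, ∃ (Ω : Set ℂ) (φ : ℂ → ℂ), IsOpen Ω ∧ closure (G j) ⊆ Ω ∧
      Set.InjOn φ Ω ∧ DifferentiableOn ℂ φ Ω ∧ φ '' G j = Metric.ball (0 : ℂ) 1)
    (f : (Fin n → ℂ) → ℂ)
    (hfc : ContinuousOn f (closure (Set.univ.pi G)))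
    (hfd : DifferentiableOn ℂ f (Set.univ.pi G))
    (ε : ℝ) (hε : 0 < ε) :
    ∃ (U : Set (Fin n → ℂ)) (F : (Fin n → ℂ) → ℂ),
      IsOpen U ∧ closure (Set.univ.pi G) ⊆ U ∧ DifferentiableOn ℂ F U ∧
      ∀ z ∈ closure (Set.univ.pi G), ‖f z - F z‖ ≤ ε := by
  set C := closure (Set.univ.pi G) with hCdef
  have hCpi : C = Set.univ.pi fun j => closure (G j) := closure_pi_set univ G
  have hCcomp : IsCompact C := by
    rw [hCpi]
    exact isCompact_univ_pi fun j => (hbd j).isCompact_closure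
  obtain ⟨δ, hδ, hδ'⟩ := Metric.uniformContinuousOn_iff.mp
    (hCcomp.uniformContinuousOn_of_continuous hfc) ε hε
  have key' : ∀ j, ∃ (U : Set ℂ) (ψ : ℂ → ℂ), IsOpen U ∧ closure (G j) ⊆ U ∧
      DifferentiableOn ℂ ψ U ∧ Set.MapsTo ψ U (G j) ∧
      ∀ z ∈ closure (G j), dist (ψ z) z < δ := by
    intro j
    obtain ⟨Ω, φ, h1, h2, h3, h4, h5⟩ := hriem j
    exact aux_key (G j) Ω φ (hop j) (hbd j) h1 h2 h3 h4 h5 δ hδ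
  choose U ψ hUo hUK hψd hψG hψδ using key'
  set Ψ : (Fin n → ℂ) → (Fin n → ℂ) := fun z j => ψ j (z j) with hΨdef
  have hmemU : ∀ z ∈ Set.univ.pi U, ∀ j, z j ∈ U j := by
    intro z hz j; exact hz j (mem_univ j)
  have hΨmaps : Set.MapsTo Ψ (Set.univ.pi U) (Set.univ.pi G) := by
    intro z hz
    exact fun j _ => hψG j (hmemU z hz j)
  have hΨd : DifferentiableOn ℂ Ψ (Set.univ.pi U) := by
    rw [differentiableOn_pi]
    intro j
    have hproj : Differentiable ℂ (fun z : Fin n → ℂ => z j) :=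
      (ContinuousLinearMap.proj (R := ℂ) (φ := fun _ : Fin n => ℂ) j).differentiable
    exact (hψd j).comp hproj.differentiableOn fun z hz => hmemU z hz j
  refine ⟨Set.univ.pi U, f ∘ Ψ, isOpen_set_pi finite_univ fun j _ => hUo j, ?_, ?_, ?_⟩
  · rw [hCpi]
    exact fun z hz j hj => hUK j (hz j hj)
  · exact hfd.comp hΨd hΨmaps
  · intro z hz
    have hzj : ∀ j, z j ∈ closure (G j) := by
      rw [hCpi] at hz; exact fun j => hz j (mem_univ j)
    have hzU : z ∈ Set.univ.pi U := fun j _ => hUK j (hzj j)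
    have hΨC : Ψ z ∈ C := subset_closure (hΨmaps hzU)
    have hdist : dist z (Ψ z) < δ := by
      rw [dist_pi_lt_iff hδ]
      intro j
      rw [dist_comm]
      exact hψδ j (z j) (hzj j)
    have := hδ' z hz (Ψ z) hΨC hdist
    rw [dist_eq_norm] at this
    exact le_of_lt this
end

section
/- Let K_1,…,K_n ⊆ ℂ be nonempty compact sets, K := K_1 × ⋯ × K_n ⊆ ℂⁿ, and let u : C(K, ℂ) →L[ℂ] ℂ be a continuous linear functional on the Banach space of continuous complex-valued functions on K with the supremum norm. Define ũ : ℂⁿ → ℂ by ũ(λ) := u(z ↦ ∏_{j=1}^n (z_j − λ_j)⁻¹). Then ũ is holomorphic on the open set Ω := {λ ∈ ℂⁿ : λ_j ∉ K_j for every j}. -/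
/-- For a continuous linear functional `u` on `C(K, ℂ)`, where
`K = K₁ × ⋯ × Kₙ` is a product of nonempty compact subsets of `ℂ`, the function
`ũ(λ) = u(z ↦ ∏ⱼ (zⱼ - λⱼ)⁻¹)` is holomorphic on `{λ | ∀ j, λⱼ ∉ Kⱼ}`. -/
theorem stmt_1 (n : ℕ) (K : Fin n → Set ℂ)
    (hne : ∀ j, (K j).Nonempty) (hcpt : ∀ j, IsCompact (K j))
    (u : C(↥(Set.univ.pi K), ℂ) →L[ℂ] ℂ)
    (g : (Fin n → ℂ) → C(↥(Set.univ.pi K), ℂ))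
    (hg : ∀ ζ : Fin n → ℂ, (∀ j, ζ j ∉ K j) →
      ∀ z : ↥(Set.univ.pi K), g ζ z = ∏ j, ((z : Fin n → ℂ) j - ζ j)⁻¹) :
    DifferentiableOn ℂ (fun ζ => u (g ζ)) {ζ : Fin n → ℂ | ∀ j, ζ j ∉ K j} := by
  haveI : CompactSpace ↥(Set.univ.pi K) :=
    isCompact_iff_compactSpace.mp (isCompact_univ_pi hcpt)
  -- coordinate evaluation maps
  set e : Fin n → C(↥(Set.univ.pi K), ℂ) :=
    fun j => ⟨fun z => (z : Fin n → ℂ) j, ((continuous_apply j).comp continuous_subtype_val)⟩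
    with he
  -- the explicit holomorphic family
  set F : (Fin n → ℂ) → C(↥(Set.univ.pi K), ℂ) :=
    fun ζ => ∏ j, Ring.inverse (e j - ζ j • 1) with hF
  have hunit : ∀ (ζ : Fin n → ℂ) (j : Fin n), ζ j ∉ K j → IsUnit (e j - ζ j • 1) := by
    intro ζ j hj
    have hne0 : ∀ z : ↥(Set.univ.pi K), (z : Fin n → ℂ) j - ζ j ≠ 0 := by
      intro z h0
      exact hj (by simpa [sub_eq_zero.mp h0] using z.2 j (Set.mem_univ j))
    refine ⟨⟨e j - ζ j • 1,
      ⟨fun z => ((z : Fin n → ℂ) j - ζ j)⁻¹, ?_⟩, ?_, ?_⟩, rfl⟩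
    · exact ((((continuous_apply j).comp continuous_subtype_val).sub continuous_const).inv₀ hne0)
    · ext z
      simp only [ContinuousMap.mul_apply, ContinuousMap.sub_apply, ContinuousMap.smul_apply,
        ContinuousMap.one_apply, ContinuousMap.coe_mk, smul_eq_mul, mul_one,
        ContinuousMap.one_apply]
      exact mul_inv_cancel₀ (hne0 z)
    · ext z
      simp only [ContinuousMap.mul_apply, ContinuousMap.sub_apply, ContinuousMap.smul_apply,
        ContinuousMap.one_apply, ContinuousMap.coe_mk, smul_eq_mul, mul_one,
        ContinuousMap.one_apply]
      exact inv_mul_cancel₀ (hne0 z)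
  have hFval : ∀ (ζ : Fin n → ℂ), (∀ j, ζ j ∉ K j) → F ζ = g ζ := by
    intro ζ hζ
    ext z
    rw [hg ζ hζ z]
    have : F ζ z = ∏ j, (Ring.inverse (e j - ζ j • 1)) z := by
      simp [hF, ContinuousMap.prod_apply]
    rw [this]
    refine Finset.prod_congr rfl fun j _ => ?_
    obtain ⟨v, hv⟩ := hunit ζ j (hζ j)
    rw [← hv, Ring.inverse_unit]
    show ((v⁻¹ : _) : C(↥(Set.univ.pi K), ℂ)) z = _
    have hvz : ((v : C(↥(Set.univ.pi K), ℂ)) z) * ((v⁻¹ : _) : C(↥(Set.univ.pi K), ℂ)) z = 1 := by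
      rw [← ContinuousMap.mul_apply, v.mul_inv]; rfl
    have hvval : ((v : C(↥(Set.univ.pi K), ℂ)) z) = (z : Fin n → ℂ) j - ζ j := by
      rw [hv]; simp [he]
    rw [hvval] at hvz
    exact eq_inv_of_mul_eq_one_right hvz
  have hFdiff : DifferentiableOn ℂ F {ζ : Fin n → ℂ | ∀ j, ζ j ∉ K j} := by
    intro ζ hζ
    refine DifferentiableAt.differentiableWithinAt ?_
    have : ∀ s : Finset (Fin n),
        DifferentiableAt ℂ (fun ζ' : Fin n → ℂ => ∏ j ∈ s, Ring.inverse (e j - ζ' j • 1)) ζ := by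
      intro s
      induction s using Finset.induction with
      | empty => simpa using differentiableAt_const (1 : C(↥(Set.univ.pi K), ℂ))
      | insert _ _ hj ih =>
        rw [show (fun ζ' : Fin n → ℂ => ∏ j ∈ _, _) = _ from funext fun ζ' =>
          Finset.prod_insert hj]
        refine DifferentiableAt.mul ?_ ih
        refine DifferentiableAt.inverse ?_ (hunit ζ _ (hζ _))
        exact (differentiableAt_const _).sub
          (((differentiableAt_pi.mp differentiableAt_id _)).smul_const _)
    exact this Finset.univ
  exact ((u.differentiable.comp_differentiableOn hFdiff).congr
    fun ζ hζ => by rw [Function.comp_apply, hFval ζ hζ])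
end

section
/- Let K_1,…,K_n ⊆ ℂ be nonempty compact sets, K := K_1 × ⋯ × K_n, and let u : C(K, ℂ) →L[ℂ] ℂ be a continuous linear functional. Define ũ(λ) := u(z ↦ ∏_{j=1}^n (z_j − λ_j)⁻¹) for λ in the open set Ω := {λ ∈ ℂⁿ : λ_j ∉ K_j for every j}. Then for every λ ∈ Ω and every index j, the function t ↦ ũ(λ_1,…,λ_{j−1}, t, λ_{j+1},…,λ_n) is complex differentiable at t = λ_j, and its derivative there equals u(z ↦ (z_j − λ_j)⁻² · ∏_{i ≠ j} (z_i − λ_i)⁻¹). -/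
open Metric Asymptotics Finset

set_option maxHeartbeats 1000000 in
/-- The partial derivative of `ũ(λ) = u(z ↦ ∏ⱼ (zⱼ - λⱼ)⁻¹)` with respect
to the `j`-th coordinate at a point `λ` with `λᵢ ∉ Kᵢ` for all `i` exists and equals
`u(z ↦ (zⱼ - λⱼ)⁻² ∏_{i ≠ j} (zᵢ - λᵢ)⁻¹)`. -/
theorem stmt_2 (n : ℕ) (K : Fin n → Set ℂ)
    (hne : ∀ j, (K j).Nonempty) (hcpt : ∀ j, IsCompact (K j))
    (u : C(↥(Set.univ.pi K), ℂ) →L[ℂ] ℂ)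
    (g : (Fin n → ℂ) → C(↥(Set.univ.pi K), ℂ))
    (hg : ∀ ζ : Fin n → ℂ, (∀ j, ζ j ∉ K j) →
      ∀ z : ↥(Set.univ.pi K), g ζ z = ∏ j, ((z : Fin n → ℂ) j - ζ j)⁻¹) :
    ∀ ζ : Fin n → ℂ, (∀ j, ζ j ∉ K j) → ∀ j : Fin n,
      ∀ h : C(↥(Set.univ.pi K), ℂ),
        (∀ z : ↥(Set.univ.pi K), h z =
          (((z : Fin n → ℂ) j - ζ j) ^ 2)⁻¹ *
            ∏ i ∈ Finset.univ.erase j, ((z : Fin n → ℂ) i - ζ i)⁻¹) →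
        HasDerivAt (fun t : ℂ => u (g (Function.update ζ j t))) (u h) (ζ j) := by
  intro ζ hζ j h hh
  haveI : CompactSpace ↥(Set.univ.pi K) :=
    isCompact_iff_compactSpace.mp (isCompact_univ_pi hcpt)
  set d : Fin n → ℝ := fun i => infDist (ζ i) (K i) with hd
  have hdpos : ∀ i, 0 < d i := fun i =>
    ((hcpt i).isClosed.notMem_iff_infDist_pos (hne i)).mp (hζ i)
  have hdle : ∀ i, ∀ w ∈ K i, d i ≤ ‖w - ζ i‖ := by
    intro i w hw
    have := infDist_le_dist_of_mem (x := ζ i) hw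
    rwa [dist_comm, dist_eq_norm] at this
  set C : ℝ := (d j / 2)⁻¹ * ((d j)^2)⁻¹ * ∏ i ∈ Finset.univ.erase j, (d i)⁻¹ with hC
  have hpos : (0:ℝ) < d j / 2 := by have := hdpos j; linarith
  have hC0 : 0 ≤ C := by
    rw [hC]
    refine mul_nonneg (mul_nonneg (inv_nonneg.mpr hpos.le) (inv_nonneg.mpr (by positivity))) ?_
    exact Finset.prod_nonneg fun i _ => inv_nonneg.mpr (hdpos i).le
  have H : HasDerivAt (fun t : ℂ => g (Function.update ζ j t)) h (ζ j) := by
    rw [hasDerivAt_iff_isLittleO]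
    simp only [Function.update_eq_self]
    have key : ∀ᶠ t in nhds (ζ j),
        ‖g (Function.update ζ j t) - g ζ - (t - ζ j) • h‖ ≤ C * ‖(t - ζ j)^2‖ := by
      filter_upwards [Metric.ball_mem_nhds (ζ j) hpos] with t ht
      have h2 : ‖t - ζ j‖ < d j / 2 := by rwa [mem_ball, dist_eq_norm] at ht
      have htK : t ∉ K j := by
        intro hmem
        have h1 : d j ≤ ‖t - ζ j‖ := hdle j t hmem
        have := hdpos j
        linarith
      have hupd : ∀ i, Function.update ζ j t i ∉ K i := by
        intro i
        rcases eq_or_ne i j with rfl | hij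
        · simpa using htK
        · simpa [Function.update_of_ne hij] using hζ i
      rw [ContinuousMap.norm_le _ (mul_nonneg hC0 (norm_nonneg _))]
      intro z
      have hzK : ∀ i, (z : Fin n → ℂ) i ∈ K i := fun i => z.2 i (Set.mem_univ i)
      have hzd : ∀ i, d i ≤ ‖(z : Fin n → ℂ) i - ζ i‖ := fun i => hdle i _ (hzK i)
      have hzt : d j / 2 ≤ ‖(z : Fin n → ℂ) j - t‖ := by
        have h3 : ‖(z : Fin n → ℂ) j - ζ j‖ - ‖t - ζ j‖ ≤
            ‖((z : Fin n → ℂ) j - ζ j) - (t - ζ j)‖ := norm_sub_norm_le _ _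
        have h4 : ((z : Fin n → ℂ) j - ζ j) - (t - ζ j) = (z : Fin n → ℂ) j - t := by ring
        rw [h4] at h3
        have := hzd j
        linarith
      have hA : (z : Fin n → ℂ) j - t ≠ 0 := by
        intro h0
        rw [h0, norm_zero] at hzt
        linarith
      have hB : (z : Fin n → ℂ) j - ζ j ≠ 0 := by
        intro h0
        have h5 := hzd j
        rw [h0, norm_zero] at h5
        have := hdpos j
        linarith
      have key2 : ((z : Fin n → ℂ) j - t)⁻¹ - ((z : Fin n → ℂ) j - ζ j)⁻¹
            - (t - ζ j) * ((((z : Fin n → ℂ) j - ζ j)^2)⁻¹)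
          = (t - ζ j)^2 * (((z : Fin n → ℂ) j - t)⁻¹ * ((((z : Fin n → ℂ) j - ζ j)^2)⁻¹)) := by
        field_simp
        ring
      have hval : (g (Function.update ζ j t) - g ζ - (t - ζ j) • h) z
          = (t - ζ j)^2 * (((z : Fin n → ℂ) j - t)⁻¹ * ((((z : Fin n → ℂ) j - ζ j)^2)⁻¹)) *
            ∏ i ∈ Finset.univ.erase j, ((z : Fin n → ℂ) i - ζ i)⁻¹ := by
        simp only [ContinuousMap.sub_apply, ContinuousMap.smul_apply, smul_eq_mul,
          hg _ hupd, hg _ hζ, hh]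
        rw [← Finset.mul_prod_erase Finset.univ
              (fun i => ((z : Fin n → ℂ) i - Function.update ζ j t i)⁻¹) (Finset.mem_univ j),
            ← Finset.mul_prod_erase Finset.univ
              (fun i => ((z : Fin n → ℂ) i - ζ i)⁻¹) (Finset.mem_univ j)]
        have hprodeq : ∏ i ∈ Finset.univ.erase j,
              ((z : Fin n → ℂ) i - Function.update ζ j t i)⁻¹
            = ∏ i ∈ Finset.univ.erase j, ((z : Fin n → ℂ) i - ζ i)⁻¹ :=
          Finset.prod_congr rfl fun i hi => by
            rw [Function.update_of_ne (Finset.ne_of_mem_erase hi)]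
        simp only [Function.update_self]
        rw [hprodeq]
        linear_combination (∏ i ∈ Finset.univ.erase j, ((z : Fin n → ℂ) i - ζ i)⁻¹) * key2
      rw [hval]
      have e1 : ‖(t - ζ j)^2 * (((z : Fin n → ℂ) j - t)⁻¹ * ((((z : Fin n → ℂ) j - ζ j)^2)⁻¹)) *
            ∏ i ∈ Finset.univ.erase j, ((z : Fin n → ℂ) i - ζ i)⁻¹‖
          = ‖(t - ζ j)^2‖ * ((‖(z : Fin n → ℂ) j - t‖⁻¹ * ((‖(z : Fin n → ℂ) j - ζ j‖^2)⁻¹)) *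
            ∏ i ∈ Finset.univ.erase j, ‖(z : Fin n → ℂ) i - ζ i‖⁻¹) := by
        simp [norm_mul, norm_inv, norm_pow, norm_prod, mul_assoc]
      rw [e1]
      have b1 : ‖(z : Fin n → ℂ) j - t‖⁻¹ ≤ (d j / 2)⁻¹ :=
        inv_anti₀ hpos hzt
      have b2 : (‖(z : Fin n → ℂ) j - ζ j‖^2)⁻¹ ≤ ((d j)^2)⁻¹ :=
        inv_anti₀ (pow_pos (hdpos j) 2) (pow_le_pow_left₀ (hdpos j).le (hzd j) 2)
      have b3 : ∏ i ∈ Finset.univ.erase j, ‖(z : Fin n → ℂ) i - ζ i‖⁻¹ ≤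
          ∏ i ∈ Finset.univ.erase j, (d i)⁻¹ := by
        refine Finset.prod_le_prod (fun i _ => inv_nonneg.mpr (norm_nonneg _)) ?_
        exact fun i _ => inv_anti₀ (hdpos i) (hzd i)
      have b4 : (‖(z : Fin n → ℂ) j - t‖⁻¹ * ((‖(z : Fin n → ℂ) j - ζ j‖^2)⁻¹)) *
            ∏ i ∈ Finset.univ.erase j, ‖(z : Fin n → ℂ) i - ζ i‖⁻¹ ≤ C := by
        rw [hC]
        refine mul_le_mul (mul_le_mul b1 b2 (inv_nonneg.mpr (by positivity))
          (inv_nonneg.mpr hpos.le)) b3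
          (Finset.prod_nonneg fun i _ => inv_nonneg.mpr (norm_nonneg _)) ?_
        exact mul_nonneg (inv_nonneg.mpr hpos.le) (inv_nonneg.mpr (by positivity))
      calc ‖(t - ζ j)^2‖ * ((‖(z : Fin n → ℂ) j - t‖⁻¹ * ((‖(z : Fin n → ℂ) j - ζ j‖^2)⁻¹)) *
            ∏ i ∈ Finset.univ.erase j, ‖(z : Fin n → ℂ) i - ζ i‖⁻¹)
          ≤ ‖(t - ζ j)^2‖ * C := mul_le_mul_of_nonneg_left b4 (norm_nonneg _)
        _ = C * ‖(t - ζ j)^2‖ := mul_comm _ _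
    have h1 : (fun t : ℂ => (t - ζ j)^2) =o[nhds (ζ j)] fun t => t - ζ j := by
      have h0 : (fun t : ℂ => t - ζ j) =o[nhds (ζ j)] (fun _ => (1:ℂ)) := by
        rw [Asymptotics.isLittleO_one_iff]
        have h5 : Filter.Tendsto (fun t : ℂ => t - ζ j) (nhds (ζ j)) (nhds (ζ j - ζ j)) :=
          Filter.Tendsto.sub_const Filter.tendsto_id _
        simpa using h5
      simpa [pow_two] using h0.mul_isBigO (Asymptotics.isBigO_refl (fun t : ℂ => t - ζ j) _)
    exact (Asymptotics.isBigO_iff.mpr ⟨C, key⟩).trans_isLittleO h1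
  exact u.hasFDerivAt.comp_hasDerivAt (ζ j) H
end

section
/- Let r, s, R ∈ (ℝ_{>0})ⁿ with r_j < s_j < R_j for every j, let K := {z ∈ ℂⁿ : |z_j| ≤ r_j for all j} be the closed polydisc of polyradius r, and let u : C(K, ℂ) →L[ℂ] ℂ be a continuous linear functional. Define ũ(λ) := u(z ↦ ∏_{j=1}^n (z_j − λ_j)⁻¹) for λ with |λ_j| > r_j for all j. Then for every function f : ℂⁿ → ℂ holomorphic on the open polydisc P(R), one has u(f|_K) = ((−1)ⁿ/(2πi)ⁿ) ∯_{|λ_j|=s_j} ũ(λ) f(λ) dλ. -/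
open Complex Set MeasureTheory Function

lemma continuous_torusMap' (c : Fin n → ℂ) (s : Fin n → ℝ) : Continuous (torusMap c s) := by
  refine continuous_pi fun i => ?_
  exact continuous_const.add (continuous_const.mul (Complex.continuous_exp.comp
    ((Complex.continuous_ofReal.comp (continuous_apply i)).mul continuous_const)))

lemma norm_torusMap_zero {n : ℕ} (s : Fin n → ℝ) (hs : ∀ j, 0 ≤ s j) (θ : Fin n → ℝ) (j : Fin n) :
    ‖torusMap (0 : Fin n → ℂ) s θ j‖ = s j := by
  simp [torusMap, norm_mul, Complex.norm_exp_ofReal_mul_I, _root_.abs_of_nonneg (hs j), hs j]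

lemma diff_cons {n : ℕ} (x : ℂ) : Differentiable ℂ (fun w : Fin n → ℂ => (Fin.cons x w : Fin (n+1) → ℂ)) := by
  refine differentiable_pi.2 fun i => ?_
  induction i using Fin.cases with
  | zero => simp only [Fin.cons_zero]; exact differentiable_const x
  | succ j => simp only [Fin.cons_succ]; exact differentiable_pi.1 differentiable_id j

lemma torusMap_mem_polydisc {n : ℕ} {s R : Fin n → ℝ} (hs : ∀ j, 0 < s j)
    (hsR : ∀ j, s j < R j) (θ : Fin n → ℝ) :
    torusMap (0 : Fin n → ℂ) s θ ∈ {z : Fin n → ℂ | ∀ j, ‖z j‖ < R j} := fun j => by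
  rw [norm_torusMap_zero s (fun j => (hs j).le)]; exact hsR j

lemma torusMap_sub_ne {n : ℕ} {s : Fin n → ℝ} (hs : ∀ j, 0 < s j) {z : Fin n → ℂ}
    (hz : ∀ j, ‖z j‖ < s j) (θ : Fin n → ℝ) (j : Fin n) :
    torusMap (0 : Fin n → ℂ) s θ j - z j ≠ 0 := by
  have : ‖torusMap (0 : Fin n → ℂ) s θ j‖ ≠ ‖z j‖ := by
    rw [norm_torusMap_zero s (fun j => (hs j).le)]; exact ((hz j).trans_le le_rfl).ne'
  exact sub_ne_zero.2 fun h => this (by rw [h])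

lemma ti_aux {n : ℕ} {s R : Fin n → ℝ} (hs : ∀ j, 0 < s j) (hsR : ∀ j, s j < R j)
    {f : (Fin n → ℂ) → ℂ} (hf : ContinuousOn f {z : Fin n → ℂ | ∀ j, ‖z j‖ < R j})
    {z : Fin n → ℂ} (hz : ∀ j, ‖z j‖ < s j) :
    TorusIntegrable (fun ζ => (∏ j, (ζ j - z j)⁻¹) * f ζ) 0 s := by
  apply ContinuousOn.integrableOn_compact isCompact_Icc
  apply Continuous.continuousOn
  refine Continuous.mul ?_ (hf.comp_continuous (continuous_torusMap' 0 s)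
    (torusMap_mem_polydisc hs hsR))
  refine continuous_finset_prod _ fun j _ => Continuous.inv₀ ?_ ?_
  · exact ((continuous_apply j).comp (continuous_torusMap' 0 s)).sub continuous_const
  · exact fun θ => torusMap_sub_ne hs hz θ j

lemma cauchy_polydisc : ∀ (n : ℕ) (s R : Fin n → ℝ), (∀ j, 0 < s j) → (∀ j, s j < R j) →
    ∀ (f : (Fin n → ℂ) → ℂ), DifferentiableOn ℂ f {z : Fin n → ℂ | ∀ j, ‖z j‖ < R j} →
    ∀ (z : Fin n → ℂ), (∀ j, ‖z j‖ < s j) →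
    (∯ ζ in T((0 : Fin n → ℂ), s), (∏ j, (ζ j - z j)⁻¹) * f ζ) =
      (2 * Real.pi * Complex.I) ^ n * f z := by
  intro n
  induction n with
  | zero =>
    intro s R hs hsR f hf z hz
    rw [torusIntegral_dim0]
    simp only [Finset.univ_eq_empty, Finset.prod_empty, one_mul, pow_zero]
    congr 1
    exact Subsingleton.elim _ _
  | succ n IH =>
    intro s R hs hsR f hf z hz
    have hint : TorusIntegrable (fun ζ => (∏ j, (ζ j - z j)⁻¹) * f ζ) 0 s :=
      ti_aux hs hsR hf.continuousOn hz
    rw [torusIntegral_succ hint]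
    simp only [Pi.zero_apply]
    have hc0 : ((0 : Fin (n+1) → ℂ) 0 : ℂ) = 0 := rfl
    set z' : Fin n → ℂ := z ∘ Fin.succ with hz'
    have hzs' : ∀ j, ‖z' j‖ < (s ∘ Fin.succ) j := fun j => hz j.succ
    have key : ∀ x ∈ Metric.sphere (0:ℂ) (s 0),
        (∯ y in T((0 : Fin (n+1) → ℂ) ∘ Fin.succ, s ∘ Fin.succ),
          (∏ j, ((Fin.cons x y : Fin (n+1) → ℂ) j - z j)⁻¹) * f (Fin.cons x y)) =
        (2 * Real.pi * Complex.I) ^ n * ((x - z 0)⁻¹ * f (Fin.cons x z')) := by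
      intro x hx
      have hxn : ‖x‖ = s 0 := by simpa using hx
      have hmaps : Set.MapsTo (fun w : Fin n → ℂ => (Fin.cons x w : Fin (n+1) → ℂ))
          {w : Fin n → ℂ | ∀ j, ‖w j‖ < (R ∘ Fin.succ) j} {w : Fin (n+1) → ℂ | ∀ j, ‖w j‖ < R j} := by
        intro w hw j
        induction j using Fin.cases with
        | zero => simpa [hxn] using (hsR 0)
        | succ i => simpa using hw i
      have hdiff : DifferentiableOn ℂ (fun w : Fin n → ℂ => (x - z 0)⁻¹ * f (Fin.cons x w))
          {w : Fin n → ℂ | ∀ j, ‖w j‖ < (R ∘ Fin.succ) j} :=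
        (differentiableOn_const _).mul (hf.comp (diff_cons x).differentiableOn hmaps)
      have hcong : (fun y : Fin n → ℂ =>
            (∏ j, ((Fin.cons x y : Fin (n+1) → ℂ) j - z j)⁻¹) * f (Fin.cons x y)) =
          fun y => (∏ j, (y j - z' j)⁻¹) * ((x - z 0)⁻¹ * f (Fin.cons x y)) := by
        funext y
        rw [Fin.prod_univ_succ]
        simp only [Fin.cons_zero, Fin.cons_succ, hz', Function.comp]
        ring
      show (∯ y in T((0 : Fin n → ℂ), s ∘ Fin.succ), _) = _
      rw [hcong]
      exact IH (s ∘ Fin.succ) (R ∘ Fin.succ) (fun j => hs j.succ) (fun j => hsR j.succ)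
        _ hdiff z' hzs'
    rw [circleIntegral.integral_congr (hs 0).le key]
    rw [circleIntegral.integral_const_mul]
    have hdiff1 : DifferentiableOn ℂ (fun x : ℂ => f (Fin.cons x z')) (Metric.ball (0:ℂ) (R 0)) := by
      refine hf.comp ?_ ?_
      · refine (differentiable_pi.2 fun i => ?_).differentiableOn
        induction i using Fin.cases with
        | zero => simpa using differentiable_id
        | succ j => simp only [Fin.cons_succ]; exact differentiable_const _
      · intro x hxb j
        induction j using Fin.cases with
        | zero => simpa using mem_ball_zero_iff.1 hxb
        | succ i => simpa [hz'] using (hz i.succ).trans (hsR i.succ)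
    have hdc : DiffContOnCl ℂ (fun x : ℂ => f (Fin.cons x z')) (Metric.ball (0:ℂ) (s 0)) := by
      refine DifferentiableOn.diffContOnCl ?_
      refine hdiff1.mono ?_
      exact subset_trans (Metric.closure_ball_subset_closedBall)
        (Metric.closedBall_subset_ball (hsR 0))
    have hcau := hdc.circleIntegral_sub_inv_smul (w := z 0)
      (mem_ball_zero_iff.2 (hz 0))
    simp only [smul_eq_mul] at hcau
    rw [show (∮ x in C((0:ℂ), s 0), (x - z 0)⁻¹ * f (Fin.cons x z')) =
      2 * Real.pi * Complex.I * f (Fin.cons (z 0) z') from hcau]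
    have : Fin.cons (z 0) z' = z := Fin.cons_self_tail z
    rw [this, pow_succ]
    ring
noncomputable def hmap (n : ℕ) (r s : Fin n → ℝ) (hrs : ∀ j, r j < s j) (hr : ∀ j, 0 < r j)
    (f : (Fin n → ℂ) → ℂ) (θ : Fin n → ℝ) :
    C(↥{z : Fin n → ℂ | ∀ j, ‖z j‖ ≤ r j}, ℂ) :=
  ⟨fun z => (∏ i, ((s i : ℂ) * Complex.exp ((θ i : ℂ) * Complex.I) * Complex.I)) *
      ((∏ j, (((z : Fin n → ℂ) j - torusMap 0 s θ j)⁻¹)) * f (torusMap 0 s θ)), by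
    refine continuous_const.mul (Continuous.mul ?_ continuous_const)
    refine continuous_finset_prod _ fun j _ => Continuous.inv₀ ?_ ?_
    · exact ((continuous_apply j).comp continuous_subtype_val).sub continuous_const
    · intro z
      refine sub_ne_zero.2 fun h => ?_
      have h1 : ‖(z : Fin n → ℂ) j‖ ≤ r j := z.2 j
      have h2 : ‖torusMap (0 : Fin n → ℂ) s θ j‖ = s j := by
        simp [torusMap, norm_mul, Complex.norm_exp_ofReal_mul_I,
          _root_.abs_of_nonneg ((hr j).trans (hrs j)).le]
      rw [h] at h1
      rw [h2] at h1
      exact absurd h1 (not_le.2 (hrs j))⟩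

lemma hmap_apply (n : ℕ) (r s : Fin n → ℝ) (hrs : ∀ j, r j < s j) (hr : ∀ j, 0 < r j)
    (f : (Fin n → ℂ) → ℂ) (θ : Fin n → ℝ) (z : ↥{z : Fin n → ℂ | ∀ j, ‖z j‖ ≤ r j}) :
    hmap n r s hrs hr f θ z =
      (∏ i, ((s i : ℂ) * Complex.exp ((θ i : ℂ) * Complex.I) * Complex.I)) *
      ((∏ j, (((z : Fin n → ℂ) j - torusMap 0 s θ j)⁻¹)) * f (torusMap 0 s θ)) := rfl

lemma continuous_torusMap'' (c : Fin n → ℂ) (s : Fin n → ℝ) : Continuous (torusMap c s) := by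
  refine continuous_pi fun i => ?_
  exact continuous_const.add (continuous_const.mul (Complex.continuous_exp.comp
    ((Complex.continuous_ofReal.comp (continuous_apply i)).mul continuous_const)))

lemma hmap_continuous (n : ℕ) (r s R : Fin n → ℝ) (hrs : ∀ j, r j < s j) (hr : ∀ j, 0 < r j)
    (hsR : ∀ j, s j < R j) (f : (Fin n → ℂ) → ℂ)
    (hf : ContinuousOn f {z : Fin n → ℂ | ∀ j, ‖z j‖ < R j}) :
    Continuous (hmap n r s hrs hr f) := by
  apply ContinuousMap.continuous_of_continuous_uncurry
  have hs : ∀ j, 0 < s j := fun j => (hr j).trans (hrs j)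
  have hmem : ∀ θ : Fin n → ℝ, torusMap (0 : Fin n → ℂ) s θ ∈
      {z : Fin n → ℂ | ∀ j, ‖z j‖ < R j} := by
    intro θ j
    have h2 : ‖torusMap (0 : Fin n → ℂ) s θ j‖ = s j := by
      simp [torusMap, norm_mul, Complex.norm_exp_ofReal_mul_I,
        _root_.abs_of_nonneg (hs j).le]
    rw [h2]; exact hsR j
  refine Continuous.mul ?_ (Continuous.mul ?_ ?_)
  · refine continuous_finset_prod _ fun i _ => ?_
    refine Continuous.mul (Continuous.mul continuous_const ?_) continuous_const
    exact Complex.continuous_exp.comp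
      ((Complex.continuous_ofReal.comp ((continuous_apply i).comp continuous_fst)).mul
        continuous_const)
  · refine continuous_finset_prod _ fun j _ => Continuous.inv₀ ?_ ?_
    · refine Continuous.sub ?_ ?_
      · exact (continuous_apply j).comp (continuous_subtype_val.comp continuous_snd)
      · exact ((continuous_apply j).comp ((continuous_torusMap'' 0 s).comp continuous_fst))
    · rintro ⟨θ, z⟩
      refine sub_ne_zero.2 fun h => ?_
      have h1 : ‖(z : Fin n → ℂ) j‖ ≤ r j := z.2 j
      have h2 : ‖torusMap (0 : Fin n → ℂ) s θ j‖ = s j := by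
        simp [torusMap, norm_mul, Complex.norm_exp_ofReal_mul_I,
          _root_.abs_of_nonneg (hs j).le]
      simp only [Function.uncurry] at h
      rw [h, h2] at h1
      exact absurd h1 (not_le.2 (hrs j))
  · exact hf.comp_continuous ((continuous_torusMap'' 0 s).comp continuous_fst) fun p => hmem p.1

/-- For a continuous linear functional `u` on `C(K, ℂ)`, with `K` the
closed polydisc of polyradius `r`, and `f` holomorphic on the open polydisc `P(R)`
with `rⱼ < sⱼ < Rⱼ`, the action of `u` on `f` is recovered from `ũ` by an iterated
contour (torus) integral over `{|λⱼ| = sⱼ}`. -/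
theorem stmt_4 (n : ℕ) (r s R : Fin n → ℝ)
    (hr : ∀ j, 0 < r j) (hrs : ∀ j, r j < s j) (hsR : ∀ j, s j < R j)
    (u : C(↥{z : Fin n → ℂ | ∀ j, ‖z j‖ ≤ r j}, ℂ) →L[ℂ] ℂ)
    (g : (Fin n → ℂ) → C(↥{z : Fin n → ℂ | ∀ j, ‖z j‖ ≤ r j}, ℂ))
    (hg : ∀ ζ : Fin n → ℂ, (∀ j, r j < ‖ζ j‖) →
      ∀ z : ↥{z : Fin n → ℂ | ∀ j, ‖z j‖ ≤ r j}, g ζ z = ∏ j, ((z : Fin n → ℂ) j - ζ j)⁻¹)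
    (f : (Fin n → ℂ) → ℂ)
    (hf : DifferentiableOn ℂ f {z : Fin n → ℂ | ∀ j, ‖z j‖ < R j})
    (fK : C(↥{z : Fin n → ℂ | ∀ j, ‖z j‖ ≤ r j}, ℂ))
    (hfK : ∀ z : ↥{z : Fin n → ℂ | ∀ j, ‖z j‖ ≤ r j}, fK z = f z) :
    u fK = (-1 : ℂ) ^ n / (2 * Real.pi * Complex.I) ^ n *
      torusIntegral (fun ζ => u (g ζ) * f ζ) 0 s := by
  have hs : ∀ j, 0 < s j := fun j => (hr j).trans (hrs j)
  haveI : CompactSpace ↥{z : Fin n → ℂ | ∀ j, ‖z j‖ ≤ r j} := by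
    rw [← isCompact_iff_compactSpace]
    have hKe : {z : Fin n → ℂ | ∀ j, ‖z j‖ ≤ r j} =
        Set.pi Set.univ (fun j => Metric.closedBall (0 : ℂ) (r j)) := by
      ext w
      simp [Set.mem_pi, mem_closedBall_zero_iff]
    rw [hKe]
    exact isCompact_univ_pi fun j => ProperSpace.isCompact_closedBall _ _
  have hnormT : ∀ (θ : Fin n → ℝ) (j : Fin n), ‖torusMap (0 : Fin n → ℂ) s θ j‖ = s j :=
    norm_torusMap_zero s fun j => (hs j).le
  have hint : Integrable (hmap n r s hrs hr f)
      (volume.restrict (Icc (0 : Fin n → ℝ) fun _ => 2 * Real.pi)) :=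
    ((hmap_continuous n r s R hrs hr hsR f hf.continuousOn).continuousOn).integrableOn_compact
      isCompact_Icc
  -- Step 2 : the integral of hmap is the scalar multiple of fK
  have hE : (∫ θ in Icc (0 : Fin n → ℝ) fun _ => 2 * Real.pi, hmap n r s hrs hr f θ) =
      ((-1 : ℂ) ^ n * (2 * Real.pi * Complex.I) ^ n) • fK := by
    refine ContinuousMap.ext fun z => ?_
    rw [ContinuousMap.integral_apply hint]
    have hprod : ∀ ζ : Fin n → ℂ,
        (∏ j, (((z : Fin n → ℂ) j - ζ j)⁻¹)) = (-1 : ℂ) ^ n * ∏ j, (ζ j - (z : Fin n → ℂ) j)⁻¹ := by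
      intro ζ
      have : ∀ j : Fin n, ((z : Fin n → ℂ) j - ζ j)⁻¹ = (-1) * (ζ j - (z : Fin n → ℂ) j)⁻¹ := by
        intro j
        rw [show (z : Fin n → ℂ) j - ζ j = -(ζ j - (z : Fin n → ℂ) j) by ring, inv_neg]
        ring
      rw [Finset.prod_congr rfl fun j _ => this j, Finset.prod_mul_distrib,
        Finset.prod_const, Finset.card_univ, Fintype.card_fin]
    have hfun : (fun θ : Fin n → ℝ => hmap n r s hrs hr f θ z) =
        fun θ => (∏ i, ((s i : ℂ) * Complex.exp ((θ i : ℂ) * Complex.I) * Complex.I)) •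
          ((-1 : ℂ) ^ n * ((∏ j, (torusMap 0 s θ j - (z : Fin n → ℂ) j)⁻¹) *
            f (torusMap 0 s θ))) := by
      funext θ
      rw [hmap_apply, hprod (torusMap 0 s θ), smul_eq_mul]
      ring
    rw [hfun]
    have hti : (∫ θ in Icc (0 : Fin n → ℝ) fun _ => 2 * Real.pi,
        (∏ i, ((s i : ℂ) * Complex.exp ((θ i : ℂ) * Complex.I) * Complex.I)) •
          ((-1 : ℂ) ^ n * ((∏ j, (torusMap 0 s θ j - (z : Fin n → ℂ) j)⁻¹) *
            f (torusMap 0 s θ)))) =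
        ∯ ζ in T((0 : Fin n → ℂ), s), (-1 : ℂ) ^ n *
          ((∏ j, (ζ j - (z : Fin n → ℂ) j)⁻¹) * f ζ) := rfl
    rw [hti, torusIntegral_const_mul,
      cauchy_polydisc n s R hs hsR f hf _ (fun j => lt_of_le_of_lt (z.2 j) (hrs j))]
    simp only [ContinuousMap.smul_apply, smul_eq_mul, hfK z]
    ring
  -- Step 1 : swap u with the torus integral
  have hswap : torusIntegral (fun ζ => u (g ζ) * f ζ) 0 s =
      u (∫ θ in Icc (0 : Fin n → ℝ) fun _ => 2 * Real.pi, hmap n r s hrs hr f θ) := by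
    rw [← ContinuousLinearMap.integral_comp_comm u hint]
    show (∫ θ in Icc (0 : Fin n → ℝ) fun _ => 2 * Real.pi,
        (∏ i, ((s i : ℂ) * Complex.exp ((θ i : ℂ) * Complex.I) * Complex.I)) •
          (u (g (torusMap 0 s θ)) * f (torusMap 0 s θ))) = _
    refine setIntegral_congr_fun measurableSet_Icc fun θ _ => ?_
    have hgv : ∀ z : ↥{z : Fin n → ℂ | ∀ j, ‖z j‖ ≤ r j},
        g (torusMap 0 s θ) z = ∏ j, ((z : Fin n → ℂ) j - torusMap 0 s θ j)⁻¹ :=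
      hg (torusMap 0 s θ) fun j => by rw [hnormT θ j]; exact hrs j
    have hmm : hmap n r s hrs hr f θ =
        ((∏ i, ((s i : ℂ) * Complex.exp ((θ i : ℂ) * Complex.I) * Complex.I)) *
          f (torusMap 0 s θ)) • g (torusMap 0 s θ) := by
      refine ContinuousMap.ext fun z => ?_
      rw [hmap_apply, ContinuousMap.smul_apply, hgv z, smul_eq_mul]
      ring
    rw [hmm, ContinuousLinearMap.map_smul, smul_eq_mul, smul_eq_mul]
    ring
  rw [hswap, hE, ContinuousLinearMap.map_smul, smul_eq_mul]
  have hne : ((2 : ℂ) * Real.pi * Complex.I) ^ n ≠ 0 :=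
    pow_ne_zero _ (by
      simp [Real.pi_ne_zero, Complex.I_ne_zero, Complex.ofReal_ne_zero])
  have h1 : ((-1 : ℂ) ^ n) * ((-1 : ℂ) ^ n) = 1 := by
    rw [← mul_pow]; norm_num
  field_simp
  ring_nf
  rw [mul_comm n 2, pow_mul]
  norm_num
end

section
/- Let G₁ = G₁⁽¹⁾ × ⋯ × G₁⁽ⁿ⁾ ⊆ ℂⁿ with each G₁⁽ʲ⁾ ⊆ ℂ nonempty and open, and let G₂ ⊆ ℂⁿ be open. Let A : ((Fin n → ℂ) → ℂ) →ₗ[ℂ] ((Fin n → ℂ) → ℂ) be a ℂ-linear map such that: (i) for every f holomorphic on G₁, A f is holomorphic on G₂; and (ii) for every compact set K ⊆ G₂ there exist a compact set L ⊆ G₁ and C > 0 such that ‖A f‖_K ≤ C ‖f‖_L for every f holomorphic on G₁. Then the function (ζ, z) ↦ A(w ↦ ∏_{j=1}^n (w_j − ζ_j)⁻¹)(z) is holomorphic (jointly, as a function of 2n complex variables) on the open set {ζ ∈ ℂⁿ : ζ_j ∉ closure(G₁⁽ʲ⁾) for all j} × G₂. -/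
open Set Metric Complex

/-- sup over a set is at most a nonneg bound. -/
lemma auxSupLe {X : Type*} {f : X → ℝ} {S : Set X} {c : ℝ} (hc : 0 ≤ c)
    (h : ∀ x ∈ S, f x ≤ c) : (⨆ x ∈ S, f x) ≤ c :=
  Real.iSup_le (fun x => Real.iSup_le (fun hx => h x hx) hc) hc

/-- a continuous function on a compact set is at most its sup. -/
lemma auxLeSup {X : Type*} [TopologicalSpace X] {g : X → ℂ} {S : Set X}
    (hS : IsCompact S) (hg : ContinuousOn g S) {z : X} (hz : z ∈ S) :
    ‖g z‖ ≤ ⨆ x ∈ S, ‖g x‖ := by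
  obtain ⟨M, hM⟩ := hS.exists_bound_of_continuousOn hg
  have hbdd : BddAbove (Set.range fun x => ⨆ _ : x ∈ S, ‖g x‖) := by
    refine ⟨max M 0, ?_⟩
    rintro _ ⟨x, rfl⟩
    exact Real.iSup_le (fun hx => (hM x hx).trans (le_max_left _ _)) (le_max_right _ _)
  have h1 : (⨆ _ : z ∈ S, ‖g z‖) = ‖g z‖ := ciSup_pos hz
  calc ‖g z‖ = ⨆ _ : z ∈ S, ‖g z‖ := h1.symm
    _ ≤ ⨆ x ∈ S, ‖g x‖ := le_ciSup hbdd z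

/-- Cauchy estimate for the fderiv of a holomorphic function on a Banach space. -/
lemma auxFDerivBound {E : Type*} [NormedAddCommGroup E] [NormedSpace ℂ E]
    {v : E → ℂ} {s : Set E} (hs : IsOpen s) (hv : DifferentiableOn ℂ v s)
    {y : E} {δ M : ℝ} (hδ : 0 < δ) (hball : closedBall y δ ⊆ s)
    (hM : ∀ x ∈ closedBall y δ, ‖v x‖ ≤ M) : ‖fderiv ℂ v y‖ ≤ M / δ := by
  have hy : y ∈ s := hball (mem_closedBall_self hδ.le)
  have hM0 : 0 ≤ M := (norm_nonneg _).trans (hM y (mem_closedBall_self hδ.le))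
  refine ContinuousLinearMap.opNorm_le_bound _ (div_nonneg hM0 hδ.le) (fun u => ?_)
  rcases eq_or_ne u 0 with rfl | hu
  · simp
  have hun : ‖u‖ ≠ 0 := norm_ne_zero_iff.mpr hu
  set u' : E := ((‖u‖ : ℂ))⁻¹ • u with hu'def
  have hu'norm : ‖u'‖ = 1 := by
    rw [hu'def, norm_smul, norm_inv, Complex.norm_real, Real.norm_eq_abs,
      _root_.abs_of_nonneg (norm_nonneg u)]
    field_simp
  -- the slice function
  set g : ℂ → ℂ := fun t => v (y + t • u') with hgdef
  have hline : ∀ t : ℂ, ‖t‖ ≤ δ → y + t • u' ∈ closedBall y δ := by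
    intro t ht
    simp only [mem_closedBall, dist_eq_norm, add_sub_cancel_left, norm_smul, hu'norm, mul_one]
    exact ht
  set T : Set ℂ := (fun t : ℂ => y + t • u') ⁻¹' s with hTdef
  have hTopen : IsOpen T := hs.preimage (by continuity)
  have hTball : closedBall (0:ℂ) δ ⊆ T := by
    intro t ht
    simp only [mem_closedBall, dist_zero_right] at ht
    exact hball (hline t ht)
  have hgd : DifferentiableOn ℂ g T := by
    intro t ht
    have : DifferentiableAt ℂ v (y + t • u') := hv.differentiableAt (hs.mem_nhds ht)
    exact (this.comp t (by fun_prop)).differentiableWithinAt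
  have hder : HasDerivAt g ((fderiv ℂ v y) u') 0 := by
    have h1 : DifferentiableAt ℂ v y := hv.differentiableAt (hs.mem_nhds hy)
    have hl : HasDerivAt (fun t : ℂ => y + t • u') u' 0 := by
      simpa using ((hasDerivAt_id (0:ℂ)).smul_const u').const_add y
    have h1' : HasFDerivAt v (fderiv ℂ v y) (y + (0:ℂ) • u') := by
      simpa using h1.hasFDerivAt
    have := h1'.comp_hasDerivAt (0:ℂ) hl
    exact this
  have hcd : Complex.cderiv δ g 0 = deriv g 0 :=
    Complex.cderiv_eq_deriv hTopen hgd hδ hTball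
  have hnorm : ‖Complex.cderiv δ g 0‖ ≤ M / δ := by
    refine Complex.norm_cderiv_le hδ (fun t ht => ?_)
    have : ‖t‖ ≤ δ := by
      rw [mem_sphere_iff_norm, sub_zero] at ht
      exact ht.le
    exact hM _ (hline t this)
  have hd : ‖(fderiv ℂ v y) u'‖ ≤ M / δ := by
    rw [← hder.deriv, ← hcd]
    exact hnorm
  have key : (fderiv ℂ v y) u = (‖u‖ : ℂ) • (fderiv ℂ v y) u' := by
    rw [hu'def, map_smul, smul_smul]
    rw [mul_inv_cancel₀ (by exact_mod_cast hun), one_smul]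
  rw [key, norm_smul, Complex.norm_real, Real.norm_eq_abs, _root_.abs_of_nonneg (norm_nonneg u)]
  calc ‖u‖ * ‖(fderiv ℂ v y) u'‖ ≤ ‖u‖ * (M / δ) :=
        mul_le_mul_of_nonneg_left hd (norm_nonneg u)
    _ = M / δ * ‖u‖ := by ring

set_option maxHeartbeats 1000000

lemma auxHasSumPiProdReal :
    ∀ (n : ℕ) (f : Fin n → ℕ → ℝ), (∀ j, Summable fun m => |f j m|) →
      HasSum (fun α : Fin n → ℕ => ∏ j, f j (α j)) (∏ j, ∑' m, f j m) := by
  intro n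
  induction n with
  | zero =>
    intro f _
    simp only [Finset.univ_eq_empty, Finset.prod_empty]
    exact hasSum_single (f := fun _ : Fin 0 → ℕ => (1:ℝ)) default
      (fun b' hb' => absurd (Subsingleton.elim b' default) hb')
  | succ n IH =>
    intro f hf
    have hg := IH (fun j => f j.succ) (fun j => hf j.succ)
    have h0 : HasSum (f 0) (∑' m, f 0 m) := (summable_abs_iff.mp (hf 0)).hasSum
    have hgnorm : Summable fun α : Fin n → ℕ => |∏ j, f j.succ (α j)| :=
      summable_abs_iff.mpr hg.summable
    have hn1 : Summable fun m => ‖f 0 m‖ := by simpa only [Real.norm_eq_abs] using hf 0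
    have hn2 : Summable fun α : Fin n → ℕ => ‖∏ j, f j.succ (α j)‖ := by
      simpa only [Real.norm_eq_abs] using hgnorm
    have hsummul := summable_mul_of_summable_norm hn1 hn2
    have hmul := h0.mul hg hsummul
    have he : (fun α : Fin (n+1) → ℕ => ∏ j, f j (α j)) ∘
        (Fin.consEquiv fun _ : Fin (n+1) => ℕ) =
        fun x : ℕ × (Fin n → ℕ) => f 0 x.1 * ∏ j, f j.succ (x.2 j) := by
      funext x
      simp only [Function.comp_apply, Fin.consEquiv_apply]
      rw [Fin.prod_univ_succ]
      simp
    rw [← he] at hmul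
    have := (Equiv.hasSum_iff (Fin.consEquiv fun _ : Fin (n+1) => ℕ)).mp hmul
    rw [Fin.prod_univ_succ]
    exact this

lemma auxHasSumPiProd {R : Type*} [NormedField R] [CompleteSpace R] :
    ∀ (n : ℕ) (f : Fin n → ℕ → R), (∀ j, Summable fun m => ‖f j m‖) →
    HasSum (fun α : Fin n → ℕ => ∏ j, f j (α j)) (∏ j, ∑' m, f j m) := by
  intro n
  induction n with
  | zero =>
    intro f _
    simp only [Finset.univ_eq_empty, Finset.prod_empty]
    exact hasSum_single (f := fun _ : Fin 0 → ℕ => (1:R)) default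
      (fun b' hb' => absurd (Subsingleton.elim b' default) hb')
  | succ n IH =>
    intro f hf
    have hg := IH (fun j => f j.succ) (fun j => hf j.succ)
    have h0 : HasSum (f 0) (∑' m, f 0 m) := (hf 0).of_norm.hasSum
    have hgnorm : Summable fun α : Fin n → ℕ => ‖∏ j, f j.succ (α j)‖ := by
      have harg : ∀ j : Fin n, Summable fun m => |‖f j.succ m‖| := fun j =>
        (hf j.succ).congr fun m => (_root_.abs_of_nonneg (norm_nonneg _)).symm
      have := (auxHasSumPiProdReal n (fun j m => ‖f j.succ m‖) harg).summable
      refine this.congr fun α => ?_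
      rw [norm_prod]
    have hsummul := summable_mul_of_summable_norm (hf 0) hgnorm
    have hmul := h0.mul hg hsummul
    have he : (fun α : Fin (n+1) → ℕ => ∏ j, f j (α j)) ∘
        (Fin.consEquiv fun _ : Fin (n+1) => ℕ) =
        fun x : ℕ × (Fin n → ℕ) => f 0 x.1 * ∏ j, f j.succ (x.2 j) := by
      funext x
      simp only [Function.comp_apply, Fin.consEquiv_apply]
      rw [Fin.prod_univ_succ]
      simp
    rw [← he] at hmul
    have := (Equiv.hasSum_iff (Fin.consEquiv fun _ : Fin (n+1) => ℕ)).mp hmul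
    rw [Fin.prod_univ_succ]
    exact this

/-- one-variable geometric expansion. -/
lemma auxGeom {x y : ℂ} (h : ‖x‖ < ‖y‖) :
    HasSum (fun m : ℕ => x ^ m * (y ^ (m+1))⁻¹) (y - x)⁻¹ := by
  have hy : y ≠ 0 := by
    intro h0; rw [h0, norm_zero] at h; exact absurd h (norm_nonneg x).not_gt
  have hr : ‖x / y‖ < 1 := by
    rw [norm_div, div_lt_one ((norm_nonneg x).trans_lt h)]; exact h
  have := (hasSum_geometric_of_norm_lt_one hr).mul_right y⁻¹
  have he : ∀ m : ℕ, (x / y) ^ m * y⁻¹ = x ^ m * (y ^ (m+1))⁻¹ := by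
    intro m
    rw [div_pow, pow_succ, mul_inv]
    field_simp
  have hv : (1 - x / y)⁻¹ * y⁻¹ = (y - x)⁻¹ := by
    rw [← mul_inv]
    congr 1
    field_simp
  rw [hv] at this
  exact this.congr_fun fun m => (he m).symm

lemma auxTermEq {d : ℝ} (hd : d ≠ 0) (m : ℕ) :
    (d/4)^m * (d^(m+1))⁻¹ = (4:ℝ)⁻¹^m * d⁻¹ := by
  rw [div_pow, pow_succ]
  have h4 : (4:ℝ)^m ≠ 0 := by positivity
  have hdm : d^m ≠ 0 := pow_ne_zero m hd
  field_simp
  ring_nf; rw [← mul_pow]; norm_num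

lemma auxTermBound {x y : ℂ} {d : ℝ} (hd : 0 < d) (hx : ‖x‖ ≤ d/4) (hy : d ≤ ‖y‖) (m : ℕ) :
    ‖x^m * ((y^(m+1)))⁻¹‖ ≤ (4:ℝ)⁻¹^m * d⁻¹ := by
  have hy0 : (0:ℝ) < ‖y‖ := hd.trans_le hy
  rw [norm_mul, norm_inv, norm_pow, norm_pow]
  rw [← auxTermEq hd.ne' m]
  have h1 : ‖x‖^m ≤ (d/4)^m := pow_le_pow_left₀ (norm_nonneg _) hx m
  have h2 : (‖y‖^(m+1))⁻¹ ≤ (d^(m+1))⁻¹ := by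
    gcongr
  exact mul_le_mul h1 h2 (by positivity) (by positivity)

lemma auxSummableGeom {d : ℝ} (hd : 0 < d) :
    Summable (fun m : ℕ => (4:ℝ)⁻¹^m * d⁻¹) :=
  (summable_geometric_of_lt_one (by norm_num) (by norm_num)).mul_right d⁻¹

lemma auxSummableBound (n : ℕ) {d : ℝ} (hd : 0 < d) :
    Summable (fun α : Fin n → ℕ => ∏ j, ((4:ℝ)⁻¹^(α j) * d⁻¹)) := by
  refine (auxHasSumPiProdReal n (fun _ m => (4:ℝ)⁻¹^m * d⁻¹) (fun j => ?_)).summable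
  refine (auxSummableGeom hd).congr fun m => ?_
  rw [_root_.abs_of_nonneg (by positivity)]

lemma lemCbound {n : ℕ} {ζ₀ w : Fin n → ℂ} {d : ℝ} (hd : 0 < d)
    (hw : ∀ j, d ≤ ‖w j - ζ₀ j‖) (α : Fin n → ℕ) :
    ‖∏ j, ((w j - ζ₀ j) ^ (α j + 1))⁻¹‖ ≤ ∏ j, (d ^ (α j + 1))⁻¹ := by
  rw [norm_prod]
  refine Finset.prod_le_prod (fun j _ => norm_nonneg _) (fun j _ => ?_)
  rw [norm_inv, norm_pow]
  have hyj := hw j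
  gcongr

lemma lemPbound {n : ℕ} {ζ₀ ζ : Fin n → ℂ} {r : ℝ} (hζ : ∀ j, ‖ζ j - ζ₀ j‖ ≤ r)
    (α : Fin n → ℕ) : ‖∏ j, (ζ j - ζ₀ j) ^ (α j)‖ ≤ ∏ j, r ^ (α j) := by
  rw [norm_prod]
  refine Finset.prod_le_prod (fun j _ => norm_nonneg _) (fun j _ => ?_)
  rw [norm_pow]
  exact pow_le_pow_left₀ (norm_nonneg _) (hζ j) _

lemma lemPCeq {n : ℕ} {d : ℝ} (hd : d ≠ 0) (α : Fin n → ℕ) :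
    (∏ j, (d/4) ^ (α j)) * (∏ j, (d ^ (α j + 1))⁻¹) = ∏ j, ((4:ℝ)⁻¹ ^ (α j) * d⁻¹) := by
  rw [← Finset.prod_mul_distrib]
  exact Finset.prod_congr rfl fun j _ => auxTermEq hd (α j)

lemma lemTermBound {n : ℕ} {ζ₀ ζ w : Fin n → ℂ} {d : ℝ} (hd : 0 < d)
    (hζ : ∀ j, ‖ζ j - ζ₀ j‖ ≤ d/4) (hw : ∀ j, d ≤ ‖w j - ζ₀ j‖) (α : Fin n → ℕ) :
    ‖(∏ j, (ζ j - ζ₀ j) ^ (α j)) * ∏ j, ((w j - ζ₀ j) ^ (α j + 1))⁻¹‖ ≤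
      ∏ j, ((4:ℝ)⁻¹ ^ (α j) * d⁻¹) := by
  rw [← Finset.prod_mul_distrib, norm_prod]
  exact Finset.prod_le_prod (fun j _ => norm_nonneg _)
    (fun j _ => auxTermBound hd (hζ j) (hw j) (α j))

lemma lemHasSumK {n : ℕ} {ζ₀ ζ w : Fin n → ℂ} {d : ℝ} (hd : 0 < d)
    (hζ : ∀ j, ‖ζ j - ζ₀ j‖ ≤ d/4) (hw : ∀ j, d ≤ ‖w j - ζ₀ j‖) :
    HasSum (fun α : Fin n → ℕ =>
      (∏ j, (ζ j - ζ₀ j) ^ (α j)) * ∏ j, ((w j - ζ₀ j) ^ (α j + 1))⁻¹)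
      (∏ j, (w j - ζ j)⁻¹) := by
  have hlt : ∀ j, ‖ζ j - ζ₀ j‖ < ‖w j - ζ₀ j‖ := fun j =>
    (hζ j).trans_lt (lt_of_lt_of_le (by linarith) (hw j))
  have hsum : ∀ j, Summable fun m => ‖(ζ j - ζ₀ j) ^ m * ((w j - ζ₀ j) ^ (m+1))⁻¹‖ := fun j =>
    Summable.of_nonneg_of_le (fun m => norm_nonneg _)
      (fun m => auxTermBound hd (hζ j) (hw j) m) (auxSummableGeom hd)
  have h := auxHasSumPiProd n (fun j m => (ζ j - ζ₀ j) ^ m * ((w j - ζ₀ j) ^ (m+1))⁻¹) hsum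
  have hval : (∏ j, ∑' m, (ζ j - ζ₀ j) ^ m * ((w j - ζ₀ j) ^ (m+1))⁻¹) =
      ∏ j, (w j - ζ j)⁻¹ := by
    refine Finset.prod_congr rfl fun j _ => ?_
    rw [(auxGeom (hlt j)).tsum_eq, sub_sub_sub_cancel_right]
  rw [hval] at h
  exact h.congr_fun fun α => Finset.prod_mul_distrib.symm

lemma auxDiffAtProd {E : Type*} [NormedAddCommGroup E] [NormedSpace ℂ E] {ι : Type*}
    [Fintype ι] {g : ι → E → ℂ} {x : E} (h : ∀ i, DifferentiableAt ℂ (g i) x) :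
    DifferentiableAt ℂ (fun y => ∏ i, g i y) x := by
  classical
  exact (HasFDerivAt.finset_prod (fun i _ => (h i).hasFDerivAt)).differentiableAt

/-- For a bounded linear operator `A` between spaces of holomorphic
functions on a cylindrical domain `G₁ = G₁⁽¹⁾ × ⋯ × G₁⁽ⁿ⁾` and an open set `G₂`,
the kernel `(ζ, z) ↦ A(w ↦ ∏ⱼ (wⱼ - ζⱼ)⁻¹)(z)` is jointly holomorphic on
`{ζ | ∀ j, ζⱼ ∉ closure G₁⁽ʲ⁾} × G₂`. -/
theorem stmt_5 (n : ℕ) (G1 : Fin n → Set ℂ)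
    (hne : ∀ j, (G1 j).Nonempty) (hop : ∀ j, IsOpen (G1 j))
    (G2 : Set (Fin n → ℂ)) (hG2 : IsOpen G2)
    (A : ((Fin n → ℂ) → ℂ) →ₗ[ℂ] ((Fin n → ℂ) → ℂ))
    (hA1 : ∀ f : (Fin n → ℂ) → ℂ,
      DifferentiableOn ℂ f (Set.univ.pi G1) → DifferentiableOn ℂ (A f) G2)
    (hA2 : ∀ K : Set (Fin n → ℂ), IsCompact K → K ⊆ G2 →
      ∃ (L : Set (Fin n → ℂ)) (C : ℝ), IsCompact L ∧ L ⊆ Set.univ.pi G1 ∧ 0 < C ∧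
        ∀ f : (Fin n → ℂ) → ℂ, DifferentiableOn ℂ f (Set.univ.pi G1) →
          (⨆ z ∈ K, ‖A f z‖) ≤ C * ⨆ z ∈ L, ‖f z‖) :
    DifferentiableOn ℂ
      (fun p : (Fin n → ℂ) × (Fin n → ℂ) => A (fun w => ∏ j, (w j - p.1 j)⁻¹) p.2)
      ({ζ : Fin n → ℂ | ∀ j, ζ j ∉ closure (G1 j)} ×ˢ G2) := by
  classical
  rcases Nat.eq_zero_or_pos n with hn0 | hnpos
  · subst hn0
    have hone : DifferentiableOn ℂ (A fun _ => (1:ℂ)) G2 :=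
      hA1 (fun _ => 1) (differentiableOn_const 1)
    have heq : (fun p : (Fin 0 → ℂ) × (Fin 0 → ℂ) =>
        A (fun w => ∏ j, (w j - p.1 j)⁻¹) p.2) =
        fun p : (Fin 0 → ℂ) × (Fin 0 → ℂ) => (A fun _ => (1:ℂ)) p.2 := by
      funext p
      have : (fun w : Fin 0 → ℂ => ∏ j, (w j - p.1 j)⁻¹) = fun _ => (1:ℂ) := by
        funext w; simp
      rw [this]
    rw [heq]
    exact hone.comp differentiable_snd.differentiableOn fun p hp => hp.2
  haveI : Nonempty (Fin n) := Fin.pos_iff_nonempty.mp hnpos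
  intro p hp
  obtain ⟨ζ₀, z₀⟩ := p
  have hζ₀ : ∀ j, ζ₀ j ∉ closure (G1 j) := hp.1
  have hz₀ : z₀ ∈ G2 := hp.2
  suffices h : DifferentiableAt ℂ (fun p : (Fin n → ℂ) × (Fin n → ℂ) =>
      A (fun w => ∏ j, (w j - p.1 j)⁻¹) p.2) (ζ₀, z₀) from h.differentiableWithinAt
  -- a positive distance to the cylinder
  obtain ⟨d, hd, hdle⟩ : ∃ d > 0, ∀ j, d ≤ Metric.infDist (ζ₀ j) (closure (G1 j)) := by
    refine ⟨Finset.univ.inf' Finset.univ_nonempty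
      (fun j => Metric.infDist (ζ₀ j) (closure (G1 j))), ?_, ?_⟩
    · exact (Finset.lt_inf'_iff _).mpr fun j _ =>
        (isClosed_closure.notMem_iff_infDist_pos (hne j).closure).mp (hζ₀ j)
    · exact fun j => Finset.inf'_le _ (Finset.mem_univ j)
  have hdist : ∀ w ∈ Set.univ.pi G1, ∀ j, d ≤ ‖w j - ζ₀ j‖ := by
    intro w hw j
    have hwj : w j ∈ closure (G1 j) := subset_closure (hw j (Set.mem_univ j))
    calc d ≤ Metric.infDist (ζ₀ j) (closure (G1 j)) := hdle j
      _ ≤ dist (ζ₀ j) (w j) := Metric.infDist_le_dist_of_mem hwj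
      _ = ‖w j - ζ₀ j‖ := by rw [dist_eq_norm, norm_sub_rev]
  -- compact neighborhood of z₀
  obtain ⟨ε, hε, hεsub⟩ := Metric.isOpen_iff.mp hG2 z₀ hz₀
  set K : Set (Fin n → ℂ) := Metric.closedBall z₀ (ε/2) with hKdef
  have hKsub : K ⊆ G2 := (Metric.closedBall_subset_ball (by linarith)).trans hεsub
  have hKc : IsCompact K := isCompact_closedBall _ _
  obtain ⟨L, C, hLc, hLG1, hC, hAb⟩ := hA2 K hKc hKsub
  -- families
  set c : (Fin n → ℕ) → (Fin n → ℂ) → ℂ :=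
    fun α w => ∏ j, ((w j - ζ₀ j) ^ (α j + 1))⁻¹ with hcdef
  set P : (Fin n → ℕ) → (Fin n → ℂ) → ℂ :=
    fun α ζ => ∏ j, (ζ j - ζ₀ j) ^ (α j) with hPdef
  set u : (Fin n → ℕ) → ((Fin n → ℂ) × (Fin n → ℂ)) → ℂ :=
    fun α q => P α q.1 * A (c α) q.2 with hudef
  set b : (Fin n → ℕ) → ℝ := fun α => ∏ j, ((4:ℝ)⁻¹ ^ (α j) * d⁻¹) with hbdef
  have hproj : ∀ j : Fin n, ∀ ξ : ℂ,
      Differentiable ℂ (fun w : Fin n → ℂ => w j - ξ) := fun j ξ =>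
    (ContinuousLinearMap.proj j : (Fin n → ℂ) →L[ℂ] ℂ).differentiable.sub_const ξ
  -- differentiability of the coefficient functions
  have hcdiff : ∀ α, DifferentiableOn ℂ (c α) (Set.univ.pi G1) := by
    intro α w hw
    refine (auxDiffAtProd fun j => ?_).differentiableWithinAt
    have hwj : d ≤ ‖w j - ζ₀ j‖ := hdist w hw j
    have hne0 : w j - ζ₀ j ≠ 0 := by
      intro h0; rw [h0, norm_zero] at hwj; linarith
    exact (((hproj j (ζ₀ j)) w).pow (α j + 1)).inv (pow_ne_zero _ hne0)
  -- differentiability of the kernels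
  have hkdiff : ∀ ζ : Fin n → ℂ, (∀ j, ‖ζ j - ζ₀ j‖ ≤ d/4) →
      DifferentiableOn ℂ (fun w => ∏ j, (w j - ζ j)⁻¹) (Set.univ.pi G1) := by
    intro ζ hζ w hw
    refine (auxDiffAtProd fun j => ?_).differentiableWithinAt
    have h1 : d ≤ ‖w j - ζ₀ j‖ := hdist w hw j
    have hne0 : w j - ζ j ≠ 0 := by
      intro h0
      have h2 : w j = ζ j := sub_eq_zero.mp h0
      have h3 : ‖w j - ζ₀ j‖ ≤ d/4 := by rw [h2]; exact hζ j
      linarith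
    exact ((hproj j (ζ j)) w).inv hne0
  -- bound for A (c α) on K
  have hprodpos : ∀ α : Fin n → ℕ, (0:ℝ) ≤ ∏ j, (d ^ (α j + 1))⁻¹ := fun α =>
    Finset.prod_nonneg fun j _ => inv_nonneg.mpr (pow_nonneg hd.le _)
  have hhK : ∀ α, ∀ z ∈ K, ‖A (c α) z‖ ≤ C * ∏ j, (d ^ (α j + 1))⁻¹ := by
    intro α z hzK
    have h1 : ‖A (c α) z‖ ≤ ⨆ x ∈ K, ‖A (c α) x‖ :=
      auxLeSup hKc ((hA1 _ (hcdiff α)).continuousOn.mono hKsub) hzK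
    have h2 := hAb (c α) (hcdiff α)
    have h3 : (⨆ w ∈ L, ‖c α w‖) ≤ ∏ j, (d ^ (α j + 1))⁻¹ :=
      auxSupLe (hprodpos α) (fun w hw => lemCbound hd (hdist w (hLG1 hw)) α)
    calc ‖A (c α) z‖ ≤ C * ⨆ w ∈ L, ‖c α w‖ := h1.trans h2
      _ ≤ C * ∏ j, (d ^ (α j + 1))⁻¹ := mul_le_mul_of_nonneg_left h3 hC.le
  -- bound for u α on the product neighborhood
  have hq1le : ∀ q : (Fin n → ℂ) × (Fin n → ℂ),
      q ∈ (Metric.closedBall ζ₀ (d/4)) ×ˢ K → ∀ j, ‖q.1 j - ζ₀ j‖ ≤ d/4 := by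
    intro q hq j
    calc ‖q.1 j - ζ₀ j‖ = dist (q.1 j) (ζ₀ j) := (dist_eq_norm _ _).symm
      _ ≤ dist q.1 ζ₀ := dist_le_pi_dist _ _ j
      _ ≤ d/4 := hq.1
  have huB : ∀ α, ∀ q ∈ (Metric.closedBall ζ₀ (d/4)) ×ˢ K, ‖u α q‖ ≤ C * b α := by
    intro α q hq
    have h1 : ‖P α q.1‖ ≤ ∏ j, (d/4) ^ (α j) := lemPbound (hq1le q hq) α
    have h2 : ‖A (c α) q.2‖ ≤ C * ∏ j, (d ^ (α j + 1))⁻¹ := hhK α q.2 hq.2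
    calc ‖u α q‖ = ‖P α q.1‖ * ‖A (c α) q.2‖ := norm_mul _ _
      _ ≤ (∏ j, (d/4) ^ (α j)) * (C * ∏ j, (d ^ (α j + 1))⁻¹) :=
          mul_le_mul h1 h2 (norm_nonneg _)
            (Finset.prod_nonneg fun j _ => pow_nonneg (by linarith) _)
      _ = C * ((∏ j, (d/4) ^ (α j)) * ∏ j, (d ^ (α j + 1))⁻¹) := by ring
      _ = C * b α := by rw [lemPCeq hd.ne' α]
  -- the small ball
  set ρ : ℝ := min (d/8) (ε/4) with hρdef
  have hρ : 0 < ρ := lt_min (by linarith) (by linarith)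
  set s : Set ((Fin n → ℂ) × (Fin n → ℂ)) := Metric.ball (ζ₀, z₀) ρ with hsdef
  have hsub : ∀ q ∈ s, Metric.closedBall q ρ ⊆ (Metric.closedBall ζ₀ (d/4)) ×ˢ K := by
    intro q hq x hx
    have hxq : dist x q ≤ ρ := hx
    have hqp : dist q (ζ₀, z₀) < ρ := hq
    have hxp : dist x (ζ₀, z₀) ≤ 2*ρ := by
      calc dist x (ζ₀, z₀) ≤ dist x q + dist q (ζ₀, z₀) := dist_triangle _ _ _
        _ ≤ 2*ρ := by linarith
    have h1 : dist x.1 ζ₀ ≤ 2*ρ := by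
      calc dist x.1 ζ₀ ≤ dist x (ζ₀, z₀) := by rw [Prod.dist_eq]; exact le_max_left _ _
        _ ≤ 2*ρ := hxp
    have h2 : dist x.2 z₀ ≤ 2*ρ := by
      calc dist x.2 z₀ ≤ dist x (ζ₀, z₀) := by rw [Prod.dist_eq]; exact le_max_right _ _
        _ ≤ 2*ρ := hxp
    constructor
    · exact Metric.mem_closedBall.mpr (h1.trans (by
        have := min_le_left (d/8) (ε/4); rw [hρdef] at *; linarith))
    · exact Metric.mem_closedBall.mpr (h2.trans (by
        have := min_le_right (d/8) (ε/4); rw [hρdef] at *; linarith))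
  have hCBsub : (Metric.closedBall ζ₀ (d/4)) ×ˢ K ⊆ (Set.univ : Set (Fin n → ℂ)) ×ˢ G2 :=
    Set.prod_mono (Set.subset_univ _) hKsub
  have hsOpen : IsOpen s := Metric.isOpen_ball
  have hsmem : ∀ q ∈ s, q ∈ (Metric.closedBall ζ₀ (d/4)) ×ˢ K := fun q hq =>
    hsub q hq (Metric.mem_closedBall_self hρ.le)
  have hsfull : ∀ q ∈ s, q ∈ (Set.univ : Set (Fin n → ℂ)) ×ˢ G2 := fun q hq =>
    hCBsub (hsmem q hq)
  -- differentiability of u α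
  have hudiff : ∀ α, DifferentiableOn ℂ (u α) ((Set.univ : Set (Fin n → ℂ)) ×ˢ G2) := by
    intro α q hq
    have hP : DifferentiableAt ℂ (fun q : (Fin n → ℂ) × (Fin n → ℂ) => P α q.1) q := by
      have h1 : DifferentiableAt ℂ (P α) q.1 :=
        auxDiffAtProd fun j => ((hproj j (ζ₀ j)) q.1).pow (α j)
      exact h1.comp q differentiableAt_fst
    have hh : DifferentiableAt ℂ (fun q : (Fin n → ℂ) × (Fin n → ℂ) => A (c α) q.2) q := by
      have h1 : DifferentiableAt ℂ (A (c α)) q.2 :=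
        (hA1 _ (hcdiff α)).differentiableAt (hG2.mem_nhds hq.2)
      exact h1.comp q differentiableAt_snd
    exact (hP.mul hh).differentiableWithinAt
  -- fderiv bounds
  have hfd : ∀ α, ∀ q ∈ s, ‖fderiv ℂ (u α) q‖ ≤ (C * b α)/ρ := fun α q hq =>
    auxFDerivBound (isOpen_univ.prod hG2) (hudiff α) hρ ((hsub q hq).trans hCBsub)
      (fun x hx => huB α x (hsub q hq hx))
  -- summability
  have hSb : Summable (fun α => C * b α) := (auxSummableBound n hd).mul_left C
  have hSb' : Summable (fun α => (C * b α)/ρ) := hSb.div_const ρ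
  -- uniform convergence of derivatives
  have hf' : TendstoUniformlyOn
      (fun t : Finset (Fin n → ℕ) => fun q => ∑ α ∈ t, fderiv ℂ (u α) q)
      (fun q => ∑' α, fderiv ℂ (u α) q) Filter.atTop s :=
    tendstoUniformlyOn_tsum hSb' (fun α q hq => hfd α q hq)
  -- partial sums have the expected derivatives
  have hf : ∀ t : Finset (Fin n → ℕ), ∀ q ∈ s,
      HasFDerivAt (fun q => ∑ α ∈ t, u α q) (∑ α ∈ t, fderiv ℂ (u α) q) q := by
    intro t q hq
    refine HasFDerivAt.fun_sum fun α _ => ?_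
    exact ((hudiff α).differentiableAt
      ((isOpen_univ.prod hG2).mem_nhds (hsfull q hq))).hasFDerivAt
  -- pointwise convergence to the kernel function
  have hfg : ∀ q ∈ s, Filter.Tendsto (fun t : Finset (Fin n → ℕ) => ∑ α ∈ t, u α q)
      Filter.atTop (nhds (A (fun w => ∏ j, (w j - q.1 j)⁻¹) q.2)) := by
    intro q hq
    have hqCB := hsmem q hq
    have hq1 : ∀ j, ‖q.1 j - ζ₀ j‖ ≤ d/4 := hq1le q hqCB
    have hq2 : q.2 ∈ K := hqCB.2
    set kq : (Fin n → ℂ) → ℂ := fun w => ∏ j, (w j - q.1 j)⁻¹ with hkqdef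
    have hkd : DifferentiableOn ℂ kq (Set.univ.pi G1) := hkdiff q.1 hq1
    set St : Finset (Fin n → ℕ) → (Fin n → ℂ) → ℂ :=
      fun t => ∑ α ∈ t, P α q.1 • c α with hStdef
    have hStdiff : ∀ t, DifferentiableOn ℂ (St t) (Set.univ.pi G1) := by
      intro t
      have : DifferentiableOn ℂ (fun w => ∑ α ∈ t, P α q.1 • c α w) (Set.univ.pi G1) :=
        DifferentiableOn.fun_sum fun α _ => (hcdiff α).fun_const_smul _
      refine this.congr fun w hw => ?_
      simp [hStdef]
    have hAeval : ∀ t, A (St t) q.2 = ∑ α ∈ t, u α q := by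
      intro t
      rw [hStdef, map_sum]
      have : ∀ α ∈ t, A (P α q.1 • c α) = P α q.1 • A (c α) := fun α _ => map_smul A _ _
      rw [Finset.sum_congr rfl this, Finset.sum_apply]
      simp [hudef, smul_eq_mul]
    -- the tail estimate
    have hest : ∀ t, ‖(∑ α ∈ t, u α q) - A kq q.2‖ ≤
        C * ⨆ w ∈ L, ‖(St t - kq) w‖ := by
      intro t
      have hdm : DifferentiableOn ℂ (St t - kq) (Set.univ.pi G1) := (hStdiff t).sub hkd
      have h0 : (∑ α ∈ t, u α q) - A kq q.2 = A (St t - kq) q.2 := by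
        rw [map_sub, Pi.sub_apply, hAeval t]
      rw [h0]
      have h1 : ‖A (St t - kq) q.2‖ ≤ ⨆ x ∈ K, ‖A (St t - kq) x‖ :=
        auxLeSup hKc ((hA1 _ hdm).continuousOn.mono hKsub) hq2
      exact h1.trans (hAb _ hdm)
    -- uniform convergence on L
    have htuo : TendstoUniformlyOn
        (fun t : Finset (Fin n → ℕ) => fun w => ∑ α ∈ t, P α q.1 * c α w)
        (fun w => ∑' α, P α q.1 * c α w) Filter.atTop L := by
      refine tendstoUniformlyOn_tsum (auxSummableBound n hd) (fun α w hw => ?_)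
      exact lemTermBound hd hq1 (hdist w (hLG1 hw)) α
    have htsum : ∀ w ∈ L, (∑' α, P α q.1 * c α w) = kq w := fun w hw =>
      (lemHasSumK hd hq1 (hdist w (hLG1 hw))).tsum_eq
    -- the sup of the tail tends to zero
    have htail : Filter.Tendsto (fun t => ⨆ w ∈ L, ‖(St t - kq) w‖)
        Filter.atTop (nhds 0) := by
      rw [Metric.tendsto_nhds]
      intro δ hδ
      have h2 := (Metric.tendstoUniformlyOn_iff.mp htuo) (δ/2) (by linarith)
      refine h2.mono fun t ht => ?_
      have hle : (⨆ w ∈ L, ‖(St t - kq) w‖) ≤ δ/2 := by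
        refine auxSupLe (by linarith) fun w hw => ?_
        have h3 := ht w hw
        rw [dist_eq_norm] at h3
        have h4 : (St t - kq) w = (∑ α ∈ t, P α q.1 * c α w) - kq w := by
          simp [hStdef, Pi.sub_apply, Finset.sum_apply, smul_eq_mul]
        rw [h4, ← htsum w hw]
        rw [norm_sub_rev]
        exact h3.le
      have hge : (0:ℝ) ≤ ⨆ w ∈ L, ‖(St t - kq) w‖ :=
        Real.iSup_nonneg fun w => Real.iSup_nonneg fun _ => norm_nonneg _
      rw [Real.dist_eq, sub_zero, _root_.abs_of_nonneg hge]
      linarith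
    -- squeeze
    have hsq : Filter.Tendsto (fun t => ‖(∑ α ∈ t, u α q) - A kq q.2‖)
        Filter.atTop (nhds 0) := by
      have := htail.const_mul C
      rw [mul_zero] at this
      exact squeeze_zero (fun t => norm_nonneg _) hest this
    have := tendsto_iff_norm_sub_tendsto_zero.mpr hsq
    exact this
  -- conclusion
  have hmem : (ζ₀, z₀) ∈ s := Metric.mem_ball_self hρ
  exact (hasFDerivAt_of_tendstoUniformlyOn hsOpen hf' hf hfg hmem).differentiableAt
end

section
/- Let ρ ∈ (ℝ_{>0})ⁿ, let G₁ := P(ρ) be the open polydisc of polyradius ρ, and let G₂ ⊆ ℂⁿ be open and nonempty. Let A : ((Fin n → ℂ) → ℂ) →ₗ[ℂ] ((Fin n → ℂ) → ℂ) be a ℂ-linear map such that: (i) for every f holomorphic on G₁, A f is holomorphic on G₂; and (ii) for every compact set K ⊆ G₂ there exist a compact set L ⊆ G₁ and C > 0 such that ‖A f‖_K ≤ C ‖f‖_L for every f holomorphic on G₁. If A(w ↦ ∏_{j=1}^n (w_j − ζ_j)⁻¹)(z) = 0 for every z ∈ G₂ and every ζ ∈ ℂⁿ with |ζ_j| ≥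 ρ_j for all j, then A f = 0 on G₂ for every f holomorphic on G₁. -/
open Complex Metric Set Finset intervalIntegral

namespace Stmt6


/-- Uniform Riemann-sum approximation for a continuous parameterized integrand. -/
lemma riemann {α : Type*} [MetricSpace α] {X : Set α} (hX : IsCompact X)
    (G : ℝ → α → ℂ)
    (hG : ContinuousOn (fun p : ℝ × α => G p.1 p.2) (Set.Icc 0 (2 * Real.pi) ×ˢ X))
    {ε : ℝ} (hε : 0 < ε) :
    ∃ N : ℕ, 0 < N ∧ ∀ x ∈ X,
      ‖(∫ θ in (0:ℝ)..(2 * Real.pi), G θ x)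
        - ∑ k ∈ Finset.range N, (2 * Real.pi / N) • G (2 * Real.pi * k / N) x‖ ≤ ε := by
  have hπ := Real.two_pi_pos
  set T := 2 * Real.pi with hT
  have hcomp : IsCompact (Set.Icc (0:ℝ) T ×ˢ X) := (isCompact_Icc).prod hX
  have hu := hcomp.uniformContinuousOn_of_continuous hG
  rw [Metric.uniformContinuousOn_iff] at hu
  have hε' : 0 < ε / (T + 1) := by positivity
  obtain ⟨δ, hδ, H⟩ := hu _ hε'
  obtain ⟨N, hN⟩ := exists_nat_gt (T / δ)
  have hN0 : 0 < N := by
    have h1 : (0:ℝ) < T / δ := by positivity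
    exact_mod_cast Nat.cast_pos.mp (lt_of_le_of_lt h1.le hN)
  have hNR : (0:ℝ) < N := by exact_mod_cast hN0
  have hTN : T / N < δ := by
    rw [div_lt_iff₀ hNR]
    rw [div_lt_iff₀ hδ] at hN
    linarith
  refine ⟨N, hN0, fun x hx => ?_⟩
  set a : ℕ → ℝ := fun k => T * k / N with ha
  have ha0 : a 0 = 0 := by simp [ha]
  have haN : a N = T := by simp only [ha]; exact mul_div_cancel_right₀ T hNR.ne'
  have hstep : ∀ k, a (k + 1) - a k = T / N := by
    intro k; rw [ha]; push_cast; field_simp; ring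
  have hmono : ∀ k, a k ≤ a (k + 1) := by
    intro k
    have h1 := hstep k
    have h2 : 0 ≤ T / N := by positivity
    linarith
  have hrange : ∀ k, k + 1 ≤ N → Set.uIcc (a k) (a (k + 1)) ⊆ Set.Icc 0 T := by
    intro k hk
    rw [Set.uIcc_of_le (hmono k)]
    apply Set.Icc_subset_Icc
    · rw [ha]; positivity
    · rw [← haN]
      simp only [ha]
      have hkN : ((k:ℝ) + 1) ≤ N := by exact_mod_cast hk
      have : 0 ≤ T := hπ.le
      rw [div_le_div_iff₀ hNR hNR]
      push_cast
      nlinarith [mul_le_mul_of_nonneg_left hkN (mul_nonneg hπ.le hNR.le)]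
  have hslice : ContinuousOn (fun θ => G θ x) (Set.Icc 0 T) := by
    have heq : (fun θ => G θ x) = (fun p : ℝ × α => G p.1 p.2) ∘ (fun θ => (θ, x)) := rfl
    rw [heq]
    exact hG.comp (Continuous.continuousOn (continuous_id.prodMk continuous_const))
      (fun θ hθ => Set.mk_mem_prod hθ hx)
  have hint : ∀ k, k + 1 ≤ N → IntervalIntegrable (fun θ => G θ x) MeasureTheory.volume
      (a k) (a (k + 1)) := by
    intro k hk
    exact (hslice.mono (hrange k hk)).intervalIntegrable
  have hsum := intervalIntegral.sum_integral_adjacent_intervals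
    (f := fun θ => G θ x) (μ := MeasureTheory.volume) (a := a) (n := N)
    (fun k hk => hint k hk)
  rw [ha0, haN] at hsum
  have hbound : ∀ k, k + 1 ≤ N →
      ‖(∫ θ in (a k)..(a (k+1)), G θ x) - (T / N) • G (a k) x‖ ≤ ε / (T + 1) * (T / N) := by
    intro k hk
    have hconst : (T / N) • G (a k) x = ∫ _ in (a k)..(a (k+1)), G (a k) x := by
      rw [intervalIntegral.integral_const, hstep k]
    rw [hconst, ← intervalIntegral.integral_sub (hint k hk) intervalIntegrable_const]
    have hb := intervalIntegral.norm_integral_le_of_norm_le_const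
      (f := fun θ => G θ x - G (a k) x) (a := a k) (b := a (k+1)) (C := ε / (T + 1)) ?_
    · calc _ ≤ ε / (T + 1) * |a (k+1) - a k| := hb
        _ = ε / (T + 1) * (T / N) := by
            rw [hstep k, _root_.abs_of_pos (by positivity)]
    · intro θ hθ
      rw [Set.uIoc_of_le (hmono k)] at hθ
      have hθI : θ ∈ Set.Icc (0:ℝ) T :=
        (hrange k hk) (by rw [Set.uIcc_of_le (hmono k)]; exact ⟨hθ.1.le, hθ.2⟩)
      have hakI : a k ∈ Set.Icc (0:ℝ) T :=
        (hrange k hk) (by rw [Set.uIcc_of_le (hmono k)]; exact ⟨le_refl _, hmono k⟩)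
      have hdist : dist (θ, x) ((a k, x) : ℝ × α) < δ := by
        rw [Prod.dist_eq]
        simp only [dist_self]
        rw [max_eq_left dist_nonneg]
        rw [Real.dist_eq, _root_.abs_of_nonneg (by linarith [hθ.1])]
        calc θ - a k ≤ a (k+1) - a k := by linarith [hθ.2]
          _ = T / N := hstep k
          _ < δ := hTN
      have := H (θ, x) (Set.mk_mem_prod hθI hx) ((a k), x) (Set.mk_mem_prod hakI hx) hdist
      rw [dist_eq_norm] at this
      exact this.le
  have key : ‖(∫ θ in (0:ℝ)..T, G θ x) - ∑ k ∈ Finset.range N, (T / N) • G (a k) x‖ ≤ ε := by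
    rw [← hsum, ← Finset.sum_sub_distrib]
    calc ‖∑ k ∈ Finset.range N, ((∫ θ in (a k)..(a (k+1)), G θ x) - (T / N) • G (a k) x)‖
        ≤ ∑ k ∈ Finset.range N, ‖(∫ θ in (a k)..(a (k+1)), G θ x) - (T / N) • G (a k) x‖ :=
          norm_sum_le _ _
      _ ≤ ∑ _k ∈ Finset.range N, ε / (T + 1) * (T / N) :=
          Finset.sum_le_sum (fun k hk => hbound k (Finset.mem_range.mp hk))
      _ = N * (ε / (T + 1) * (T / N)) := by
          rw [Finset.sum_const, Finset.card_range, nsmul_eq_mul]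
      _ ≤ ε := by
          have hTN0 : T / N ≤ T / N := le_refl _
          have : (N:ℝ) * (ε / (T + 1) * (T / N)) = ε * T / (T + 1) := by
            field_simp
          rw [this, div_le_iff₀ (by positivity)]
          nlinarith
  exact key



lemma cauchy {s s' : ℝ} (hs : 0 < s) (hss : s < s') {F : ℂ → ℂ}
    (hF : DifferentiableOn ℂ F (Metric.ball 0 s')) {u : ℂ} (hu : ‖u‖ < s) :
    F u = ((2 * Real.pi : ℝ) : ℂ)⁻¹ * ∫ θ in (0:ℝ)..(2 * Real.pi),
      circleMap 0 s θ * ((circleMap 0 s θ - u)⁻¹ * F (circleMap 0 s θ)) := by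
  have h1 : DiffContOnCl ℂ F (ball (0:ℂ) s) := by
    apply DifferentiableOn.diffContOnCl
    apply hF.mono
    rw [closure_ball (0:ℂ) hs.ne']
    exact closedBall_subset_ball hss
  have hc := h1.circleIntegral_sub_inv_smul (w := u) (mem_ball_zero_iff.mpr hu)
  rw [circleIntegral] at hc
  simp only [deriv_circleMap, smul_eq_mul] at hc
  have h2 : (∫ θ in (0:ℝ)..(2 * Real.pi),
        circleMap 0 s θ * I * ((circleMap 0 s θ - u)⁻¹ * F (circleMap 0 s θ)))
      = I * ∫ θ in (0:ℝ)..(2 * Real.pi),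
        circleMap 0 s θ * ((circleMap 0 s θ - u)⁻¹ * F (circleMap 0 s θ)) := by
    rw [← intervalIntegral.integral_const_mul]
    apply intervalIntegral.integral_congr
    intro θ _
    ring
  rw [h2] at hc
  have h3 : (2 * (Real.pi:ℂ) * I) * F u
      = I * (2 * (Real.pi:ℂ) * F u) := by ring
  rw [h3] at hc
  have h4 := mul_left_cancel₀ Complex.I_ne_zero hc
  rw [h4]
  have hpic : (Real.pi : ℂ) ≠ 0 := by exact_mod_cast Real.pi_ne_zero
  push_cast
  field_simp


variable {n : ℕ}

noncomputable def merge (m : ℕ) (ζ w : Fin n → ℂ) : Fin n → ℂ :=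
  fun j => if (j : ℕ) < m then ζ j else w j

noncomputable def pker (m : ℕ) (ζ w : Fin n → ℂ) : ℂ :=
  ∏ j ∈ Finset.univ.filter (fun j : Fin n => (j : ℕ) < m), (w j - ζ j)⁻¹

lemma merge_zero (ζ w : Fin n → ℂ) : merge 0 ζ w = w := by
  funext j; simp [merge]

lemma merge_all (ζ w : Fin n → ℂ) : merge n ζ w = ζ := by
  funext j; simp [merge, j.isLt]

lemma pker_zero (ζ w : Fin n → ℂ) : pker 0 ζ w = 1 := by
  simp [pker]

lemma pker_all (ζ w : Fin n → ℂ) : pker n ζ w = ∏ j, (w j - ζ j)⁻¹ := by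
  unfold pker
  rw [Finset.filter_true_of_mem (fun j _ => j.isLt)]

lemma merge_apply_self {m : ℕ} (hm : m < n) (ζ w : Fin n → ℂ) :
    merge m ζ w ⟨m, hm⟩ = w ⟨m, hm⟩ := by
  simp [merge]

lemma merge_succ {m : ℕ} (hm : m < n) (ζ w : Fin n → ℂ) (u : ℂ) :
    merge (m + 1) (Function.update ζ ⟨m, hm⟩ u) w
      = Function.update (merge m ζ w) ⟨m, hm⟩ u := by
  funext j
  simp only [merge, Function.update_apply]
  by_cases hj : j = (⟨m, hm⟩ : Fin n)
  · subst hj; simp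
  · have hne : (j : ℕ) ≠ m := fun h => hj (Fin.ext h)
    simp only [hj, if_false]
    by_cases h2 : (j : ℕ) < m
    · rw [if_pos h2, if_pos (by omega)]
    · rw [if_neg h2, if_neg (by omega)]

lemma filter_succ {m : ℕ} (hm : m < n) :
    Finset.univ.filter (fun j : Fin n => (j : ℕ) < m + 1)
      = insert (⟨m, hm⟩ : Fin n) (Finset.univ.filter (fun j : Fin n => (j : ℕ) < m)) := by
  ext j
  simp only [Finset.mem_filter, Finset.mem_insert, Finset.mem_univ, true_and, Fin.ext_iff]
  omega

lemma pker_succ {m : ℕ} (hm : m < n) (ζ w : Fin n → ℂ) (u : ℂ) :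
    pker (m + 1) (Function.update ζ ⟨m, hm⟩ u) w
      = (w ⟨m, hm⟩ - u)⁻¹ * pker m ζ w := by
  unfold pker
  rw [filter_succ hm, Finset.prod_insert (by simp)]
  congr 1
  · simp
  · refine Finset.prod_congr rfl fun j hj => ?_
    have hlt : (j : ℕ) < m := (Finset.mem_filter.mp hj).2
    have hne : j ≠ (⟨m, hm⟩ : Fin n) := by
      intro h; rw [h] at hlt; simp at hlt
    rw [Function.update_of_ne hne]


lemma gen (n : ℕ) (ρ σ : Fin n → ℝ) (hρ : ∀ j, 0 < ρ j) {c : ℝ} (hc0 : 0 ≤ c) (hc1 : c < 1)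
    (hσ : ∀ j, ρ j < σ j) (F : (Fin n → ℂ) → ℂ)
    (hF : DifferentiableOn ℂ F {w : Fin n → ℂ | ∀ j, ‖w j‖ < σ j}) :
    ∀ (k : ℕ) (ζ : Fin n → ℂ), (∀ j, ‖ζ j‖ = ρ j) → ∀ ε : ℝ, 0 < ε →
      ∃ g ∈ Submodule.span ℂ {g : (Fin n → ℂ) → ℂ |
          ∃ ξ : Fin n → ℂ, (∀ j, ρ j ≤ ‖ξ j‖) ∧ g = fun w => ∏ j, (w j - ξ j)⁻¹},
        ∀ w : Fin n → ℂ, (∀ j, ‖w j‖ ≤ c * ρ j) →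
          ‖pker (n - k) ζ w * F (merge (n - k) ζ w) - g w‖ ≤ ε := by
  have hQ : IsCompact {w : Fin n → ℂ | ∀ j, ‖w j‖ ≤ c * ρ j} := by
    have hQeq : {w : Fin n → ℂ | ∀ j, ‖w j‖ ≤ c * ρ j}
        = Set.pi Set.univ (fun j => closedBall (0:ℂ) (c * ρ j)) := by
      ext w; simp [Set.mem_pi, mem_closedBall_zero_iff]
    rw [hQeq]
    exact isCompact_univ_pi (fun j => isCompact_closedBall _ _)
  intro k
  induction k with
  | zero =>
    intro ζ hζ ε hε
    refine ⟨F ζ • (fun w => ∏ j, (w j - ζ j)⁻¹), ?_, ?_⟩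
    · exact Submodule.smul_mem _ _ (Submodule.subset_span ⟨ζ, fun j => (hζ j).ge, rfl⟩)
    · intro w _
      have h1 : pker (n - 0) ζ w * F (merge (n - 0) ζ w)
          = (F ζ • (fun w => ∏ j, (w j - ζ j)⁻¹)) w := by
        simp only [Nat.sub_zero, pker_all, merge_all, Pi.smul_apply, smul_eq_mul]
        ring
      rw [h1, sub_self, norm_zero]
      exact hε.le
  | succ k IH =>
    intro ζ hζ ε hε
    by_cases hk : n ≤ k
    · have hsub : n - (k + 1) = n - k := by omega
      rw [hsub]; exact IH ζ hζ ε hε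
    · push_neg at hk
      set m : ℕ := n - (k + 1) with hm_def
      have hm : m < n := by omega
      have hmk : m + 1 = n - k := by omega
      set m' : Fin n := (⟨m, hm⟩ : Fin n) with hm'_def
      set R : ℝ := ρ m' with hR_def
      have hR : 0 < R := hρ m'
      have hπ := Real.two_pi_pos
      have hnorm_cm : ∀ θ : ℝ, ‖circleMap 0 R θ‖ = R := by
        intro θ; rw [norm_circleMap_zero, abs_of_pos hR]
      -- bound on the partial kernel
      set B : ℝ := ∏ j ∈ Finset.univ.filter (fun j : Fin n => (j : ℕ) < m),
        ((1 - c) * ρ j)⁻¹ with hB_def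
      have hB : 0 < B := Finset.prod_pos fun j _ => by
        have : 0 < (1 - c) * ρ j := mul_pos (by linarith) (hρ j)
        positivity
    
      have hpker_bound : ∀ w : Fin n → ℂ, (∀ j, ‖w j‖ ≤ c * ρ j) → ‖pker m ζ w‖ ≤ B := by
        intro w hw
        unfold pker
        rw [norm_prod]
        apply Finset.prod_le_prod (fun j _ => norm_nonneg _)
        intro j _
        rw [norm_inv]
        apply inv_anti₀ (mul_pos (by linarith : (0:ℝ) < 1 - c) (hρ j))
        have h1 : ‖ζ j‖ - ‖w j‖ ≤ ‖w j - ζ j‖ := by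
          rw [norm_sub_rev]; exact norm_sub_norm_le _ _
        have h2 := hw j
        have h3 := hζ j
        nlinarith
      -- the argument of F always stays in the polydisc of radii σ
      have hupdate_mem : ∀ u : ℂ, ‖u‖ < σ m' → ∀ w : Fin n → ℂ, (∀ j, ‖w j‖ ≤ c * ρ j) →
          Function.update (merge m ζ w) m' u ∈ {w : Fin n → ℂ | ∀ j, ‖w j‖ < σ j} := by
        intro u hu w hw j
        by_cases hj : j = m'
        · subst hj; simpa [Function.update_self] using hu
        · rw [Function.update_of_ne hj]
          simp only [merge]
          by_cases h2 : (j : ℕ) < m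
          · rw [if_pos h2, hζ j]; exact hσ j
          · rw [if_neg h2]
            calc ‖w j‖ ≤ c * ρ j := hw j
              _ ≤ 1 * ρ j := by nlinarith [hρ j]
              _ < σ j := by rw [one_mul]; exact hσ j
      -- the parameterized integrand
      set G : ℝ → (Fin n → ℂ) → ℂ := fun θ w =>
        circleMap 0 R θ * ((circleMap 0 R θ - w m')⁻¹
          * F (Function.update (merge m ζ w) m' (circleMap 0 R θ))) with hG_def
      -- Cauchy formula
      have hcauchyA : ∀ w : Fin n → ℂ, (∀ j, ‖w j‖ ≤ c * ρ j) →
          F (merge m ζ w) = ((2 * Real.pi : ℝ) : ℂ)⁻¹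
            * ∫ θ in (0:ℝ)..(2 * Real.pi), G θ w := by
        intro w hw
        have hupd_diff : Differentiable ℂ (fun u : ℂ => Function.update (merge m ζ w) m' u) := by
          rw [differentiable_pi]
          intro j
          by_cases hj : j = m'
          · subst hj; simp only [Function.update_self]; exact differentiable_id
          · simp only [Function.update_of_ne hj]; exact differentiable_const _
        have hF1 : DifferentiableOn ℂ (fun u : ℂ => F (Function.update (merge m ζ w) m' u))
            (ball (0:ℂ) (σ m')) := by
          have := DifferentiableOn.comp (t := {w : Fin n → ℂ | ∀ j, ‖w j‖ < σ j}) hF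
            hupd_diff.differentiableOn
            (fun u hu => hupdate_mem u (mem_ball_zero_iff.mp hu) w hw)
          exact this
        have hwm : ‖w m'‖ < R := by
          calc ‖w m'‖ ≤ c * ρ m' := hw m'
            _ < ρ m' := by nlinarith [hρ m']
        have hcc := cauchy (s := R) (s' := σ m') hR (hσ m') hF1 hwm
        have hupdate_self : Function.update (merge m ζ w) m' (w m') = merge m ζ w := by
          rw [← merge_apply_self hm ζ w]
          exact Function.update_eq_self _ _
        rw [hupdate_self] at hcc
        exact hcc
      -- continuity of the integrand
      have hc1' : Continuous fun p : ℝ × (Fin n → ℂ) => circleMap 0 R p.1 :=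
        (continuous_circleMap 0 R).comp continuous_fst
      have hc2 : Continuous fun p : ℝ × (Fin n → ℂ) => p.2 m' :=
        (continuous_apply m').comp continuous_snd
      have hmapc : Continuous fun p : ℝ × (Fin n → ℂ) =>
          Function.update (merge m ζ p.2) m' (circleMap 0 R p.1) := by
        apply continuous_pi
        intro j
        by_cases hj : j = m'
        · subst hj
          simpa only [Function.update_self] using hc1'
        · simp only [Function.update_of_ne hj, merge]
          by_cases h2 : (j : ℕ) < m
          · simp only [if_pos h2]; exact continuous_const
          · simp only [if_neg h2]; exact (continuous_apply j).comp continuous_snd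
      have hden : ∀ p ∈ (Set.Icc (0:ℝ) (2 * Real.pi) ×ˢ {w : Fin n → ℂ | ∀ j, ‖w j‖ ≤ c * ρ j}),
          circleMap 0 R p.1 - p.2 m' ≠ 0 := by
        intro p hp heq
        have h1 : circleMap 0 R p.1 = p.2 m' := by
          have := sub_eq_zero.mp heq; exact this
        have h2 : ‖p.2 m'‖ ≤ c * ρ m' := hp.2 m'
        rw [← h1, hnorm_cm] at h2
        nlinarith [hρ m']
      have hGcont : ContinuousOn (fun p : ℝ × (Fin n → ℂ) => G p.1 p.2)
          (Set.Icc (0:ℝ) (2 * Real.pi) ×ˢ {w : Fin n → ℂ | ∀ j, ‖w j‖ ≤ c * ρ j}) := by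
        apply ContinuousOn.mul hc1'.continuousOn
        apply ContinuousOn.mul
        · exact ((hc1'.sub hc2).continuousOn).inv₀ hden
        · apply ContinuousOn.comp hF.continuousOn hmapc.continuousOn
          intro p hp
          exact hupdate_mem _ (by rw [hnorm_cm]; exact hσ m') p.2 hp.2
      -- Riemann sums
      have hε1 : 0 < ε / 2 / (B + 1) := by positivity
      obtain ⟨N, hN0, hRS⟩ := riemann hQ G hGcont hε1
      have hNR : (0:ℝ) < N := by exact_mod_cast hN0
      set u : ℕ → ℂ := fun i => circleMap 0 R (2 * Real.pi * i / N) with hu_def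
      set ζi : ℕ → (Fin n → ℂ) := fun i => Function.update ζ m' (u i) with hζi_def
      have hζi_norm : ∀ i, ∀ j, ‖ζi i j‖ = ρ j := by
        intro i j
        by_cases hj : j = m'
        · subst hj; rw [hζi_def]; simp only [Function.update_self]; exact hnorm_cm _
        · rw [hζi_def]; simp only [Function.update_of_ne hj]; exact hζ j
      have hε2 : 0 < ε / 2 / (R + 1) := by positivity
      -- apply the inductive hypothesis to each node
      have IH' : ∀ i : ℕ, ∃ g ∈ Submodule.span ℂ {g : (Fin n → ℂ) → ℂ |
          ∃ ξ : Fin n → ℂ, (∀ j, ρ j ≤ ‖ξ j‖) ∧ g = fun w => ∏ j, (w j - ξ j)⁻¹},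
          ∀ w : Fin n → ℂ, (∀ j, ‖w j‖ ≤ c * ρ j) →
            ‖pker (m + 1) (ζi i) w * F (merge (m + 1) (ζi i) w) - g w‖ ≤ ε / 2 / (R + 1) := by
        intro i
        have := IH (ζi i) (hζi_norm i) _ hε2
        rw [← hmk] at this
        exact this
      choose g hgmem hgapp using IH'
      set inv2π : ℂ := ((2 * Real.pi : ℝ) : ℂ)⁻¹ with hinv_def
      set coeff : ℕ → ℂ := fun i => -(inv2π * ((2 * Real.pi / N : ℝ) : ℂ) * u i) with hcoeff_def
      refine ⟨∑ i ∈ Finset.range N, coeff i • g i, ?_, ?_⟩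
      · exact Submodule.sum_mem _ fun i _ => Submodule.smul_mem _ _ (hgmem i)
      · intro w hw
        have e1 : (∑ i ∈ Finset.range N, coeff i • g i) w
            = ∑ i ∈ Finset.range N, coeff i * g i w := by
          simp [Finset.sum_apply]
        have hswap : ∀ a b : ℂ, (a - b)⁻¹ = -((b - a)⁻¹) := by
          intro a b
          rw [show a - b = -(b - a) from by ring, inv_neg]
        have hGsum : ∀ i : ℕ,
            coeff i * (pker (m + 1) (ζi i) w * F (merge (m + 1) (ζi i) w))
              = pker m ζ w * inv2π * ((2 * Real.pi / N : ℝ) • G (2 * Real.pi * i / N) w) := by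
          intro i
          rw [hζi_def]
          simp only []
          rw [pker_succ hm, merge_succ hm, hG_def]
          simp only []
          rw [Complex.real_smul]
          rw [hswap (circleMap 0 R (2 * Real.pi * ↑i / ↑N)) (w m')]
          rw [hcoeff_def, hu_def]
          push_cast
          ring
        have hstep1 : pker m ζ w * F (merge m ζ w) - (∑ i ∈ Finset.range N, coeff i • g i) w
            = pker m ζ w * inv2π
                * ((∫ θ in (0:ℝ)..(2 * Real.pi), G θ w)
                    - ∑ i ∈ Finset.range N, (2 * Real.pi / N : ℝ) • G (2 * Real.pi * i / N) w)
              + ∑ i ∈ Finset.range N,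
                  coeff i * ((pker (m + 1) (ζi i) w * F (merge (m + 1) (ζi i) w)) - g i w) := by
          rw [e1, hcauchyA w hw]
          have hsum1 : (∑ i ∈ Finset.range N,
              coeff i * ((pker (m + 1) (ζi i) w * F (merge (m + 1) (ζi i) w)) - g i w))
              = pker m ζ w * inv2π
                  * (∑ i ∈ Finset.range N, (2 * Real.pi / N : ℝ) • G (2 * Real.pi * i / N) w)
                - ∑ i ∈ Finset.range N, coeff i * g i w := by
            rw [Finset.mul_sum, ← Finset.sum_sub_distrib]
            exact Finset.sum_congr rfl fun i _ => by rw [← hGsum i]; ring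
          rw [hsum1]
          ring
        rw [hstep1]
        have h1 : ‖pker m ζ w * inv2π
            * ((∫ θ in (0:ℝ)..(2 * Real.pi), G θ w)
              - ∑ i ∈ Finset.range N, (2 * Real.pi / N : ℝ) • G (2 * Real.pi * i / N) w)‖
            ≤ ε / 2 := by
          rw [norm_mul, norm_mul]
          have hInv : ‖inv2π‖ ≤ 1 := by
            rw [hinv_def, norm_inv, Complex.norm_real, Real.norm_eq_abs, abs_of_pos hπ]
            have h2π : (1:ℝ) ≤ 2 * Real.pi := by nlinarith [Real.pi_gt_three]
            calc (2 * Real.pi)⁻¹ ≤ 1⁻¹ := inv_anti₀ one_pos h2π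
              _ = 1 := inv_one
          have hq : (ε / 2 / (B + 1)) * (B + 1) = ε / 2 :=
            div_mul_cancel₀ _ (ne_of_gt (by positivity))
          have hq0 : 0 ≤ ε / 2 / (B + 1) := by positivity
          calc ‖pker m ζ w‖ * ‖inv2π‖ * ‖_‖
              ≤ B * 1 * (ε / 2 / (B + 1)) := by
                gcongr <;>
                  first
                    | exact hpker_bound w hw
                    | exact hInv
                    | exact hRS w hw
            _ = B * (ε / 2 / (B + 1)) := by ring
            _ ≤ ε / 2 := by nlinarith
        have h2 : ‖∑ i ∈ Finset.range N,
            coeff i * ((pker (m + 1) (ζi i) w * F (merge (m + 1) (ζi i) w)) - g i w)‖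
            ≤ ε / 2 := by
          have hcoeff_bound : ∀ i : ℕ, ‖coeff i‖ ≤ R / N := by
            intro i
            rw [hcoeff_def]
            simp only []
            rw [norm_neg, norm_mul, norm_mul, hinv_def, norm_inv, Complex.norm_real,
              Complex.norm_real, Real.norm_eq_abs, Real.norm_eq_abs, abs_of_pos hπ,
              _root_.abs_of_nonneg (by positivity : (0:ℝ) ≤ 2 * Real.pi / N), hu_def]
            simp only []
            rw [hnorm_cm]
            apply le_of_eq
            field_simp
          have hq : (ε / 2 / (R + 1)) * (R + 1) = ε / 2 :=
            div_mul_cancel₀ _ (ne_of_gt (by positivity))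
          have hq0 : 0 ≤ ε / 2 / (R + 1) := by positivity
          calc ‖∑ i ∈ Finset.range N,
              coeff i * ((pker (m + 1) (ζi i) w * F (merge (m + 1) (ζi i) w)) - g i w)‖
              ≤ ∑ i ∈ Finset.range N,
                ‖coeff i * ((pker (m + 1) (ζi i) w * F (merge (m + 1) (ζi i) w)) - g i w)‖ :=
                norm_sum_le _ _
            _ ≤ ∑ _i ∈ Finset.range N, (R / N) * (ε / 2 / (R + 1)) := by
                apply Finset.sum_le_sum
                intro i _
                rw [norm_mul]
                exact mul_le_mul (hcoeff_bound i) (hgapp i w hw) (norm_nonneg _)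
                  (by positivity)
            _ = N * ((R / N) * (ε / 2 / (R + 1))) := by
                rw [Finset.sum_const, Finset.card_range, nsmul_eq_mul]
            _ = R * (ε / 2 / (R + 1)) := by field_simp
            _ ≤ ε / 2 := by nlinarith
        calc ‖_ + _‖ ≤ _ := norm_add_le _ _
          _ ≤ ε / 2 + ε / 2 := add_le_add h1 h2
          _ = ε := by ring


lemma key (n : ℕ) (ρ : Fin n → ℝ) (hρ : ∀ j, 0 < ρ j) {c : ℝ} (hc0 : 0 ≤ c) (hc1 : c < 1)
    (f : (Fin n → ℂ) → ℂ) (hf : DifferentiableOn ℂ f {w : Fin n → ℂ | ∀ j, ‖w j‖ < ρ j})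
    {ε : ℝ} (hε : 0 < ε) :
    ∃ g ∈ Submodule.span ℂ {g : (Fin n → ℂ) → ℂ |
        ∃ ξ : Fin n → ℂ, (∀ j, ρ j ≤ ‖ξ j‖) ∧ g = fun w => ∏ j, (w j - ξ j)⁻¹},
      ∀ w : Fin n → ℂ, (∀ j, ‖w j‖ ≤ c * ρ j) → ‖f w - g w‖ ≤ ε := by
  have hQ : IsCompact {w : Fin n → ℂ | ∀ j, ‖w j‖ ≤ c * ρ j} := by
    have hQeq : {w : Fin n → ℂ | ∀ j, ‖w j‖ ≤ c * ρ j}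
        = Set.pi Set.univ (fun j => closedBall (0:ℂ) (c * ρ j)) := by
      ext w; simp [Set.mem_pi, mem_closedBall_zero_iff]
    rw [hQeq]
    exact isCompact_univ_pi (fun j => isCompact_closedBall _ _)
  have hQP : {w : Fin n → ℂ | ∀ j, ‖w j‖ ≤ c * ρ j} ⊆ {w : Fin n → ℂ | ∀ j, ‖w j‖ < ρ j} := by
    intro w hw j
    calc ‖w j‖ ≤ c * ρ j := hw j
      _ < ρ j := by nlinarith [hρ j]
  have hcont : ContinuousOn f {w : Fin n → ℂ | ∀ j, ‖w j‖ ≤ c * ρ j} :=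
    (hf.continuousOn).mono hQP
  have huc := hQ.uniformContinuousOn_of_continuous hcont
  rw [Metric.uniformContinuousOn_iff] at huc
  obtain ⟨δ, hδ, H⟩ := huc (ε/2) (by positivity)
  set S : ℝ := ∑ j, ρ j with hS_def
  have hS : 0 ≤ S := Finset.sum_nonneg fun j _ => (hρ j).le
  have hwnorm : ∀ w : Fin n → ℂ, (∀ j, ‖w j‖ ≤ c * ρ j) → ‖w‖ ≤ c * S := by
    intro w hw
    refine (pi_norm_le_iff_of_nonneg (by positivity)).mpr fun j => ?_
    calc ‖w j‖ ≤ c * ρ j := hw j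
      _ ≤ c * S := by
          apply mul_le_mul_of_nonneg_left _ hc0
          exact Finset.single_le_sum (fun i _ => (hρ i).le) (Finset.mem_univ j)
  set t : ℝ := max (1/2 : ℝ) (1 - δ / (c * S + 1)) with ht_def
  have ht0 : 0 < t := lt_of_lt_of_le (by norm_num) (le_max_left _ _)
  have ht1 : t < 1 := by
    apply max_lt (by norm_num)
    have : 0 < δ / (c * S + 1) := by positivity
    linarith
  have htd : 1 - t ≤ δ / (c * S + 1) := by
    have := le_max_right (1/2 : ℝ) (1 - δ / (c * S + 1))
    linarith
  have hΦQ : ∀ w : Fin n → ℂ, (∀ j, ‖w j‖ ≤ c * ρ j) → ∀ j, ‖(((t:ℝ):ℂ) • w) j‖ ≤ c * ρ j := by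
    intro w hw j
    rw [Pi.smul_apply, norm_smul, Complex.norm_real, Real.norm_eq_abs, _root_.abs_of_pos ht0]
    calc t * ‖w j‖ ≤ 1 * ‖w j‖ := by nlinarith [norm_nonneg (w j)]
      _ = ‖w j‖ := one_mul _
      _ ≤ c * ρ j := hw j
  have hclose : ∀ w : Fin n → ℂ, (∀ j, ‖w j‖ ≤ c * ρ j) →
      ‖f w - f (((t:ℝ):ℂ) • w)‖ ≤ ε / 2 := by
    intro w hw
    have hd : dist w (((t:ℝ):ℂ) • w) < δ := by
      rw [dist_eq_norm]
      have heq : w - ((t:ℝ):ℂ) • w = (((1 - t : ℝ) : ℂ)) • w := by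
        push_cast
        rw [sub_smul, one_smul]
      rw [heq, norm_smul, Complex.norm_real, Real.norm_eq_abs,
        _root_.abs_of_nonneg (by linarith : (0:ℝ) ≤ 1 - t)]
      calc (1 - t) * ‖w‖ ≤ (δ / (c * S + 1)) * (c * S) := by
            apply mul_le_mul htd (hwnorm w hw) (norm_nonneg _) (by positivity)
        _ < δ := by
            rw [div_mul_eq_mul_div, div_lt_iff₀ (by positivity)]
            nlinarith
    have := H w hw (((t:ℝ):ℂ) • w) (hΦQ w hw) hd
    rw [dist_eq_norm] at this
    exact this.le
  set σ : Fin n → ℝ := fun j => ρ j / t with hσ_def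
  have hσ : ∀ j, ρ j < σ j := by
    intro j
    rw [hσ_def]
    rw [lt_div_iff₀ ht0]
    nlinarith [hρ j]
  set F : (Fin n → ℂ) → ℂ := fun w => f (((t:ℝ):ℂ) • w) with hF_def
  have hFd : DifferentiableOn ℂ F {w : Fin n → ℂ | ∀ j, ‖w j‖ < σ j} := by
    apply DifferentiableOn.comp (t := {w : Fin n → ℂ | ∀ j, ‖w j‖ < ρ j}) hf
      ((differentiable_id.const_smul (((t:ℝ):ℂ))).differentiableOn)
    intro w hw j
    have hre : (fun y : Fin n → ℂ => ((t:ℝ):ℂ) • id y) w j = ((t:ℝ):ℂ) * w j := rfl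
    show ‖((t:ℝ):ℂ) * w j‖ < ρ j
    rw [norm_mul, Complex.norm_real, Real.norm_eq_abs, _root_.abs_of_pos ht0]
    calc t * ‖w j‖ < t * σ j := by
          apply mul_lt_mul_of_pos_left (hw j) ht0
      _ = ρ j := by rw [hσ_def]; field_simp
  obtain ⟨g, hgmem, hgapp⟩ := gen n ρ σ hρ hc0 hc1 hσ F hFd n
    (fun j => ((ρ j : ℝ) : ℂ))
    (fun j => by rw [Complex.norm_real, Real.norm_eq_abs, _root_.abs_of_pos (hρ j)])
    (ε/2) (by positivity)
  refine ⟨g, hgmem, fun w hw => ?_⟩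
  have happ := hgapp w hw
  rw [Nat.sub_self, pker_zero, merge_zero, one_mul] at happ
  calc ‖f w - g w‖ ≤ ‖f w - F w‖ + ‖F w - g w‖ := by
        have := dist_triangle (f w) (F w) (g w)
        simpa [dist_eq_norm] using this
    _ ≤ ε / 2 + ε / 2 := add_le_add (hclose w hw) happ
    _ = ε := by ring

end Stmt6

/-- A bounded operator `A` from `H(P(ρ))` to `H(G₂)` whose Cauchy kernel
`A(w ↦ ∏ⱼ (wⱼ - ζⱼ)⁻¹)` vanishes on `G₂` for all `ζ` with `|ζⱼ| ≥ ρⱼ` is zero, i.e.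
`A f = 0` on `G₂` for every `f` holomorphic on the polydisc `P(ρ)`. -/
theorem stmt_6 (n : ℕ) (ρ : Fin n → ℝ) (hρ : ∀ j, 0 < ρ j)
    (G2 : Set (Fin n → ℂ)) (hG2 : IsOpen G2) (hG2ne : G2.Nonempty)
    (A : ((Fin n → ℂ) → ℂ) →ₗ[ℂ] ((Fin n → ℂ) → ℂ))
    (hA1 : ∀ f : (Fin n → ℂ) → ℂ,
      DifferentiableOn ℂ f {z : Fin n → ℂ | ∀ j, ‖z j‖ < ρ j} →
        DifferentiableOn ℂ (A f) G2)
    (hA2 : ∀ K : Set (Fin n → ℂ), IsCompact K → K ⊆ G2 →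
      ∃ (L : Set (Fin n → ℂ)) (C : ℝ), IsCompact L ∧
        L ⊆ {z : Fin n → ℂ | ∀ j, ‖z j‖ < ρ j} ∧ 0 < C ∧
        ∀ f : (Fin n → ℂ) → ℂ,
          DifferentiableOn ℂ f {z : Fin n → ℂ | ∀ j, ‖z j‖ < ρ j} →
          (⨆ z ∈ K, ‖A f z‖) ≤ C * ⨆ z ∈ L, ‖f z‖)
    (hker : ∀ ζ : Fin n → ℂ, (∀ j, ρ j ≤ ‖ζ j‖) →
      ∀ z ∈ G2, A (fun w => ∏ j, (w j - ζ j)⁻¹) z = 0) :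
    ∀ f : (Fin n → ℂ) → ℂ,
      DifferentiableOn ℂ f {z : Fin n → ℂ | ∀ j, ‖z j‖ < ρ j} →
      ∀ z ∈ G2, A f z = 0 := by
  intro f hf z hz
  -- properties of elements of the kernel span
  have hspan : ∀ g ∈ Submodule.span ℂ {g : (Fin n → ℂ) → ℂ |
      ∃ ξ : Fin n → ℂ, (∀ j, ρ j ≤ ‖ξ j‖) ∧ g = fun w => ∏ j, (w j - ξ j)⁻¹},
      DifferentiableOn ℂ g {z : Fin n → ℂ | ∀ j, ‖z j‖ < ρ j} ∧ A g z = 0 := by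
    intro g hg
    induction hg using Submodule.span_induction with
    | mem x hx =>
      obtain ⟨ξ, hξ, rfl⟩ := hx
      constructor
      · have hfac : ∀ j : Fin n, DifferentiableOn ℂ (fun w : Fin n → ℂ => (w j - ξ j)⁻¹)
            {z : Fin n → ℂ | ∀ j, ‖z j‖ < ρ j} := by
          intro j
          apply DifferentiableOn.inv
          · exact (((ContinuousLinearMap.proj j :
              (Fin n → ℂ) →L[ℂ] ℂ).differentiable).sub_const (ξ j)).differentiableOn
          · intro w hw hzero
            have h1 : w j = ξ j := sub_eq_zero.mp hzero
            have h2 : ‖w j‖ < ρ j := hw j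
            rw [h1] at h2
            exact absurd (lt_of_lt_of_le h2 (hξ j)) (lt_irrefl _)
        have hall : ∀ s : Finset (Fin n), DifferentiableOn ℂ
            (fun w : Fin n → ℂ => ∏ j ∈ s, (w j - ξ j)⁻¹)
            {z : Fin n → ℂ | ∀ j, ‖z j‖ < ρ j} := by
          intro s
          induction s using Finset.induction with
          | empty => simpa using differentiableOn_const (1:ℂ)
          | insert a s' hnm ih =>
            have : (fun w : Fin n → ℂ => ∏ j ∈ insert a s', (w j - ξ j)⁻¹)
                = fun w => (w a - ξ a)⁻¹ * ∏ j ∈ s', (w j - ξ j)⁻¹ := by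
              funext w; rw [Finset.prod_insert hnm]
            rw [this]
            exact (hfac a).mul ih
        exact hall Finset.univ
      · exact hker ξ hξ z hz
    | zero =>
      constructor
      · exact differentiableOn_const 0
      · rw [map_zero]; rfl
    | add x y hx hy ihx ihy =>
      constructor
      · exact ihx.1.add ihy.1
      · rw [map_add]
        have : (A x + A y) z = A x z + A y z := rfl
        rw [this, ihx.2, ihy.2, add_zero]
    | smul a x hx ihx =>
      constructor
      · exact ihx.1.const_smul a
      · rw [map_smul]
        have : (a • A x) z = a * A x z := rfl
        rw [this, ihx.2, mul_zero]
  obtain ⟨L, C, hL, hLP, hC, hbound⟩ := hA2 {z} isCompact_singleton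
    (Set.singleton_subset_iff.mpr hz)
  -- find c < 1 with L inside the closed polydisc of radii c * ρ
  have hc_exists : ∃ c : ℝ, 0 ≤ c ∧ c < 1 ∧ ∀ w ∈ L, ∀ j, ‖w j‖ ≤ c * ρ j := by
    rcases L.eq_empty_or_nonempty with hLe | hLne
    · exact ⟨1/2, by norm_num, by norm_num, by simp [hLe]⟩
    · set φ : (Fin n → ℂ) → ℝ := fun w => ‖fun j => ((ρ j : ℝ) : ℂ)⁻¹ * w j‖ with hφ_def
      have hφcont : Continuous φ := by
        apply Continuous.norm
        apply continuous_pi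
        intro j
        exact continuous_const.mul (continuous_apply j)
      obtain ⟨w₀, hw₀L, hw₀max⟩ := hL.exists_isMaxOn hLne hφcont.continuousOn
      have hφlt : ∀ w ∈ L, φ w < 1 := by
        intro w hw
        rw [hφ_def]
        refine (pi_norm_lt_iff one_pos).mpr fun j => ?_
        rw [norm_mul, norm_inv, Complex.norm_real, Real.norm_eq_abs,
          _root_.abs_of_pos (hρ j)]
        have h1 : ‖w j‖ < ρ j := hLP hw j
        rw [inv_mul_lt_iff₀ (hρ j)]
        simpa using h1
      refine ⟨max (1/2) (φ w₀), le_trans (by norm_num) (le_max_left _ _),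
        max_lt (by norm_num) (hφlt w₀ hw₀L), ?_⟩
      intro w hw j
      have h1 : ‖(fun j => ((ρ j : ℝ) : ℂ)⁻¹ * w j) j‖ ≤ φ w :=
        norm_le_pi_norm (fun j => ((ρ j : ℝ) : ℂ)⁻¹ * w j) j
      have h2 : φ w ≤ φ w₀ := hw₀max hw
      have h3 : φ w₀ ≤ max (1/2) (φ w₀) := le_max_right _ _
      have h4 : ‖((ρ j : ℝ) : ℂ)⁻¹ * w j‖ = (ρ j)⁻¹ * ‖w j‖ := by
        rw [norm_mul, norm_inv, Complex.norm_real, Real.norm_eq_abs,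
          _root_.abs_of_pos (hρ j)]
      simp only [] at h1
      rw [h4] at h1
      have h5 : (ρ j)⁻¹ * ‖w j‖ ≤ max (1/2) (φ w₀) := le_trans h1 (le_trans h2 h3)
      calc ‖w j‖ = ρ j * ((ρ j)⁻¹ * ‖w j‖) := by rw [← mul_assoc, mul_inv_cancel₀ (ne_of_gt (hρ j)), one_mul]
        _ ≤ ρ j * max (1/2) (φ w₀) := by
            apply mul_le_mul_of_nonneg_left h5 (hρ j).le
        _ = max (1/2) (φ w₀) * ρ j := by ring
  obtain ⟨c, hc0, hc1, hLQ⟩ := hc_exists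
  -- it suffices to bound the norm by C * ε for every ε
  have hmain : ∀ ε : ℝ, 0 < ε → ‖A f z‖ ≤ C * ε := by
    intro ε hε
    obtain ⟨g, hgmem, hgapp⟩ := Stmt6.key n ρ hρ hc0 hc1 f hf hε
    obtain ⟨hgdiff, hgz⟩ := hspan g hgmem
    have hfg : DifferentiableOn ℂ (f - g) {z : Fin n → ℂ | ∀ j, ‖z j‖ < ρ j} :=
      hf.sub hgdiff
    have hAfg : A (f - g) z = A f z := by
      rw [map_sub]
      have : (A f - A g) z = A f z - A g z := rfl
      rw [this, hgz, sub_zero]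
    have hb := hbound (f - g) hfg
    -- lower bound the sup over the singleton
    have hlow : ‖A (f - g) z‖ ≤ ⨆ w ∈ ({z} : Set (Fin n → ℂ)), ‖A (f - g) w‖ := by
      have hbdd : BddAbove (Set.range fun w => ⨆ _ : w ∈ ({z} : Set (Fin n → ℂ)),
          ‖A (f - g) w‖) := by
        refine ⟨max ‖A (f - g) z‖ 0, ?_⟩
        rintro y ⟨w, rfl⟩
        show (⨆ _ : w ∈ ({z} : Set (Fin n → ℂ)), ‖A (f - g) w‖) ≤ max ‖A (f - g) z‖ 0
        by_cases hw : w ∈ ({z} : Set (Fin n → ℂ))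
        · rw [ciSup_pos (f := fun _ => ‖A (f - g) w‖) hw]
          have hwz : w = z := hw
          rw [hwz]
          exact le_max_left _ _
        · have hem : IsEmpty (w ∈ ({z} : Set (Fin n → ℂ)) : Prop) := ⟨hw⟩
          rw [Real.iSup_of_isEmpty]
          exact le_max_right _ _
      calc ‖A (f - g) z‖ = ⨆ _ : z ∈ ({z} : Set (Fin n → ℂ)), ‖A (f - g) z‖ :=
            (ciSup_pos (f := fun _ => ‖A (f - g) z‖) (Set.mem_singleton z)).symm
        _ ≤ ⨆ w ∈ ({z} : Set (Fin n → ℂ)), ‖A (f - g) w‖ := le_ciSup hbdd z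
    -- upper bound the sup over L
    have hup : (⨆ w ∈ L, ‖(f - g) w‖) ≤ ε := by
      apply Real.iSup_le _ hε.le
      intro w
      apply Real.iSup_le _ hε.le
      intro hw
      have : (f - g) w = f w - g w := rfl
      rw [this]
      exact hgapp w (hLQ w hw)
    calc ‖A f z‖ = ‖A (f - g) z‖ := by rw [hAfg]
      _ ≤ ⨆ w ∈ ({z} : Set (Fin n → ℂ)), ‖A (f - g) w‖ := hlow
      _ ≤ C * ⨆ w ∈ L, ‖(f - g) w‖ := hb
      _ ≤ C * ε := mul_le_mul_of_nonneg_left hup hC.le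
  have hzero : ‖A f z‖ ≤ 0 := by
    apply le_of_forall_pos_le_add
    intro η hη
    have := hmain (η / C) (by positivity)
    rw [mul_div_cancel₀ _ (ne_of_gt hC)] at this
    linarith
  exact norm_le_zero_iff.mp hzero
end

section
/- Let ρ ∈ (ℝ_{>0})ⁿ, let k, m ∈ ℕⁿ be multi-indices with k ≠ 0, and let z ∈ ℂⁿ satisfy |z^k| < ρ^k. Then (z^k/(2πi)ⁿ) · ∯_{|ζ_j|=ρ_j} ζ^m / ((ζ^k − z^k) · ∏_{j=1}^n ζ_j) dζ equals z^m if there exists an integer l ≥ 1 with m = l·k, and equals 0 otherwise. -/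
open Real Complex MeasureTheory Set Function

lemma my_torusMap_ne_zero {n : ℕ} {ρ : Fin n → ℝ} (hρ : ∀ j, 0 < ρ j) (θ : Fin n → ℝ)
    (j : Fin n) : torusMap 0 ρ θ j ≠ 0 := by
  simp [torusMap, Complex.exp_ne_zero, (hρ j).ne']

lemma my_norm_torusMap {n : ℕ} {ρ : Fin n → ℝ} (hρ : ∀ j, 0 < ρ j) (θ : Fin n → ℝ)
    (j : Fin n) : ‖torusMap 0 ρ θ j‖ = ρ j := by
  simp [torusMap, map_mul, Complex.norm_exp_ofReal_mul_I,
    abs_of_pos (hρ j)]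

lemma my_continuous_torusMap {n : ℕ} (ρ : Fin n → ℝ) (j : Fin n) :
    Continuous fun θ : Fin n → ℝ => torusMap 0 ρ θ j := by
  simp only [torusMap, Pi.zero_apply, zero_add]
  exact continuous_const.mul (Complex.continuous_exp.comp
    ((Complex.continuous_ofReal.comp (continuous_apply j)).mul continuous_const))

lemma my_torusIntegrable_mono {n : ℕ} {ρ : Fin n → ℝ} (hρ : ∀ j, 0 < ρ j) (a : Fin n → ℤ) :
    TorusIntegrable (fun ζ : Fin n → ℂ => ∏ j, ζ j ^ a j) 0 ρ := by
  have hc : Continuous fun θ : Fin n → ℝ => ∏ j, torusMap 0 ρ θ j ^ a j :=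
    continuous_finset_prod _ fun j _ =>
      (my_continuous_torusMap ρ j).zpow₀ _ fun θ => Or.inl (my_torusMap_ne_zero hρ θ j)
  exact hc.continuousOn.integrableOn_compact isCompact_Icc

lemma my_circle_mono {R : ℝ} (hR : 0 < R) (a : ℤ) :
    (∮ z in C(0, R), z ^ a) = if a = -1 then (2 * π * Complex.I) else 0 := by
  split_ifs with h
  · subst h
    have := circleIntegral.integral_sub_inv_of_mem_ball
      (c := (0:ℂ)) (w := (0:ℂ)) (R := R) (by simpa using hR)
    simpa [zpow_neg_one] using this
  · simpa using circleIntegral.integral_sub_zpow_of_ne h 0 0 R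

lemma my_torus_mono (n : ℕ) (ρ : Fin n → ℝ) (hρ : ∀ j, 0 < ρ j) (a : Fin n → ℤ) :
    torusIntegral (fun ζ : Fin n → ℂ => ∏ j, ζ j ^ a j) 0 ρ
      = ∏ j, (if a j = -1 then (2 * π * Complex.I : ℂ) else 0) := by
  induction n with
  | zero => simp
  | succ n ih =>
    rw [torusIntegral_succ (my_torusIntegrable_mono hρ a)]
    have h0 : ((0 : Fin (n+1) → ℂ) ∘ Fin.succ) = 0 := rfl
    have h1 : ∀ x : ℂ,
        (∯ y in T((0 : Fin (n+1) → ℂ) ∘ Fin.succ, ρ ∘ Fin.succ),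
          ∏ j, Fin.cons x y j ^ a j)
        = x ^ a 0 * torusIntegral (fun y : Fin n → ℂ => ∏ j, y j ^ a (Fin.succ j)) 0
            (ρ ∘ Fin.succ) := by
      intro x
      rw [h0, ← torusIntegral_const_mul]
      congr 1
      funext y
      rw [Fin.prod_univ_succ]
      simp
    simp only [h1]
    have h2 : ∀ x : ℂ, x ^ a 0 * torusIntegral
          (fun y : Fin n → ℂ => ∏ j, y j ^ a (Fin.succ j)) 0 (ρ ∘ Fin.succ)
        = torusIntegral (fun y : Fin n → ℂ => ∏ j, y j ^ a (Fin.succ j)) 0 (ρ ∘ Fin.succ)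
          * x ^ a 0 := fun x => mul_comm _ _
    simp only [h2]
    simp only [Pi.zero_apply]
    have ih' : (∯ y in T(0, ρ ∘ Fin.succ), ∏ j : Fin n, y j ^ a j.succ)
        = ∏ j : Fin n, (if a j.succ = -1 then (2 * π * Complex.I : ℂ) else 0) :=
      ih (ρ ∘ Fin.succ) (fun j => hρ _) (fun j => a j.succ)
    rw [circleIntegral.integral_const_mul, my_circle_mono (hρ 0) (a 0), ih',
      Fin.prod_univ_succ]
    ring

lemma my_zpow_split {𝕜 : Type*} [Field 𝕜] {n : ℕ} (k m : Fin n → ℕ) (p : ℕ)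
    (x : Fin n → 𝕜) (hx : ∀ j, x j ≠ 0) :
    ∏ j, x j ^ ((m j : ℤ) - (p + 1) * k j - 1)
      = (∏ j, x j ^ m j) / ((∏ j, x j ^ k j) ^ (p + 1) * ∏ j, x j) := by
  have h : ∀ j : Fin n, x j ^ ((m j : ℤ) - (p + 1) * k j - 1)
      = x j ^ m j / ((x j ^ k j) ^ (p + 1) * x j) := by
    intro j
    rw [zpow_sub₀ (hx j), zpow_sub₀ (hx j), zpow_one, zpow_natCast, div_div]
    congr 1
    have : ((p : ℤ) + 1) * k j = (((p + 1) * k j : ℕ) : ℤ) := by push_cast; ring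
    rw [this, zpow_natCast, pow_mul']
  rw [Finset.prod_congr rfl fun j _ => h j, Finset.prod_div_distrib,
    Finset.prod_mul_distrib, Finset.prod_pow]

lemma my_prod_ite {n : ℕ} (a : Fin n → ℤ) :
    (∏ j, (if a j = -1 then (2 * π * Complex.I : ℂ) else 0))
      = if (∀ j, a j = -1) then (2 * π * Complex.I : ℂ) ^ n else 0 := by
  by_cases h : ∀ j, a j = -1
  · simp [h, Finset.prod_const]
  · rw [if_neg h]
    push_neg at h
    obtain ⟨j, hj⟩ := h
    exact Finset.prod_eq_zero (Finset.mem_univ j) (if_neg hj)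

lemma my_key_sum {n : ℕ} {ρ : Fin n → ℝ} (hρ : ∀ j, 0 < ρ j) (k m : Fin n → ℕ) (w : ℂ)
    (hw : ‖w‖ < ∏ j, ρ j ^ k j) (ζ : Fin n → ℂ) (hζ : ∀ j, ‖ζ j‖ = ρ j) :
    (∏ j, ζ j ^ m j) / (((∏ j, ζ j ^ k j) - w) * ∏ j, ζ j)
      = ∑' p : ℕ, w ^ p * ∏ j, ζ j ^ ((m j : ℤ) - (p + 1) * k j - 1) := by
  have hζ0 : ∀ j, ζ j ≠ 0 := fun j => by
    intro h; have := hζ j; rw [h] at this; simp at this; exact (hρ j).ne' this.symm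
  set u : ℂ := ∏ j, ζ j ^ k j with hu
  set P : ℂ := ∏ j, ζ j with hP
  have hP0 : P ≠ 0 := Finset.prod_ne_zero_iff.2 fun j _ => hζ0 j
  have hnu : ‖u‖ = ∏ j, ρ j ^ k j := by
    rw [hu]
    rw [norm_prod]
    exact Finset.prod_congr rfl fun j _ => by rw [norm_pow, hζ j]
  have hu0 : u ≠ 0 := by
    intro h; rw [h, norm_zero] at hnu
    exact absurd hnu.symm (Finset.prod_pos (fun j _ => pow_pos (hρ j) _)).ne'
  have hr : ‖w / u‖ < 1 := by
    rw [norm_div, div_lt_one (hnu ▸ (norm_pos_iff.2 hu0))]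
    rw [hnu]; exact hw
  have huw : u - w ≠ 0 := by
    intro h
    have h2 : u = w := sub_eq_zero.1 h
    rw [h2] at hnu; rw [← hnu] at hw; exact lt_irrefl _ hw
  have hterm : ∀ p : ℕ, w ^ p * ∏ j, ζ j ^ ((m j : ℤ) - (p + 1) * k j - 1)
      = ((∏ j, ζ j ^ m j) / (u * P)) * (w / u) ^ p := by
    intro p
    rw [my_zpow_split k m p ζ hζ0, ← hu, ← hP, div_pow]
    field_simp
    ring
  rw [tsum_congr hterm, tsum_mul_left, tsum_geometric_of_norm_lt_one hr]
  have h1 : (1 : ℂ) - w / u = (u - w) / u := by field_simp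
  rw [h1, inv_div]
  field_simp

lemma my_swap {n : ℕ} {ρ : Fin n → ℝ} (hρ : ∀ j, 0 < ρ j) (k m : Fin n → ℕ) (w : ℂ)
    (hw : ‖w‖ < ∏ j, ρ j ^ k j) :
    torusIntegral (fun ζ : Fin n → ℂ => (∏ j, ζ j ^ m j) /
        (((∏ j, ζ j ^ k j) - w) * ∏ j, ζ j)) 0 ρ
      = ∑' p : ℕ, w ^ p *
          ∏ j, (if (m j : ℤ) - (p + 1) * k j - 1 = -1 then (2 * π * Complex.I : ℂ) else 0) := by
  set a : ℕ → Fin n → ℤ := fun p j => (m j : ℤ) - (p + 1) * k j - 1 with ha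
  set G : ℕ → (Fin n → ℂ) → ℂ := fun p ζ => w ^ p * ∏ j, ζ j ^ a p j with hG
  have hGint : ∀ p, TorusIntegrable (G p) 0 ρ := fun p =>
    (my_torusIntegrable_mono hρ (a p)).const_mul (w ^ p)
  have hRk : (0:ℝ) < ∏ j, ρ j ^ k j := Finset.prod_pos fun j _ => pow_pos (hρ j) _
  have hRρ : (0:ℝ) < ∏ j, ρ j := Finset.prod_pos fun j _ => hρ j
  set D : (Fin n → ℝ) → ℂ := fun θ => ∏ i, (ρ i * Complex.exp (θ i * Complex.I) * Complex.I) with hD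
  set Fp : ℕ → (Fin n → ℝ) → ℂ := fun p θ => D θ • G p (torusMap 0 ρ θ) with hFp
  have hint : ∀ p, Integrable (Fp p) (volume.restrict (Icc (0 : Fin n → ℝ) fun _ => 2 * π)) :=
    fun p => (hGint p).function_integrable
  have hnormD : ∀ θ : Fin n → ℝ, ‖D θ‖ = ∏ i, ρ i := by
    intro θ
    rw [hD, norm_prod]
    refine Finset.prod_congr rfl fun i _ => ?_
    simp [Complex.norm_exp_ofReal_mul_I, abs_of_pos (hρ i)]
  set B : ℕ → ℝ := fun p => (∏ i, ρ i) * (‖w‖ ^ p * ∏ j, ρ j ^ a p j) with hB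
  have hnorm : ∀ p (θ : Fin n → ℝ), ‖Fp p θ‖ = B p := by
    intro p θ
    rw [hFp, hB]
    simp only [smul_eq_mul, norm_mul, hnormD, hG, norm_prod, norm_pow, norm_zpow]
    congr 2
    exact Finset.prod_congr rfl fun j _ => by rw [my_norm_torusMap hρ θ j]
  have hBp : ∀ p, B p = ((∏ i, ρ i) * (∏ j, ρ j ^ m j) / ((∏ j, ρ j ^ k j) * ∏ j, ρ j)) *
      (‖w‖ / ∏ j, ρ j ^ k j) ^ p := by
    intro p
    simp only [hB, ha]
    rw [my_zpow_split k m p ρ (fun j => (hρ j).ne'), div_pow]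
    field_simp
    ring
  have hr0 : (0:ℝ) ≤ ‖w‖ / ∏ j, ρ j ^ k j := div_nonneg (norm_nonneg _) hRk.le
  have hr1 : ‖w‖ / ∏ j, ρ j ^ k j < 1 := (div_lt_one hRk).2 hw
  have hsum : Summable fun p => ∫ θ, ‖Fp p θ‖
      ∂(volume.restrict (Icc (0 : Fin n → ℝ) fun _ => 2 * π)) := by
    have : ∀ p, (∫ θ, ‖Fp p θ‖
        ∂(volume.restrict (Icc (0 : Fin n → ℝ) fun _ => 2 * π)))
        = (volume (Icc (0 : Fin n → ℝ) fun _ => 2 * π)).toReal * B p := by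
      intro p
      simp only [hnorm]
      rw [integral_const]
      simp [Measure.real]
    rw [show (fun p => ∫ θ, ‖Fp p θ‖
        ∂(volume.restrict (Icc (0 : Fin n → ℝ) fun _ => 2 * π))) = fun p =>
        (volume (Icc (0 : Fin n → ℝ) fun _ => 2 * π)).toReal * B p from funext this]
    simp only [hBp]
    exact (((summable_geometric_of_lt_one hr0 hr1).mul_left _).mul_left _)
  have hswap := MeasureTheory.integral_tsum_of_summable_integral_norm hint hsum
  have hintg : (fun θ : Fin n → ℝ => D θ • (fun ζ : Fin n → ℂ => (∏ j, ζ j ^ m j) /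
        (((∏ j, ζ j ^ k j) - w) * ∏ j, ζ j)) (torusMap 0 ρ θ)) = fun θ => ∑' p, Fp p θ := by
    funext θ
    dsimp only
    rw [my_key_sum hρ k m w hw (torusMap 0 ρ θ) (my_norm_torusMap hρ θ)]
    simp only [hFp, smul_eq_mul]
    exact (tsum_mul_left).symm
  have hval : ∀ p, (∫ θ, Fp p θ
      ∂(volume.restrict (Icc (0 : Fin n → ℝ) fun _ => 2 * π)))
      = w ^ p * ∏ j, (if a p j = -1 then (2 * π * Complex.I : ℂ) else 0) := by
    intro p
    have : (∫ θ, Fp p θ ∂(volume.restrict (Icc (0 : Fin n → ℝ) fun _ => 2 * π)))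
        = torusIntegral (G p) 0 ρ := rfl
    rw [this, hG, torusIntegral_const_mul, my_torus_mono n ρ hρ (a p)]
  rw [torusIntegral]
  rw [show (fun θ : Fin n → ℝ => (∏ i, (ρ i : ℂ) * Complex.exp (θ i * Complex.I) * Complex.I) •
      (fun ζ : Fin n → ℂ => (∏ j, ζ j ^ m j) /
        (((∏ j, ζ j ^ k j) - w) * ∏ j, ζ j)) (torusMap 0 ρ θ)) = fun θ => ∑' p, Fp p θ from hintg]
  rw [← hswap]
  exact tsum_congr hval


/-- Orthogonality relations for the Temlyakov-type kernel: for a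
multi-index `k ≠ 0` and `|z^k| < ρ^k`, the torus integral
`(z^k/(2πi)ⁿ) ∯_{|ζⱼ|=ρⱼ} ζ^m / ((ζ^k - z^k)·∏ⱼ ζⱼ) dζ` equals `z^m` when `m = l·k`
for some integer `l ≥ 1`, and `0` otherwise. -/
theorem stmt_10 (n : ℕ) (ρ : Fin n → ℝ) (hρ : ∀ j, 0 < ρ j)
    (k m : Fin n → ℕ) (hk : k ≠ 0) (z : Fin n → ℂ)
    (hz : ‖∏ j, z j ^ k j‖ < ∏ j, ρ j ^ k j) :
    ((∃ l : ℕ, 1 ≤ l ∧ m = fun j => l * k j) →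
      (∏ j, z j ^ k j) / (2 * Real.pi * Complex.I) ^ n *
        torusIntegral (fun ζ => (∏ j, ζ j ^ m j) /
          (((∏ j, ζ j ^ k j) - ∏ j, z j ^ k j) * ∏ j, ζ j)) 0 ρ
        = ∏ j, z j ^ m j) ∧
    ((¬ ∃ l : ℕ, 1 ≤ l ∧ m = fun j => l * k j) →
      (∏ j, z j ^ k j) / (2 * Real.pi * Complex.I) ^ n *
        torusIntegral (fun ζ => (∏ j, ζ j ^ m j) /
          (((∏ j, ζ j ^ k j) - ∏ j, z j ^ k j) * ∏ j, ζ j)) 0 ρ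
        = 0) := by
  obtain ⟨j0, hj0⟩ : ∃ j, k j ≠ 0 := by
    by_contra h
    push_neg at h
    exact hk (funext h)
  set w : ℂ := ∏ j, z j ^ k j with hwdef
  have hT := my_swap hρ k m w hz
  have hcond : ∀ p : ℕ,
      (∏ j, (if (m j : ℤ) - (p + 1) * k j - 1 = -1 then (2 * π * Complex.I : ℂ) else 0))
        = if (m = fun j => (p + 1) * k j) then (2 * π * Complex.I : ℂ) ^ n else 0 := by
    intro p
    rw [my_prod_ite]
    refine if_congr ?_ rfl rfl
    rw [funext_iff]
    constructor
    · intro h j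
      have h1 := h j
      have h2 : (m j : ℤ) = (((p + 1) * k j : ℕ) : ℤ) := by push_cast; linarith
      exact_mod_cast h2
    · intro h j
      have h1 : (m j : ℤ) = (((p + 1) * k j : ℕ) : ℤ) := by exact_mod_cast h j
      push_cast at h1
      linarith
  have hpi : ((2 : ℂ) * π * Complex.I) ^ n ≠ 0 := by
    apply pow_ne_zero
    simp [Real.pi_ne_zero, Complex.I_ne_zero]
  simp only [hcond] at hT
  constructor
  · rintro ⟨l, hl1, hm⟩
    have hsingle : (∑' p : ℕ, w ^ p *
        (if (m = fun j => (p + 1) * k j) then (2 * π * Complex.I : ℂ) ^ n else 0))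
        = w ^ (l - 1) * (2 * π * Complex.I : ℂ) ^ n := by
      have hl' : l - 1 + 1 = l := by omega
      rw [tsum_eq_single (l - 1)]
      · rw [if_pos (show m = fun j => (l - 1 + 1) * k j from by rw [hl']; exact hm)]
      · intro p hp
        rw [if_neg, mul_zero]
        intro hc
        have h1 : m j0 = (p + 1) * k j0 := congrFun hc j0
        have h2 : m j0 = l * k j0 := congrFun hm j0
        have : p + 1 = l := by
          have := h1 ▸ h2
          exact Nat.eq_of_mul_eq_mul_right (Nat.pos_of_ne_zero hj0) (by omega)
        omega
    rw [hT, hsingle]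
    have hww : w * w ^ (l - 1) = w ^ l := by
      rw [← pow_succ']
      congr 1
      omega
    have hzm : ∏ j, z j ^ m j = w ^ l := by
      rw [hwdef, ← Finset.prod_pow]
      refine Finset.prod_congr rfl fun j _ => ?_
      rw [hm, pow_mul']
    rw [hzm]
    calc w / (2 * ↑π * Complex.I) ^ n * (w ^ (l - 1) * (2 * ↑π * Complex.I) ^ n)
        = w * w ^ (l - 1) * ((2 * ↑π * Complex.I) ^ n / (2 * ↑π * Complex.I) ^ n) := by ring
      _ = w ^ l := by rw [div_self hpi, hww, mul_one]
  · intro h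
    have hzero : ∀ p : ℕ, w ^ p *
        (if (m = fun j => (p + 1) * k j) then (2 * π * Complex.I : ℂ) ^ n else 0) = 0 := by
      intro p
      rw [if_neg, mul_zero]
      intro hc
      exact h ⟨p + 1, Nat.le_add_left 1 p, hc⟩
    rw [hT, tsum_congr hzero, tsum_zero, mul_zero]
end

section
/- Let ρ ∈ (ℝ_{>0})ⁿ, let k ∈ ℕⁿ be a multi-index with k ≠ 0, let 0 < r < s < 1, and let f : ℂⁿ → ℂ be holomorphic on the open polydisc P(ρ). Define Q f : P(ρ) → ℂ by Q f(z) := (z^k/(2πi)ⁿ) · ∯_{|ζ_j|=s·ρ_j} f(ζ) / ((ζ^k − z^k) · ∏_{j=1}^n ζ_j) dζ. Then for every z ∈ ℂⁿ with |z_j| ≤ r·ρ_j for all j, |Q f(z)| ≤ (r^{|k|}/(s^{|k|} − r^{|k|})) · sup{|f(ζ)| : |ζ_j| = s·ρ_j for all j}. -/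
/-- Estimate for the projection integral: for `f` holomorphic on the
polydisc `P(ρ)`, a multi-index `k ≠ 0` and `0 < r < s < 1`, the function
`Q f(z) = (z^k/(2πi)ⁿ) ∯_{|ζⱼ|=s·ρⱼ} f(ζ)/((ζ^k - z^k)·∏ⱼ ζⱼ) dζ` satisfies
`|Q f(z)| ≤ (r^{|k|}/(s^{|k|} - r^{|k|})) · sup_{|ζⱼ|=s·ρⱼ} |f|` for
`|zⱼ| ≤ r·ρⱼ`. -/
theorem stmt_11 (n : ℕ) (ρ : Fin n → ℝ) (hρ : ∀ j, 0 < ρ j)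
    (k : Fin n → ℕ) (hk : k ≠ 0)
    (r s : ℝ) (hr : 0 < r) (hrs : r < s) (hs : s < 1)
    (f : (Fin n → ℂ) → ℂ)
    (hf : DifferentiableOn ℂ f {z : Fin n → ℂ | ∀ j, ‖z j‖ < ρ j})
    (z : Fin n → ℂ) (hz : ∀ j, ‖z j‖ ≤ r * ρ j) :
    ‖(∏ j, z j ^ k j) / (2 * Real.pi * Complex.I) ^ n *
        torusIntegral (fun ζ => f ζ /
          (((∏ j, ζ j ^ k j) - ∏ j, z j ^ k j) * ∏ j, ζ j)) 0 (fun j => s * ρ j)‖ ≤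
      r ^ (∑ j, k j) / (s ^ (∑ j, k j) - r ^ (∑ j, k j)) *
        ⨆ ζ ∈ {ζ : Fin n → ℂ | ∀ j, ‖ζ j‖ = s * ρ j}, ‖f ζ‖ := by
  have hs0 : (0:ℝ) < s := hr.trans hrs
  set K := ∑ j, k j with hK
  set P := ∏ j, ρ j ^ k j with hP
  set τ : Fin n → ℝ := fun j => s * ρ j with hτ
  set T : Set (Fin n → ℂ) := {ζ : Fin n → ℂ | ∀ j, ‖ζ j‖ = s * ρ j} with hT
  have hτpos : ∀ j, 0 < τ j := fun j => mul_pos hs0 (hρ j)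
  have hPpos : 0 < P := Finset.prod_pos fun j _ => pow_pos (hρ j) _
  have hKpos : 0 < K := by
    rcases Function.ne_iff.1 hk with ⟨j, hj⟩
    exact lt_of_lt_of_le (Nat.pos_of_ne_zero hj) (Finset.single_le_sum
      (f := fun j => k j) (fun i _ => Nat.zero_le _) (Finset.mem_univ j))
  have hpowlt : r ^ K < s ^ K := pow_lt_pow_left₀ hrs hr.le hKpos.ne'
  have hpowpos : 0 < s ^ K - r ^ K := sub_pos.2 hpowlt
  -- the torus is nonempty
  have hTne : T.Nonempty := by
    refine ⟨fun j => (τ j : ℂ), fun j => ?_⟩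
    simp [Complex.norm_real, abs_of_pos hs0, abs_of_pos (hρ j), hτ]
  -- the torus is compact
  have hTeq : T = Set.pi Set.univ (fun j => Metric.sphere (0:ℂ) (τ j)) := by
    ext ζ
    simp [hT, Set.mem_pi, Complex.dist_eq, hτ]
  have hTcomp : IsCompact T := by
    rw [hTeq]; exact isCompact_univ_pi fun j => isCompact_sphere _ _
  -- the torus is inside the polydisc
  have hTsub : T ⊆ {w : Fin n → ℂ | ∀ j, ‖w j‖ < ρ j} := by
    intro ζ hζ j
    rw [hζ j]
    calc s * ρ j < 1 * ρ j := by
          exact mul_lt_mul_of_pos_right hs (hρ j)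
      _ = ρ j := one_mul _
  -- boundedness and the sup
  set M : ℝ := ⨆ ζ ∈ T, ‖f ζ‖ with hM
  have hbdd : BddAbove (Set.range fun ζ : T => ‖f ζ‖) := by
    have : (Set.range fun ζ : T => ‖f ζ‖) = (fun ζ => ‖f ζ‖) '' T := by
      rw [Set.image_eq_range]
    rw [this]
    exact (hTcomp.image_of_continuousOn ((hf.continuousOn.mono hTsub).norm)).bddAbove
  haveI : Nonempty T := hTne.to_subtype
  have hsup0 : sSup (∅ : Set ℝ) ≤ ⨆ ζ : T, ‖f ζ‖ := by
    rw [Real.sSup_empty]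
    exact le_ciSup_of_le hbdd (Classical.arbitrary T) (norm_nonneg _)
  have hMeq : (⨆ ζ : T, ‖f ζ‖) = M := ciSup_subtype'' (f := fun ζ => ‖f ζ‖) hbdd hsup0
  have hfle : ∀ ζ ∈ T, ‖f ζ‖ ≤ M := by
    intro ζ hζ
    rw [← hMeq]
    exact le_ciSup hbdd ⟨ζ, hζ⟩
  have hM0 : 0 ≤ M := le_trans (norm_nonneg _) (hfle _ hTne.choose_spec)
  -- norm of z^k
  have hznorm : ‖∏ j, z j ^ k j‖ ≤ r ^ K * P := by
    rw [norm_prod]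
    calc ∏ j, ‖z j ^ k j‖ ≤ ∏ j, (r * ρ j) ^ k j := by
          refine Finset.prod_le_prod (fun j _ => norm_nonneg _) fun j _ => ?_
          rw [norm_pow]
          exact pow_le_pow_left₀ (norm_nonneg _) (hz j) _
      _ = r ^ K * P := by
          simp_rw [mul_pow, Finset.prod_mul_distrib, Finset.prod_pow_eq_pow_sum]
          rfl
  -- bound on the integrand over the torus
  have hbound : ∀ θ : Fin n → ℝ,
      ‖f (torusMap 0 τ θ) / (((∏ j, (torusMap 0 τ θ) j ^ k j) - ∏ j, z j ^ k j) *
          ∏ j, (torusMap 0 τ θ) j)‖ ≤ M / ((s ^ K - r ^ K) * P * ∏ j, τ j) := by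
    intro θ
    set ζ := torusMap 0 τ θ with hζdef
    have hζT : ζ ∈ T := by
      intro j
      simp [hζdef, torusMap, Complex.norm_exp, abs_of_pos hs0, abs_of_pos (hρ j), hτ]
    have hζnorm : ∀ j, ‖ζ j‖ = τ j := hζT
    have h1 : ‖∏ j, ζ j ^ k j‖ = s ^ K * P := by
      rw [norm_prod]
      simp_rw [norm_pow, hζnorm, hτ, mul_pow, Finset.prod_mul_distrib,
        Finset.prod_pow_eq_pow_sum]
      rfl
    have h2 : (s ^ K - r ^ K) * P ≤ ‖(∏ j, ζ j ^ k j) - ∏ j, z j ^ k j‖ := by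
      calc (s ^ K - r ^ K) * P = s ^ K * P - r ^ K * P := by ring
        _ ≤ ‖∏ j, ζ j ^ k j‖ - ‖∏ j, z j ^ k j‖ := by
            rw [h1]; linarith [hznorm]
        _ ≤ ‖(∏ j, ζ j ^ k j) - ∏ j, z j ^ k j‖ := norm_sub_norm_le _ _
    have h3 : ‖∏ j, ζ j‖ = ∏ j, τ j := by
      rw [norm_prod]; exact Finset.prod_congr rfl fun j _ => hζnorm j
    rw [norm_div, norm_mul, h3]
    refine div_le_div₀ hM0 (hfle _ hζT) ?_ ?_
    · exact mul_pos (mul_pos hpowpos hPpos) (Finset.prod_pos fun j _ => hτpos j)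
    · exact mul_le_mul_of_nonneg_right h2 (Finset.prod_nonneg fun j _ => (hτpos j).le)
  -- bound the torus integral
  have hint : ‖torusIntegral (fun ζ => f ζ /
      (((∏ j, ζ j ^ k j) - ∏ j, z j ^ k j) * ∏ j, ζ j)) 0 τ‖ ≤
      (2 * Real.pi) ^ n * (∏ j, |τ j|) * (M / ((s ^ K - r ^ K) * P * ∏ j, τ j)) :=
    norm_torusIntegral_le_of_norm_le_const hbound
  have habs : (∏ j, |τ j|) = ∏ j, τ j :=
    Finset.prod_congr rfl fun j _ => abs_of_pos (hτpos j)
  have hfactor : ‖(∏ j, z j ^ k j) / (2 * Real.pi * Complex.I) ^ n‖ ≤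
      r ^ K * P / (2 * Real.pi) ^ n := by
    rw [norm_div, norm_pow, norm_mul, Complex.norm_I, mul_one, norm_mul,
      Complex.norm_ofNat, Complex.norm_real, Real.norm_eq_abs,
      abs_of_pos Real.pi_pos]
    exact div_le_div_of_nonneg_right hznorm (by positivity)
  calc ‖(∏ j, z j ^ k j) / (2 * Real.pi * Complex.I) ^ n *
        torusIntegral (fun ζ => f ζ /
          (((∏ j, ζ j ^ k j) - ∏ j, z j ^ k j) * ∏ j, ζ j)) 0 τ‖
      = ‖(∏ j, z j ^ k j) / (2 * Real.pi * Complex.I) ^ n‖ *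
        ‖torusIntegral (fun ζ => f ζ /
          (((∏ j, ζ j ^ k j) - ∏ j, z j ^ k j) * ∏ j, ζ j)) 0 τ‖ := norm_mul _ _
    _ ≤ (r ^ K * P / (2 * Real.pi) ^ n) *
        ((2 * Real.pi) ^ n * (∏ j, |τ j|) * (M / ((s ^ K - r ^ K) * P * ∏ j, τ j))) := by
        exact mul_le_mul hfactor hint (norm_nonneg _) (by positivity)
    _ = r ^ K / (s ^ K - r ^ K) * M := by
        rw [habs]
        have hπ : (0:ℝ) < (2 * Real.pi) ^ n := by positivity
        have hprodτ : (0:ℝ) < ∏ j, τ j := Finset.prod_pos fun j _ => hτpos j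
        field_simp
end

section
/- Let G ⊆ ℂⁿ be a bounded complete n-circled domain, let k ∈ ℕⁿ be a multi-index with k ≠ 0, and let ρ ∈ (ℝ_{>0})ⁿ be such that the open polydisc P(ρ) is contained in G and |z^k| ≤ ρ^k for every z ∈ G. Let f : ℂⁿ → ℂ and c : ℕ → ℂ be such that for every z ∈ G the family (c_l · z^{l·k})_{l ≥ 1} is absolutely summable with sum f(z). Then for all 0 < r < s < 1, sup_{z ∈ r•closure(G)} |f(z)| ≤ (r^{|k|}/(s^{|k|} − r^{|k|})) · sup_{z ∈ s•closure(P(ρ))} |f(z)|. -/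
open scoped Pointwise Real

private lemma aux1 {n : ℕ} {G : Set (Fin n → ℂ)} (hne : G.Nonempty)
    (hcirc : ∀ z ∈ G, ∀ w : Fin n → ℂ, (∀ j, ‖w j‖ ≤ ‖z j‖) → w ∈ G)
    {t : ℝ} (ht : 0 < t) (ht1 : t < 1) {w : Fin n → ℂ} (hw : w ∈ closure G) :
    t • w ∈ G := by
  by_cases hw0 : w = 0
  · obtain ⟨z, hz⟩ := hne
    exact hcirc z hz _ (by simp [hw0])
  · have hJ : (Finset.univ.filter fun j => w j ≠ 0).Nonempty := by
      obtain ⟨j, hj⟩ := Function.ne_iff.mp hw0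
      exact ⟨j, by simpa using hj⟩
    set J := Finset.univ.filter fun j => w j ≠ 0 with hJdef
    set ε := J.inf' hJ (fun j => (1 - t) * ‖w j‖) with hε
    have hεpos : 0 < ε := by
      rw [hε, Finset.lt_inf'_iff]
      intro j hj
      have : w j ≠ 0 := by simpa [hJdef] using hj
      exact mul_pos (by linarith) (norm_pos_iff.mpr this)
    obtain ⟨z, hzG, hdist⟩ := Metric.mem_closure_iff.mp hw ε hεpos
    refine hcirc z hzG _ fun j => ?_
    have hj : ‖(t • w) j‖ = t * ‖w j‖ := by
      rw [Pi.smul_apply, norm_smul, Real.norm_eq_abs, abs_of_pos ht]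
    by_cases h0 : w j = 0
    · simp [hj, h0]
    · have hjJ : j ∈ J := by simp [hJdef, h0]
      have h1 : ε ≤ (1 - t) * ‖w j‖ := Finset.inf'_le _ hjJ
      have h2 : dist (w j) (z j) ≤ dist w z := dist_le_pi_dist w z j
      have h3 : ‖w j - z j‖ < (1 - t) * ‖w j‖ := by
        rw [← dist_eq_norm]; exact lt_of_le_of_lt h2 (lt_of_lt_of_le hdist h1)
      have h4 : ‖w j‖ - ‖z j‖ ≤ ‖w j - z j‖ := norm_sub_norm_le _ _
      rw [hj]; linarith

private lemma aux2 {n : ℕ} {ρ : Fin n → ℝ} (hρ : ∀ j, 0 < ρ j) {w : Fin n → ℂ}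
    (hw : ∀ j, ‖w j‖ ≤ ρ j) : w ∈ closure {z : Fin n → ℂ | ∀ j, ‖z j‖ < ρ j} := by
  have hc : Continuous (fun t : ℝ => t • w) := continuous_id.smul continuous_const
  have htend : Filter.Tendsto (fun t : ℝ => t • w) (nhdsWithin (1:ℝ) (Set.Iio 1)) (nhds w) := by
    have h := (hc.tendsto (1:ℝ)).mono_left (nhdsWithin_le_nhds (s := Set.Iio (1:ℝ)))
    simpa using h
  refine mem_closure_of_tendsto htend ?_
  filter_upwards [Ioo_mem_nhdsLT one_pos] with t ht
  intro j
  have h1 : ‖(t • w) j‖ = t * ‖w j‖ := by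
    rw [Pi.smul_apply, norm_smul, Real.norm_eq_abs, abs_of_pos ht.1]
  rw [h1]
  calc t * ‖w j‖ ≤ t * ρ j := mul_le_mul_of_nonneg_left (hw j) ht.1.le
    _ < 1 * ρ j := mul_lt_mul_of_pos_right ht.2 (hρ j)
    _ = ρ j := one_mul _

private lemma aux3 {a : ℕ → ℂ} {g : ℂ → ℂ} {s σ : ℝ} (hs : 0 < s) (hsσ : s < σ) (hσ1 : σ < 1)
    {M : ℝ} (hg : ∀ u : ℂ, ‖u‖ < 1 → HasSum (fun m => a m * u ^ m) (g u))
    (hM : ∀ u : ℂ, ‖u‖ = s → ‖g u‖ ≤ M) (m : ℕ) : ‖a m‖ * s ^ m ≤ M := by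
  have hσ0 : 0 < σ := hs.trans hsσ
  set p : FormalMultilinearSeries ℂ ℂ ℂ :=
    fun m => ContinuousMultilinearMap.mkPiRing ℂ (Fin m) (a m) with hp
  have hpnorm : ∀ m, ‖p m‖ = ‖a m‖ := fun m => ContinuousMultilinearMap.norm_mkPiRing (a m)
  have hpapply : ∀ (m : ℕ) (y : ℂ), (p m fun _ => y) = a m * y ^ m := by
    intro m y
    simp [hp, ContinuousMultilinearMap.mkPiRing_apply, Fin.prod_const, smul_eq_mul, mul_comm]
  set σ' : NNReal := ⟨σ, hσ0.le⟩ with hσ'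
  have hrad : (σ' : ENNReal) ≤ p.radius := by
    apply p.le_radius_of_summable_norm
    have h1 : HasSum (fun m => a m * (σ : ℂ) ^ m) (g σ) := hg σ (by
      simpa [Complex.norm_real, abs_of_pos hσ0] using hσ1)
    have h2 : Summable fun m => ‖a m * (σ : ℂ) ^ m‖ :=
      summable_norm_iff.mpr h1.summable
    have h3 : (fun m => ‖p m‖ * (σ' : ℝ) ^ m) = fun m => ‖a m * (σ : ℂ) ^ m‖ := by
      funext m
      rw [hpnorm, norm_mul, norm_pow, Complex.norm_real, Real.norm_eq_abs, abs_of_pos hσ0]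
      rfl
    rw [h3]; exact h2
  have hpb : HasFPowerSeriesOnBall g p 0 (σ' : ENNReal) := by
    refine ⟨hrad, by exact_mod_cast hσ0, ?_⟩
    intro y hy
    have hy1 : ‖y‖ < 1 := by
      have : ‖y‖₊ < σ' := by exact_mod_cast (by simpa using hy : ‖y‖ < (σ' : ℝ))
      have h2 : ‖y‖ < σ := this
      linarith
    simpa [hpapply, zero_add] using hg y hy1
  have hsub : Metric.closedBall (0:ℂ) s ⊆ Metric.eball (0:ℂ) (σ' : ENNReal) := by
    intro x hx
    rw [Metric.mem_closedBall, dist_zero_right] at hx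
    rw [Metric.mem_eball, edist_zero_right]
    exact_mod_cast lt_of_le_of_lt hx hsσ
  have hdiff : DifferentiableOn ℂ g (Metric.closedBall 0 s) :=
    hpb.differentiableOn.mono hsub
  set sNN : NNReal := ⟨s, hs.le⟩ with hsNN
  have hsNNc : (sNN : ℝ) = s := rfl
  have hsNNpos : 0 < sNN := NNReal.coe_pos.mp hs
  have hcb : HasFPowerSeriesOnBall g (cauchyPowerSeries g 0 (sNN : ℝ)) 0 sNN :=
    DifferentiableOn.hasFPowerSeriesOnBall hdiff hsNNpos
  have heq : p = cauchyPowerSeries g 0 s := by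
    rw [← hsNNc]
    exact hpb.hasFPowerSeriesAt.eq_formalMultilinearSeries hcb.hasFPowerSeriesAt
  have hMnn : 0 ≤ M := le_trans (norm_nonneg _) (hM (s : ℂ)
    (by rw [Complex.norm_real, Real.norm_eq_abs, abs_of_pos hs]))
  have hcont : Continuous fun θ : ℝ => ‖g (circleMap 0 s θ)‖ := by
    refine Continuous.norm ?_
    exact hdiff.continuousOn.comp_continuous (continuous_circleMap 0 s)
      (fun θ => circleMap_mem_closedBall _ hs.le θ)
  have hint : (∫ θ : ℝ in (0:ℝ)..2 * π, ‖g (circleMap 0 s θ)‖) ≤ 2 * π * M := by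
    have := intervalIntegral.integral_mono_on (μ := MeasureTheory.volume) (a := (0:ℝ))
      (b := 2 * π)
      (f := fun θ => ‖g (circleMap 0 s θ)‖) (g := fun _ => M)
      Real.two_pi_pos.le (hcont.intervalIntegrable _ _)
      (intervalIntegrable_const)
      (fun θ _ => hM _ (by rw [norm_circleMap_zero, abs_of_pos hs]))
    simpa using this
  have hkey : ‖a m‖ ≤ M * (s⁻¹) ^ m := by
    have h1 := norm_cauchyPowerSeries_le g 0 s m
    rw [← heq, hpnorm, abs_of_pos hs] at h1
    refine h1.trans ?_
    apply mul_le_mul_of_nonneg_right _ (by positivity)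
    calc (2 * π)⁻¹ * ∫ θ : ℝ in (0:ℝ)..2 * π, ‖g (circleMap 0 s θ)‖
        ≤ (2 * π)⁻¹ * (2 * π * M) := by
          apply mul_le_mul_of_nonneg_left hint (by positivity)
      _ = M := by field_simp
  calc ‖a m‖ * s ^ m ≤ M * (s⁻¹) ^ m * s ^ m :=
        mul_le_mul_of_nonneg_right hkey (by positivity)
    _ = M * (s⁻¹ * s) ^ m := by rw [mul_pow, mul_assoc]
    _ = M := by rw [inv_mul_cancel₀ hs.ne', one_pow, mul_one]

set_option maxHeartbeats 1000000 in
/-- The sup norm of a function `f ∈ H_k(G)` (i.e. with expansion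
`f(z) = Σ_{l≥1} c_l z^{l·k}` on `G`) over `r•closure(G)` is controlled by its sup
norm over `s•closure(P(ρ))`, where `P(ρ) ⊆ G` and `|z^k| ≤ ρ^k` on `G`:
`‖f‖_{r•cl G} ≤ (r^{|k|}/(s^{|k|}-r^{|k|})) ‖f‖_{s•cl P(ρ)}` for `0 < r < s < 1`. -/
theorem stmt_12 (n : ℕ) (G : Set (Fin n → ℂ))
    (hop : IsOpen G) (hconn : IsConnected G) (hbd : Bornology.IsBounded G)
    (hne : G.Nonempty)
    (hcirc : ∀ z ∈ G, ∀ w : Fin n → ℂ, (∀ j, ‖w j‖ ≤ ‖z j‖) → w ∈ G)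
    (k : Fin n → ℕ) (hk : k ≠ 0)
    (ρ : Fin n → ℝ) (hρ : ∀ j, 0 < ρ j)
    (hPG : {z : Fin n → ℂ | ∀ j, ‖z j‖ < ρ j} ⊆ G)
    (hzk : ∀ z ∈ G, ‖∏ j, z j ^ k j‖ ≤ ∏ j, ρ j ^ k j)
    (f : (Fin n → ℂ) → ℂ) (c : ℕ → ℂ)
    (hsum : ∀ z ∈ G,
      Summable (fun l : ℕ => ‖c (l + 1) * ∏ j, z j ^ ((l + 1) * k j)‖) ∧
      HasSum (fun l : ℕ => c (l + 1) * ∏ j, z j ^ ((l + 1) * k j)) (f z))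
    (r s : ℝ) (hr : 0 < r) (hrs : r < s) (hs : s < 1) :
    (⨆ z ∈ r • closure G, ‖f z‖) ≤
      r ^ (∑ j, k j) / (s ^ (∑ j, k j) - r ^ (∑ j, k j)) *
        ⨆ z ∈ s • closure {z : Fin n → ℂ | ∀ j, ‖z j‖ < ρ j}, ‖f z‖ := by
  have hs0 : 0 < s := hr.trans hrs
  set N := ∑ j, k j with hNdef
  have hN : N ≠ 0 := by
    obtain ⟨j, hj⟩ := Function.ne_iff.mp hk
    intro h
    rw [hNdef] at h
    exact (by simpa using hj : k j ≠ 0)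
      (Finset.sum_eq_zero_iff.mp h j (Finset.mem_univ j))
  set σ : ℝ := (s + 1) / 2 with hσdef
  have hsσ : s < σ := by rw [hσdef]; linarith
  have hσ1 : σ < 1 := by rw [hσdef]; linarith
  have hσ0 : 0 < σ := hs0.trans hsσ
  set P : Set (Fin n → ℂ) := {z : Fin n → ℂ | ∀ j, ‖z j‖ < ρ j} with hPdef
  set ρc : Fin n → ℂ := fun j => (ρ j : ℂ) with hρc
  have hρcn : ∀ j, ‖ρc j‖ = ρ j := fun j => by
    rw [hρc, Complex.norm_real, Real.norm_eq_abs, abs_of_pos (hρ j)]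
  -- product identity over ℂ
  have hprod : ∀ (u : ℂ) (l : ℕ),
      (∏ j, (u * ρc j) ^ ((l + 1) * k j)) =
        u ^ ((l + 1) * N) * ∏ j, ρc j ^ ((l + 1) * k j) := by
    intro u l
    rw [Finset.prod_congr rfl (fun j _ => mul_pow u (ρc j) _), Finset.prod_mul_distrib,
      Finset.prod_pow_eq_pow_sum, ← Finset.mul_sum]
  -- the one-variable coefficients
  set a : ℕ → ℂ := fun m =>
    if m = 0 then 0 else if N ∣ m then c (m / N) * ∏ j, ρc j ^ ((m / N) * k j) else 0
    with hadef
  set e : ℕ → ℕ := fun l => (l + 1) * N with hedef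
  have he : Function.Injective e := by
    intro l₁ l₂ h
    rw [hedef] at h
    have := Nat.eq_of_mul_eq_mul_right (Nat.pos_of_ne_zero hN) h
    omega
  have hae : ∀ l, a (e l) = c (l + 1) * ∏ j, ρc j ^ ((l + 1) * k j) := by
    intro l
    have h1 : e l ≠ 0 := Nat.mul_ne_zero (Nat.succ_ne_zero l) hN
    have h2 : N ∣ e l := dvd_mul_left N (l + 1)
    have h3 : e l / N = l + 1 := Nat.mul_div_cancel _ (Nat.pos_of_ne_zero hN)
    simp only [hadef]
    rw [if_neg h1, if_pos h2, h3]
  have haz : ∀ m, m ∉ Set.range e → a m = 0 := by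
    intro m hm
    by_cases h0 : m = 0
    · simp [hadef, h0]
    by_cases hdvd : N ∣ m
    · exfalso
      apply hm
      obtain ⟨q, hq⟩ := hdvd
      have hq0 : q ≠ 0 := by rintro rfl; simp at hq; exact h0 hq
      refine ⟨q - 1, ?_⟩
      have hq1 : q - 1 + 1 = q := Nat.succ_pred_eq_of_pos (Nat.pos_of_ne_zero hq0)
      rw [hedef]
      simp only []
      rw [hq1, hq, Nat.mul_comm]
    · simp [hadef, h0, hdvd]
  set g : ℂ → ℂ := fun u => f (fun j => u * ρc j) with hgdef
  have hg : ∀ u : ℂ, ‖u‖ < 1 → HasSum (fun m => a m * u ^ m) (g u) := by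
    intro u hu
    have hmem : (fun j => u * ρc j) ∈ G := by
      apply hPG
      intro j
      rw [norm_mul, hρcn j]
      exact mul_lt_of_lt_one_left (hρ j) hu
    have h := (hsum _ hmem).2
    refine (Function.Injective.hasSum_iff he ?_).mp ?_
    · intro m hm; rw [haz m hm, zero_mul]
    · have heq2 : ((fun m => a m * u ^ m) ∘ e) =
          fun l => c (l + 1) * ∏ j, (u * ρc j) ^ ((l + 1) * k j) := by
        funext l
        show a (e l) * u ^ (e l) = _
        rw [hae l, hprod u l, hedef]
        ring
      rw [heq2]
      exact h
  -- the sup over s • closure P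
  set S : Set (Fin n → ℂ) := s • closure P with hSdef
  set M : ℝ := ⨆ z ∈ S, ‖f z‖ with hMdef
  have hclP : closure P ⊆ {z : Fin n → ℂ | ∀ j, ‖z j‖ ≤ ρ j} := by
    have hcl2 : IsClosed {z : Fin n → ℂ | ∀ j, ‖z j‖ ≤ ρ j} := by
      have : {z : Fin n → ℂ | ∀ j, ‖z j‖ ≤ ρ j} = ⋂ j, {z : Fin n → ℂ | ‖z j‖ ≤ ρ j} := by
        ext z; simp
      rw [this]
      exact isClosed_iInter fun j => isClosed_le ((continuous_apply j).norm) continuous_const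
    exact closure_minimal (fun z hz j => (hz j).le) hcl2
  have hSbound : ∀ z ∈ S, ∀ j, ‖z j‖ ≤ s * ρ j := by
    rintro z ⟨w, hw, rfl⟩ j
    have h1 : ‖(s • w) j‖ = s * ‖w j‖ := by
      rw [Pi.smul_apply, norm_smul, Real.norm_eq_abs, abs_of_pos hs0]
    rw [h1]
    exact mul_le_mul_of_nonneg_left (hclP hw j) hs0.le
  have hSP : ∀ z ∈ S, z ∈ P := by
    intro z hz j
    exact lt_of_le_of_lt (hSbound z hz j)
      (by nlinarith [hρ j])
  -- boundedness of f on S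
  set D : ℕ → ℝ := fun l => ‖c (l + 1)‖ * ∏ j, (σ * ρ j) ^ ((l + 1) * k j) with hDdef
  have hptσ : (fun j => (σ : ℂ) * ρc j) ∈ G := by
    apply hPG
    intro j
    rw [norm_mul, hρcn j, Complex.norm_real, Real.norm_eq_abs, abs_of_pos hσ0]
    exact mul_lt_of_lt_one_left (hρ j) hσ1
  have hDsum : Summable D := by
    have h1 := (hsum _ hptσ).1
    have h2 : (fun l : ℕ => ‖c (l + 1) * ∏ j, ((σ : ℂ) * ρc j) ^ ((l + 1) * k j)‖) = D := by
      funext l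
      rw [hDdef, norm_mul, norm_prod]
      congr 1
      refine Finset.prod_congr rfl fun j _ => ?_
      rw [norm_pow, norm_mul, hρcn j, Complex.norm_real, Real.norm_eq_abs, abs_of_pos hσ0]
    rwa [h2] at h1
  set C : ℝ := ∑' l, D l with hCdef
  have hCnn : 0 ≤ C := tsum_nonneg fun l => by
    rw [hDdef]
    refine mul_nonneg (norm_nonneg _) (Finset.prod_nonneg fun j _ => ?_)
    exact pow_nonneg (mul_nonneg hσ0.le (hρ j).le) _
  have hfS : ∀ z ∈ S, ‖f z‖ ≤ C := by
    intro z hz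
    have hzG : z ∈ G := hPG (hSP z hz)
    have h1 := (hsum z hzG).1
    have h2 := (hsum z hzG).2
    rw [← h2.tsum_eq]
    refine le_trans (norm_tsum_le_tsum_norm h1) (Summable.tsum_le_tsum ?_ h1 hDsum)
    intro l
    rw [norm_mul, norm_prod, hDdef]
    apply mul_le_mul_of_nonneg_left _ (norm_nonneg _)
    refine Finset.prod_le_prod (fun j _ => by positivity) fun j _ => ?_
    rw [norm_pow]
    refine pow_le_pow_left₀ (norm_nonneg _) ?_ _
    refine le_trans (hSbound z hz j) ?_
    nlinarith [hρ j]
  have hbdd : BddAbove (Set.range fun z => ⨆ _ : z ∈ S, ‖f z‖) := by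
    refine ⟨C, ?_⟩
    rintro x ⟨z, rfl⟩
    exact Real.iSup_le (fun hz => hfS z hz) hCnn
  have hMle : ∀ z ∈ S, ‖f z‖ ≤ M := by
    intro z hz
    have h1 : (⨆ _ : z ∈ S, ‖f z‖) ≤ M := le_ciSup hbdd z
    rwa [ciSup_pos hz] at h1
  have h0S : (0 : Fin n → ℂ) ∈ S := by
    rw [hSdef]
    have : (0 : Fin n → ℂ) ∈ closure P := subset_closure (fun j => by
      simpa using hρ j)
    simpa using Set.smul_mem_smul_set (a := s) this
  have hM0 : 0 ≤ M := le_trans (norm_nonneg _) (hMle 0 h0S)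
  -- circle bound for g
  have hMg : ∀ u : ℂ, ‖u‖ = s → ‖g u‖ ≤ M := by
    intro u hu
    apply hMle
    rw [hSdef]
    refine ⟨fun j => (u / (s : ℂ)) * ρc j, aux2 hρ fun j => ?_, ?_⟩
    · rw [norm_mul, norm_div, hu, hρcn j, Complex.norm_real, Real.norm_eq_abs,
        abs_of_pos hs0, div_self hs0.ne', one_mul]
    · funext j
      show s • (u / (s : ℂ) * ρc j) = u * ρc j
      rw [Complex.real_smul, ← mul_assoc, mul_comm ((s : ℂ)) (u / (s : ℂ)),
        div_mul_cancel₀ u (by exact_mod_cast hs0.ne' : (s : ℂ) ≠ 0)]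
  -- coefficient estimates
  have hcoef : ∀ m, ‖a m‖ * s ^ m ≤ M := fun m => aux3 hs0 hsσ hσ1 hg hMg m
  have hB : ∀ l, (‖c (l + 1)‖ * ∏ j, ρ j ^ ((l + 1) * k j)) * s ^ ((l + 1) * N) ≤ M := by
    intro l
    have h1 := hcoef ((l + 1) * N)
    rw [show (l + 1) * N = e l from rfl, hae l, norm_mul, norm_prod] at h1
    have h2 : ∀ j, ‖ρc j ^ ((l + 1) * k j)‖ = ρ j ^ ((l + 1) * k j) := fun j => by
      rw [norm_pow, hρcn j]
    rwa [Finset.prod_congr rfl fun j _ => h2 j] at h1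
  -- geometric quantities
  set t : ℝ := (r / s) ^ N with htdef
  have ht0 : 0 ≤ t := by positivity
  have hrsN : r ^ N < s ^ N := pow_lt_pow_left₀ hrs hr.le hN
  have ht1 : t < 1 := by
    rw [htdef, div_pow, div_lt_one (pow_pos hs0 N)]
    exact hrsN
  set K : ℝ := r ^ N / (s ^ N - r ^ N) with hKdef
  have hK0 : 0 ≤ K := div_nonneg (by positivity) (by linarith)
  have hKM0 : 0 ≤ K * M := mul_nonneg hK0 hM0
  -- the main pointwise bound
  have hmain : ∀ z ∈ r • closure G, ‖f z‖ ≤ K * M := by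
    rintro z ⟨w, hw, rfl⟩
    have hzG : r • w ∈ G := aux1 hne hcirc hr (hrs.trans hs) hw
    have hwρ : ∏ j, ‖w j‖ ^ k j ≤ ∏ j, ρ j ^ k j := by
      have hcl : closure G ⊆ {z : Fin n → ℂ | ‖∏ j, z j ^ k j‖ ≤ ∏ j, ρ j ^ k j} := by
        apply closure_minimal hzk
        exact isClosed_le
          ((continuous_finset_prod _ fun j _ => (continuous_apply j).pow _).norm)
          continuous_const
      have h1 := hcl hw
      simp only [Set.mem_setOf_eq, norm_prod, norm_pow] at h1
      exact h1
    have hrwn : ∀ j, ‖(r • w) j‖ = r * ‖w j‖ := fun j => by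
      rw [Pi.smul_apply, norm_smul, Real.norm_eq_abs, abs_of_pos hr]
    -- pointwise term bound
    have hptw : ∀ l : ℕ, ‖c (l + 1) * ∏ j, ((r • w) j) ^ ((l + 1) * k j)‖ ≤ M * t * t ^ l := by
      intro l
      have hterm : ‖c (l + 1) * ∏ j, ((r • w) j) ^ ((l + 1) * k j)‖ =
          ‖c (l + 1)‖ * (r ^ ((l + 1) * N) * ∏ j, ‖w j‖ ^ ((l + 1) * k j)) := by
        rw [norm_mul, norm_prod]
        congr 1
        have h1 : ∀ j, ‖((r • w) j) ^ ((l + 1) * k j)‖ = (r * ‖w j‖) ^ ((l + 1) * k j) :=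
          fun j => by rw [norm_pow, hrwn j]
        rw [Finset.prod_congr rfl fun j _ => h1 j,
          Finset.prod_congr rfl (fun j _ => mul_pow r (‖w j‖) _), Finset.prod_mul_distrib,
          Finset.prod_pow_eq_pow_sum, ← Finset.mul_sum]
      have hwpow : ∏ j, ‖w j‖ ^ ((l + 1) * k j) ≤ ∏ j, ρ j ^ ((l + 1) * k j) := by
        have h2 : ∀ (v : Fin n → ℝ), (∏ j, v j ^ ((l + 1) * k j)) = (∏ j, v j ^ k j) ^ (l + 1) := by
          intro v
          rw [← Finset.prod_pow]
          exact Finset.prod_congr rfl fun j _ => by rw [← pow_mul, Nat.mul_comm]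
        rw [h2 (fun j => ‖w j‖), h2 ρ]
        exact pow_le_pow_left₀ (Finset.prod_nonneg fun j _ => by positivity) hwρ _
      have hfrac : r ^ ((l + 1) * N) = s ^ ((l + 1) * N) * t ^ (l + 1) := by
        rw [htdef, ← pow_mul, Nat.mul_comm N (l + 1), div_pow]
        field_simp
      calc ‖c (l + 1) * ∏ j, ((r • w) j) ^ ((l + 1) * k j)‖
          = ‖c (l + 1)‖ * (r ^ ((l + 1) * N) * ∏ j, ‖w j‖ ^ ((l + 1) * k j)) := hterm
        _ ≤ ‖c (l + 1)‖ * (r ^ ((l + 1) * N) * ∏ j, ρ j ^ ((l + 1) * k j)) := by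
            apply mul_le_mul_of_nonneg_left _ (norm_nonneg _)
            exact mul_le_mul_of_nonneg_left hwpow (by positivity)
        _ = ((‖c (l + 1)‖ * ∏ j, ρ j ^ ((l + 1) * k j)) * s ^ ((l + 1) * N)) * t ^ (l + 1) := by
            rw [hfrac]; ring
        _ ≤ M * t ^ (l + 1) := mul_le_mul_of_nonneg_right (hB l) (by positivity)
        _ = M * t * t ^ l := by rw [pow_succ']; ring
    have h1 := (hsum _ hzG).1
    have h2 := (hsum _ hzG).2
    have hgeo : Summable (fun l : ℕ => M * t * t ^ l) :=
      (summable_geometric_of_lt_one ht0 ht1).mul_left (M * t)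
    calc ‖f (r • w)‖ = ‖∑' l, c (l + 1) * ∏ j, ((r • w) j) ^ ((l + 1) * k j)‖ := by
          rw [h2.tsum_eq]
      _ ≤ ∑' l, ‖c (l + 1) * ∏ j, ((r • w) j) ^ ((l + 1) * k j)‖ := norm_tsum_le_tsum_norm h1
      _ ≤ ∑' l : ℕ, M * t * t ^ l := Summable.tsum_le_tsum hptw h1 hgeo
      _ = M * t * (1 - t)⁻¹ := by
          rw [tsum_mul_left, tsum_geometric_of_lt_one ht0 ht1]
      _ = K * M := by
          rw [htdef, hKdef, div_pow]
          have hsN : (0:ℝ) < s ^ N := pow_pos hs0 N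
          have hd : s ^ N - r ^ N ≠ 0 := by linarith
          field_simp
  refine Real.iSup_le (fun z => Real.iSup_le (fun hz => hmain z hz) hKM0) hKM0
end

section
/- Let G ⊆ ℂⁿ be a bounded complete n-circled domain, let f : ℂⁿ → ℂ, and let c : ℕⁿ → ℂ be such that for every z ∈ G the family (c_m · z^m)_{m ∈ ℕⁿ} is absolutely summable with sum f(z). Suppose that for every k ∈ M there is ρ(k) ∈ (ℝ_{>0})ⁿ such that P(ρ(k)) ⊆ G and |z^k| ≤ ρ(k)^k for every z ∈ G. For k ∈ M define P_k f : G → ℂ by P_k f(z) := Σ_{l=1}^∞ c_{l·k} · z^{l·k}. Then: (a) for every r ∈ (0,1), Σ_{k ∈ M} sup_{z ∈ r•closure(G)} |P_k f(z)| < ∞; (b) for every z ∈ G, f(z) = c_0 + Σ_{k ∈ M} P_k f(z); and (c) for every r ∈ (0,1), the net of finite partial sums S ↦ c_0 + Σ_{k ∈ S} P_k f (S ranging over finite subsets of M, directed by inclusion) converges uniformly on r•closure(G) to f. -/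
open scoped Pointwise

lemma aux_geom_pi (n : ℕ) {q : ℝ} (h0 : 0 ≤ q) (h1 : q < 1) :
    Summable (fun m : Fin n → ℕ => q ^ (∑ j, m j)) := by
  induction n with
  | zero =>
      exact summable_of_finite_support (Set.Finite.subset (Set.finite_univ) (by simp))
  | succ n ih =>
      have hg : Summable (fun l : ℕ => q ^ l) := summable_geometric_of_lt_one h0 h1
      have h : Summable (fun p : ℕ × (Fin n → ℕ) => q ^ p.1 * q ^ (∑ j, p.2 j)) := by
        apply Summable.mul_of_nonneg hg ih <;> intro x <;> positivity
      have := (Fin.consEquiv (fun _ : Fin (n+1) => ℕ)).symm.summable_iff.mpr h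
      refine this.congr (fun m => ?_)
      show q ^ (m 0) * q ^ (∑ j : Fin n, Fin.tail m j) = _
      rw [← pow_add, Fin.sum_univ_succ]
      rfl

def auxE (n : ℕ) : ({k : Fin n → ℕ // k ≠ 0 ∧ Finset.univ.gcd k = 1} × ℕ) ≃
    {m : Fin n → ℕ // m ≠ 0} where
  toFun p := ⟨fun j => (p.2 + 1) * p.1.val j, by
    obtain ⟨⟨k, hk0, hk1⟩, l⟩ := p
    simp only [ne_eq, funext_iff, not_forall] at hk0 ⊢
    obtain ⟨j, hj⟩ := hk0
    exact ⟨j, by simpa using hj⟩⟩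
  invFun m := (⟨fun j => m.val j / Finset.univ.gcd m.val, by
      have hg : Finset.univ.gcd m.val ≠ 0 := by
        simp only [ne_eq, Finset.gcd_eq_zero_iff]
        intro h
        exact m.2 (funext fun j => h j (Finset.mem_univ j))
      obtain ⟨j, hj⟩ : ∃ j, m.val j ≠ 0 := by
        by_contra h
        push_neg at h
        exact m.2 (funext h)
      constructor
      · simp only [ne_eq, funext_iff, not_forall]
        refine ⟨j, ?_⟩
        simp only [Pi.zero_apply]
        exact Nat.div_ne_zero_iff_of_dvd (Finset.gcd_dvd (Finset.mem_univ j)) |>.mpr ⟨hj, hg⟩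
      · exact Finset.gcd_div_eq_one (Finset.mem_univ j) hj⟩,
    Finset.univ.gcd m.val - 1)
  left_inv p := by
    obtain ⟨⟨k, hk0, hk1⟩, l⟩ := p
    have hgcd : (Finset.univ.gcd fun j => (l + 1) * k j) = l + 1 := by
      rw [Finset.gcd_mul_left, hk1]
      simp
    ext j
    · simp only [hgcd]
      exact Nat.mul_div_cancel_left _ (Nat.succ_pos l)
    · simp [hgcd]
  right_inv m := by
    have hg : Finset.univ.gcd m.val ≠ 0 := by
      simp only [ne_eq, Finset.gcd_eq_zero_iff]
      intro h
      exact m.2 (funext fun j => h j (Finset.mem_univ j))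
    ext j
    simp only
    rw [Nat.sub_add_cancel (Nat.one_le_iff_ne_zero.mpr hg)]
    exact Nat.mul_div_cancel' (Finset.gcd_dvd (Finset.mem_univ j))

lemma aux_scale (n : ℕ) (G : Set (Fin n → ℂ)) (hne : G.Nonempty)
    (hcirc : ∀ z ∈ G, ∀ w : Fin n → ℂ, (∀ j, ‖w j‖ ≤ ‖z j‖) → w ∈ G)
    {r : ℝ} (hr0 : 0 < r) (hr1 : r < 1) {w : Fin n → ℂ} (hw : w ∈ closure G) :
    r • w ∈ G := by
  by_cases hw0 : ∀ j, w j = 0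
  · obtain ⟨z, hz⟩ := hne
    refine hcirc z hz _ (fun j => ?_)
    rw [Pi.smul_apply, hw0 j]
    simp
  · push_neg at hw0
    set s : Finset (Fin n) := Finset.univ.filter (fun j => w j ≠ 0) with hs
    have hsne : s.Nonempty := by
      obtain ⟨j, hj⟩ := hw0
      exact ⟨j, by simp [hs, hj]⟩
    have hmin : 0 < s.inf' hsne (fun j => ‖w j‖) := by
      rw [Finset.lt_inf'_iff]
      intro j hj
      simp only [hs, Finset.mem_filter] at hj
      exact norm_pos_iff.mpr hj.2
    set ε : ℝ := (1 - r) * s.inf' hsne (fun j => ‖w j‖) with hε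
    have hε0 : 0 < ε := mul_pos (by linarith) hmin
    obtain ⟨z, hz, hdist⟩ := Metric.mem_closure_iff.mp hw ε hε0
    refine hcirc z hz _ (fun j => ?_)
    have hj : ‖w j - z j‖ < ε := by
      calc ‖w j - z j‖ ≤ dist w z := by
            rw [dist_eq_norm]
            exact norm_le_pi_norm (w - z) j
        _ < ε := hdist
    rw [Pi.smul_apply, norm_smul, Real.norm_eq_abs, abs_of_pos hr0]
    by_cases hwj : w j = 0
    · simp [hwj]
    · have hjs : j ∈ s := by simp [hs, hwj]
      have h1 : s.inf' hsne (fun j => ‖w j‖) ≤ ‖w j‖ := Finset.inf'_le _ hjs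
      have h2 : ‖w j‖ - ‖z j‖ ≤ ‖w j - z j‖ := by
        have := norm_sub_norm_le (w j) (z j)
        linarith [this]
      nlinarith [norm_nonneg (w j), norm_nonneg (z j)]

lemma aux_thick (n : ℕ) (G : Set (Fin n → ℂ)) (hop : IsOpen G)
    {a : Fin n → ℂ} (ha : a ∈ G) :
    ∃ b ∈ G, ∃ η > 0, ∀ z : Fin n → ℂ, dist z a < η → ∀ j, ‖z j‖ ≤ ‖b j‖ := by
  obtain ⟨δ, hδ0, hδ⟩ := Metric.isOpen_iff.mp hop a ha
  set u : Fin n → ℂ := fun j => if a j = 0 then 1 else a j / ‖a j‖ with hu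
  have hun : ∀ j, ‖u j‖ = 1 := by
    intro j
    by_cases h : a j = 0 <;>
      simp [hu, h, norm_div, Complex.norm_real, Real.norm_eq_abs, abs_of_pos, norm_pos_iff]
  set b : Fin n → ℂ := fun j => a j + (δ/4 : ℝ) * u j with hb
  have hδ4 : ‖((δ/4 : ℝ) : ℂ)‖ = δ/4 := by
    rw [Complex.norm_real, Real.norm_eq_abs, abs_of_pos (by linarith)]
  have hbn : ∀ j, ‖b j‖ = ‖a j‖ + δ/4 := by
    intro j
    by_cases h : a j = 0
    · simp only [hb, h, zero_add, norm_mul, hun, mul_one, hδ4, norm_zero]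
    · have heq : b j = a j * (1 + (δ/4 : ℝ) / ‖a j‖) := by
        have hn0 : (‖a j‖ : ℂ) ≠ 0 := by exact_mod_cast (norm_pos_iff.mpr h).ne'
        rw [hb, hu]
        simp only [if_neg h]
        field_simp
      have han : (0:ℝ) < ‖a j‖ := norm_pos_iff.mpr h
      rw [heq, norm_mul]
      have h2 : ‖(1 + ((δ/4 : ℝ) : ℂ) / (‖a j‖ : ℂ))‖ = 1 + (δ/4) / ‖a j‖ := by
        rw [show (1 + ((δ/4 : ℝ) : ℂ) / (‖a j‖ : ℂ)) = ((1 + (δ/4) / ‖a j‖ : ℝ) : ℂ) by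
          push_cast; ring]
        rw [Complex.norm_real, Real.norm_eq_abs, abs_of_pos (by positivity)]
      have h3 : ‖a j‖ * (δ/4/‖a j‖) = δ/4 := by
        rw [← mul_div_assoc, mul_div_cancel_left₀ _ (ne_of_gt han)]
      rw [h2, mul_add, mul_one, h3]
  have hbG : b ∈ G := by
    apply hδ
    rw [Metric.mem_ball, dist_pi_lt_iff hδ0]
    intro j
    rw [dist_eq_norm]
    have heq : b j - a j = (δ/4 : ℝ) * u j := by rw [hb]; ring
    rw [heq, norm_mul, hun, hδ4]
    linarith
  refine ⟨b, hbG, δ/8, by linarith, fun z hz j => ?_⟩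
  have h1 : ‖z j - a j‖ ≤ dist z a := by
    rw [dist_eq_norm]
    exact norm_le_pi_norm (z - a) j
  have h2 : ‖z j‖ ≤ ‖a j‖ + ‖z j - a j‖ := by
    calc ‖z j‖ = ‖a j + (z j - a j)‖ := by ring_nf
      _ ≤ _ := norm_add_le _ _
  rw [hbn j]
  linarith

/-- Decomposition of the identity: for `f` holomorphic on a bounded
complete `n`-circled domain `G` with monomial expansion `f(z) = Σ_m c_m z^m`, the
projections `P_k f(z) = Σ_{l≥1} c_{l·k} z^{l·k}` (`k` ranging over `M`, the nonzero
multi-indices with relatively prime coordinates) satisfy: (a) `Σ_{k∈M} ‖P_k f‖_{r•cl G} < ∞`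
for every `0 < r < 1`; (b) `f(z) = c_0 + Σ_{k∈M} P_k f(z)` on `G`; (c) the net of finite
partial sums converges to `f` uniformly on `r•closure(G)` for every `0 < r < 1`. -/
theorem stmt_13 (n : ℕ) (G : Set (Fin n → ℂ))
    (hop : IsOpen G) (hconn : IsConnected G) (hbd : Bornology.IsBounded G)
    (hne : G.Nonempty)
    (hcirc : ∀ z ∈ G, ∀ w : Fin n → ℂ, (∀ j, ‖w j‖ ≤ ‖z j‖) → w ∈ G)
    (f : (Fin n → ℂ) → ℂ) (c : (Fin n → ℕ) → ℂ)
    (hsum : ∀ z ∈ G,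
      Summable (fun m : Fin n → ℕ => ‖c m * ∏ j, z j ^ m j‖) ∧
      HasSum (fun m : Fin n → ℕ => c m * ∏ j, z j ^ m j) (f z))
    (hρ : ∀ k : Fin n → ℕ, k ≠ 0 → Finset.univ.gcd k = 1 →
      ∃ ρ : Fin n → ℝ, (∀ j, 0 < ρ j) ∧ {z : Fin n → ℂ | ∀ j, ‖z j‖ < ρ j} ⊆ G ∧
        ∀ z ∈ G, ‖∏ j, z j ^ k j‖ ≤ ∏ j, ρ j ^ k j)
    (P : (Fin n → ℕ) → (Fin n → ℂ) → ℂ)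
    (hP : ∀ k : Fin n → ℕ, k ≠ 0 → Finset.univ.gcd k = 1 → ∀ z ∈ G,
      Summable (fun l : ℕ => ‖c (fun j => (l + 1) * k j) * ∏ j, z j ^ ((l + 1) * k j)‖) ∧
      HasSum (fun l : ℕ => c (fun j => (l + 1) * k j) * ∏ j, z j ^ ((l + 1) * k j))
        (P k z)) :
    (∀ r ∈ Set.Ioo (0 : ℝ) 1,
      Summable (fun k : {k : Fin n → ℕ // k ≠ 0 ∧ Finset.univ.gcd k = 1} =>
        ⨆ z ∈ r • closure G, ‖P k.val z‖)) ∧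
    (∀ z ∈ G,
      HasSum (fun k : {k : Fin n → ℕ // k ≠ 0 ∧ Finset.univ.gcd k = 1} => P k.val z)
        (f z - c 0)) ∧
    (∀ r ∈ Set.Ioo (0 : ℝ) 1,
      TendstoUniformlyOn
        (fun (S : Finset {k : Fin n → ℕ // k ≠ 0 ∧ Finset.univ.gcd k = 1})
            (z : Fin n → ℂ) => c 0 + ∑ k ∈ S, P k.val z)
        f Filter.atTop (r • closure G)) := by
  classical
  have key : ∀ z ∈ G, HasSum
      (fun k : {k : Fin n → ℕ // k ≠ 0 ∧ Finset.univ.gcd k = 1} => P k.val z)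
      (f z - c 0) := by
    intro z hz
    have h1 := (hsum z hz).2
    have h2 : HasSum (fun m : {x : Fin n → ℕ // x ∉ ({0} : Finset (Fin n → ℕ))} =>
        c m.val * ∏ j, z j ^ m.val j) (f z - c 0) := by
      have h3 := (Finset.hasSum_iff_compl ({0} : Finset (Fin n → ℕ))
        (f := fun m : Fin n → ℕ => c m * ∏ j, z j ^ m j)).1 h1
      simpa using h3
    have h4 : HasSum ((fun m : {x : Fin n → ℕ // x ∉ ({0} : Finset (Fin n → ℕ))} =>
        c m.val * ∏ j, z j ^ m.val j) ∘
        ((auxE n).trans (Equiv.subtypeEquivRight (by intro m; simp)))) (f z - c 0) :=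
      (Equiv.hasSum_iff _).2 h2
    exact HasSum.prod_fiberwise h4 (fun k => (hP k.val k.2.1 k.2.2 z hz).2)
  have MAIN : ∀ r : ℝ, 0 < r → r < 1 →
      ∃ u : {k : Fin n → ℕ // k ≠ 0 ∧ Finset.univ.gcd k = 1} → ℝ,
        Summable u ∧ (∀ k, 0 ≤ u k) ∧
        ∀ k, ∀ z ∈ r • closure G, ‖P k.val z‖ ≤ u k := by
    intro r hr0 hr1
    set q := Real.sqrt r with hqdef
    have hq0 : 0 < q := Real.sqrt_pos.mpr hr0
    have hqq : q * q = r := Real.mul_self_sqrt hr0.le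
    have hq1 : q < 1 := by nlinarith [Real.sqrt_nonneg r]
    set K : Set (Fin n → ℂ) := q • closure G with hK
    have hKG : K ⊆ G := by
      rintro _ ⟨w, hw, rfl⟩
      exact aux_scale n G hne hcirc hq0 hq1 hw
    have hKcpt : IsCompact K := by
      have h2 : IsCompact (closure G) :=
        Metric.isCompact_of_isClosed_isBounded isClosed_closure hbd.closure
      rw [hK, ← Set.image_smul]
      exact h2.image (continuous_const_smul q)
    have hC : ∃ C : ℝ, 0 ≤ C ∧ ∀ ζ ∈ K, ∀ m : Fin n → ℕ, ‖c m * ∏ j, ζ j ^ m j‖ ≤ C := by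
      have h1 : ∀ a : K, ∃ b ∈ G, ∃ η > 0,
          ∀ z : Fin n → ℂ, dist z a < η → ∀ j, ‖z j‖ ≤ ‖b j‖ :=
        fun a => aux_thick n G hop (hKG a.2)
      choose b hbG η hη hdom using h1
      have hsub : K ⊆ ⋃ i : K, Metric.ball (i : Fin n → ℂ) (η i) := by
        intro x hx
        exact Set.mem_iUnion.2 ⟨⟨x, hx⟩, by simp [Metric.mem_ball, hη ⟨x, hx⟩]⟩
      obtain ⟨t, ht⟩ := hKcpt.elim_finite_subcover
        (fun i : K => Metric.ball (i : Fin n → ℂ) (η i)) (fun i => Metric.isOpen_ball) hsub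
      refine ⟨∑ i ∈ t, ∑' m : Fin n → ℕ, ‖c m * ∏ j, (b i) j ^ m j‖,
        Finset.sum_nonneg (fun i _ => tsum_nonneg (fun m => norm_nonneg _)), ?_⟩
      intro ζ hζ m
      obtain ⟨i, hit, hib⟩ : ∃ i ∈ t, ζ ∈ Metric.ball (i : Fin n → ℂ) (η i) := by
        have := ht hζ
        simpa using this
      have hdomi := hdom i ζ (by simpa [Metric.mem_ball] using hib)
      have hterm : ‖c m * ∏ j, ζ j ^ m j‖ ≤ ‖c m * ∏ j, (b i) j ^ m j‖ := by
        rw [norm_mul, norm_mul, norm_prod, norm_prod]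
        refine mul_le_mul_of_nonneg_left (Finset.prod_le_prod
          (fun j _ => norm_nonneg _) (fun j _ => ?_)) (norm_nonneg _)
        rw [norm_pow, norm_pow]
        exact pow_le_pow_left₀ (norm_nonneg _) (hdomi j) _
      calc ‖c m * ∏ j, ζ j ^ m j‖ ≤ ‖c m * ∏ j, (b i) j ^ m j‖ := hterm
        _ ≤ ∑' m : Fin n → ℕ, ‖c m * ∏ j, (b i) j ^ m j‖ :=
            Summable.le_tsum (hsum (b i) (hbG i)).1 m (fun _ _ => norm_nonneg _)
        _ ≤ _ := Finset.single_le_sum (f := fun i => ∑' m : Fin n → ℕ, ‖c m * ∏ j, (b i) j ^ m j‖)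
            (fun i _ => tsum_nonneg (fun m => norm_nonneg _)) hit
    obtain ⟨C, hC0, hCb⟩ := hC
    have hnorm : ∀ (ζ : Fin n → ℂ) (m : Fin n → ℕ),
        ‖c m * ∏ j, (q • ζ) j ^ m j‖ = q ^ (∑ j, m j) * ‖c m * ∏ j, ζ j ^ m j‖ := by
      intro ζ m
      rw [norm_mul, norm_mul, norm_prod, norm_prod]
      have : ∀ j, ‖(q • ζ) j ^ m j‖ = q ^ m j * ‖ζ j ^ m j‖ := by
        intro j
        rw [Pi.smul_apply, norm_pow, norm_pow, norm_smul, Real.norm_eq_abs,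
          abs_of_pos hq0, mul_pow]
      rw [Finset.prod_congr rfl (fun j _ => this j), Finset.prod_mul_distrib,
        Finset.prod_pow_eq_pow_sum]
      ring
    refine ⟨fun k => (C * (1 - q)⁻¹) * q ^ (∑ j, k.val j), ?_, ?_, ?_⟩
    · exact ((aux_geom_pi n hq0.le hq1).subtype _).mul_left _
    · intro k
      have : (0:ℝ) < 1 - q := by linarith
      positivity
    · rintro k _ ⟨w, hw, rfl⟩
      have hzG : r • w ∈ G := aux_scale n G hne hcirc hr0 hr1 hw
      have hζK : q • w ∈ K := ⟨w, hw, rfl⟩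
      have hzζ : r • w = q • (q • w) := by rw [smul_smul, hqq]
      set s := ∑ j, k.val j with hsdef
      have hs1 : 1 ≤ s := by
        rcases Nat.eq_zero_or_pos s with h | h
        · exfalso
          apply k.2.1
          funext j
          exact Finset.sum_eq_zero_iff.mp h j (Finset.mem_univ j)
        · exact h
      have hqs1 : q ^ s < 1 := pow_lt_one₀ hq0.le hq1 (by omega)
      have hqs0 : (0:ℝ) ≤ q ^ s := by positivity
      have hPz := hP k.val k.2.1 k.2.2 (r • w) hzG
      have hnormP : ‖P k.val (r • w)‖ ≤
          ∑' l : ℕ, ‖c (fun j => (l + 1) * k.val j) * ∏ j, (r • w) j ^ ((l + 1) * k.val j)‖ := by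
        rw [← hPz.2.tsum_eq]
        exact norm_tsum_le_tsum_norm hPz.1
      have htermb : ∀ l : ℕ,
          ‖c (fun j => (l + 1) * k.val j) * ∏ j, (r • w) j ^ ((l + 1) * k.val j)‖ ≤
          (C * q ^ s) * (q ^ s) ^ l := by
        intro l
        have h1 : ‖c (fun j => (l + 1) * k.val j) * ∏ j, (r • w) j ^ ((l + 1) * k.val j)‖ =
            q ^ (∑ j, (l + 1) * k.val j) *
            ‖c (fun j => (l + 1) * k.val j) * ∏ j, (q • w) j ^ ((l + 1) * k.val j)‖ := by
          rw [hzζ]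
          exact hnorm (q • w) (fun j => (l + 1) * k.val j)
        rw [h1]
        have h2 : (∑ j, (l + 1) * k.val j) = (l + 1) * s := by
          rw [hsdef, Finset.mul_sum]
        rw [h2, mul_comm (l+1) s, pow_mul]
        have h3 : ‖c (fun j => (l + 1) * k.val j) * ∏ j, (q • w) j ^ ((l + 1) * k.val j)‖ ≤ C :=
          hCb (q • w) hζK _
        calc (q ^ s) ^ (l + 1) * ‖c (fun j => (l + 1) * k.val j) *
              ∏ j, (q • w) j ^ ((l + 1) * k.val j)‖
            ≤ (q ^ s) ^ (l + 1) * C := by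
              exact mul_le_mul_of_nonneg_left h3 (by positivity)
          _ = (C * q ^ s) * (q ^ s) ^ l := by rw [pow_succ]; ring
      have hgsum : Summable (fun l : ℕ => (C * q ^ s) * (q ^ s) ^ l) :=
        (summable_geometric_of_lt_one hqs0 hqs1).mul_left _
      have hle2 := Summable.tsum_le_tsum htermb hPz.1 hgsum
      have heq : ∑' l : ℕ, (C * q ^ s) * (q ^ s) ^ l = (C * q ^ s) * (1 - q ^ s)⁻¹ := by
        rw [tsum_mul_left, tsum_geometric_of_lt_one hqs0 hqs1]
      have hfin : (C * q ^ s) * (1 - q ^ s)⁻¹ ≤ (C * (1 - q)⁻¹) * q ^ s := by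
        have hqsq : q ^ s ≤ q := by
          calc q ^ s ≤ q ^ 1 := pow_le_pow_of_le_one hq0.le hq1.le hs1
            _ = q := pow_one q
        have h4 : (0:ℝ) < 1 - q := by linarith
        have h5 : (1 - q ^ s)⁻¹ ≤ (1 - q)⁻¹ := by
          apply inv_anti₀ h4
          linarith
        have h6 : (0:ℝ) ≤ C * q ^ s := by positivity
        calc (C * q ^ s) * (1 - q ^ s)⁻¹ ≤ (C * q ^ s) * (1 - q)⁻¹ :=
              mul_le_mul_of_nonneg_left h5 h6
          _ = (C * (1 - q)⁻¹) * q ^ s := by ring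
      calc ‖P k.val (r • w)‖ ≤ _ := hnormP
        _ ≤ ∑' l : ℕ, (C * q ^ s) * (q ^ s) ^ l := hle2
        _ = (C * q ^ s) * (1 - q ^ s)⁻¹ := heq
        _ ≤ (C * (1 - q)⁻¹) * q ^ s := hfin
  refine ⟨?_, key, ?_⟩
  · rintro r ⟨hr0, hr1⟩
    obtain ⟨u, hu, hu0, hub⟩ := MAIN r hr0 hr1
    refine Summable.of_nonneg_of_le
      (fun k => Real.iSup_nonneg fun z => Real.iSup_nonneg fun _ => norm_nonneg _)
      (fun k => Real.iSup_le (fun z => Real.iSup_le (fun hz => hub k z hz) (hu0 k)) (hu0 k)) hu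
  · rintro r ⟨hr0, hr1⟩
    obtain ⟨u, hu, hu0, hub⟩ := MAIN r hr0 hr1
    have htu := tendstoUniformlyOn_tsum hu (fun k z hz => hub k z hz)
    refine Metric.tendstoUniformlyOn_iff.2 (fun ε hε => ?_)
    filter_upwards [Metric.tendstoUniformlyOn_iff.1 htu ε hε] with S hS z hz
    have h1 := hS z hz
    have hzG : z ∈ G := by
      obtain ⟨w, hw, rfl⟩ := hz
      exact aux_scale n G hne hcirc hr0 hr1 hw
    have h2 : f z = c 0 + ∑' k : {k : Fin n → ℕ // k ≠ 0 ∧ Finset.univ.gcd k = 1},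
        P k.val z := by
      rw [(key z hzG).tsum_eq]
      ring
    rw [h2, dist_add_left]
    exact h1
end
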